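/- arXiv:1110.6327 — 9 statements merged into one kernel-verified Lean document; each statement's English description precedes it below -/
import Mathlib

section
/- Let α > 1 be a real number, 𝒜 ⊂ ℝ a finite alphabet, J ⊂ ℝ a bounded interval with 0 ∈ J, and D : J → 𝒜 a map such that T(x) = αx − D(x) maps J into J. Assume D is non-decreasing. For x ∈ J let d(x) = (D(T^{k−1}(x)))_{k≥1} ∈ 𝒜^ℕ. Then for all x, y ∈ J: x < y if and only if d(x) ≺_lex d(y). -/
/-- Lexicographic order on infinite sequences of reals: `x ≺_lex y` iff at the first index
where they differ, the entry of `x` is smaller. -/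
def LexLt (x y : ℕ → ℝ) : Prop :=
  ∃ k, (∀ i < k, x i = y i) ∧ x k < y k

theorem stmt0 (α : ℝ) (hα : 1 < α) (A : Finset ℝ) (J : Set ℝ)
    (hJbdd : Bornology.IsBounded J) (hJconn : J.OrdConnected) (h0J : (0 : ℝ) ∈ J)
    (D : ℝ → ℝ) (hDA : ∀ x ∈ J, D x ∈ A)
    (T : ℝ → ℝ) (hT : ∀ x, T x = α * x - D x) (hTJ : ∀ x ∈ J, T x ∈ J)
    (hmono : MonotoneOn D J)
    (d : ℝ → ℕ → ℝ) (hd : ∀ x k, d x k = D (T^[k] x)) :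
    ∀ x ∈ J, ∀ y ∈ J, (x < y ↔ LexLt (d x) (d y)) := by
  -- orbits stay in J
  have orb : ∀ x ∈ J, ∀ k, T^[k] x ∈ J := by
    intro x hx k
    induction k with
    | zero => simpa using hx
    | succ n ih => rw [Function.iterate_succ_apply']; exact hTJ _ ih
  -- difference grows geometrically while digits agree
  have hdiff : ∀ x ∈ J, ∀ y ∈ J, ∀ i, (∀ j < i, d x j = d y j) →
      T^[i] y - T^[i] x = α ^ i * (y - x) := by
    intro x hx y hy i
    induction i with
    | zero => intro _; simp
    | succ n ih =>
      intro h
      have hn := ih (fun j hj => h j (Nat.lt_succ_of_lt hj))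
      have hD : D (T^[n] x) = D (T^[n] y) := by
        have := h n (Nat.lt_succ_self n)
        rwa [hd, hd] at this
      rw [Function.iterate_succ_apply', Function.iterate_succ_apply', hT, hT, hD]
      have : α * (T^[n] y) - α * (T^[n] x) = α * (α ^ n * (y - x)) := by
        rw [← mul_sub, hn]
      rw [pow_succ]
      ring_nf
      ring_nf at this
      linarith
  -- forward direction
  have fwd : ∀ x ∈ J, ∀ y ∈ J, x < y → LexLt (d x) (d y) := by
    intro x hx y hy hxy
    -- digits cannot all agree
    have hne : ∃ k, d x k ≠ d y k := by
      by_contra h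
      push_neg at h
      obtain ⟨C, hC⟩ := hJbdd.subset_closedBall 0
      have key : ∀ k : ℕ, α ^ k * (y - x) ≤ 2 * C := by
        intro k
        have h1 := hC (orb x hx k)
        have h2 := hC (orb y hy k)
        simp [Metric.mem_closedBall, Real.dist_eq, abs_le] at h1 h2
        have := hdiff x hx y hy k (fun j _ => h j)
        linarith [this, h1.1, h1.2, h2.1, h2.2]
      obtain ⟨n, hn⟩ := pow_unbounded_of_one_lt ((2 * C) / (y - x)) hα
      have hpos : 0 < y - x := by linarith
      have : 2 * C < α ^ n * (y - x) := by
        rw [div_lt_iff₀ hpos] at hn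
        linarith
      linarith [key n]
    classical
    let k := Nat.find hne
    have hk : d x k ≠ d y k := Nat.find_spec hne
    have hlt : ∀ i < k, d x i = d y i := fun i hi => by
      have := Nat.find_min hne hi
      simpa using this
    refine ⟨k, hlt, ?_⟩
    have horder : T^[k] x < T^[k] y := by
      have := hdiff x hx y hy k hlt
      have hpos : 0 < α ^ k * (y - x) := by
        apply mul_pos (pow_pos (by linarith) k); linarith
      linarith
    have hle : D (T^[k] x) ≤ D (T^[k] y) :=
      hmono (orb x hx k) (orb y hy k) horder.le
    rw [hd, hd]
    rw [hd, hd] at hk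
    exact lt_of_le_of_ne hle hk
  intro x hx y hy
  constructor
  · exact fwd x hx y hy
  · intro ⟨k, h1, h2⟩
    rcases lt_trichotomy x y with h | h | h
    · exact h
    · subst h; exact absurd h2 (lt_irrefl _)
    · obtain ⟨k', h1', h2'⟩ := fwd y hy x hx h
      rcases lt_trichotomy k k' with hk | hk | hk
      · exact absurd (h1' k hk) (ne_of_gt h2)
      · subst hk; linarith
      · exact absurd (h1 k' hk) (ne_of_gt h2')
end

section
/- Let β > 1 with β ∉ ℕ and 𝒜 = {0,1,…,⌊β⌋}. Then J_{−β,𝒜} = [l, r], where l = −β⌊β⌋/(β²−1) and r = ⌊β⌋/(β²−1); that is, a real number x has a (−β)-representation over 𝒜 if and only if −β⌊β⌋/(β²−1) ≤ x ≤ ⌊β⌋/(β²−1). -/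
open Finset Filter

noncomputable def nbDig (β y r : ℝ) : ℤ := max 0 ⌈-β * y - r⌉

noncomputable def nbSeq (β x r : ℝ) : ℕ → ℝ
  | 0 => x
  | n + 1 => -β * nbSeq β x r n - (nbDig β (nbSeq β x r n) r : ℝ)

lemma nb_aux (β y r : ℝ) (hβ : 1 < β) (hr : r * (β ^ 2 - 1) = (⌊β⌋ : ℝ))
    (h1 : -β * r ≤ y) (h2 : y ≤ r) :
    0 ≤ nbDig β y r ∧ nbDig β y r ≤ ⌊β⌋ ∧
      -β * r ≤ -β * y - (nbDig β y r : ℝ) ∧ -β * y - (nbDig β y r : ℝ) ≤ r := by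
  have hβ0 : (0:ℝ) < β := by linarith
  have hD : (0:ℝ) < β ^ 2 - 1 := by nlinarith
  have hM1 : (1:ℝ) ≤ (⌊β⌋ : ℝ) := by
    exact_mod_cast Int.le_floor.mpr (by exact_mod_cast hβ.le)
  have hβM : β < (⌊β⌋ : ℝ) + 1 := Int.lt_floor_add_one β
  have hr0 : 0 ≤ r := by nlinarith
  have hLM : -β * y - r ≤ (⌊β⌋ : ℝ) := by nlinarith
  have hU0 : 0 ≤ -β * y + β * r := by nlinarith
  have hU1 : (-β * y - r) + 1 ≤ -β * y + β * r := by nlinarith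
  refine ⟨le_max_left _ _, max_le (by exact_mod_cast (by linarith : (0:ℝ) ≤ (⌊β⌋:ℝ)))
    (Int.ceil_le.mpr hLM), ?_, ?_⟩
  · have hc : ((max 0 ⌈-β * y - r⌉ : ℤ) : ℝ) ≤ -β * y + β * r := by
      push_cast
      exact max_le hU0 (le_trans (Int.ceil_lt_add_one _).le hU1)
    unfold nbDig
    linarith
  · have hc : (-β * y - r) ≤ ((max 0 ⌈-β * y - r⌉ : ℤ) : ℝ) := by
      refine le_trans (Int.le_ceil _) ?_
      exact_mod_cast le_max_right (0:ℤ) ⌈-β * y - r⌉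
    unfold nbDig
    linarith

theorem stmt3 (β : ℝ) (hβ : 1 < β) (hni : ∀ n : ℕ, β ≠ n) (x : ℝ) :
    (∃ s : ℕ → ℝ, (∀ i, ∃ a : ℤ, 0 ≤ a ∧ a ≤ ⌊β⌋ ∧ s i = (a : ℝ)) ∧
        x = ∑' i : ℕ, s i / (-β) ^ (i + 1)) ↔
      (-β * (⌊β⌋ : ℝ) / (β ^ 2 - 1) ≤ x ∧ x ≤ (⌊β⌋ : ℝ) / (β ^ 2 - 1)) := by
  have hβ0 : (0:ℝ) < β := by linarith
  have hβ0' : β ≠ 0 := ne_of_gt hβ0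
  have hD : (0:ℝ) < β ^ 2 - 1 := by nlinarith
  have hM1 : (1:ℝ) ≤ (⌊β⌋ : ℝ) := by
    exact_mod_cast Int.le_floor.mpr (by exact_mod_cast hβ.le)
  set M : ℝ := (⌊β⌋ : ℝ) with hM
  have hb1 : ‖(-β⁻¹ : ℝ)‖ < 1 := by
    rw [norm_neg, Real.norm_eq_abs, abs_of_pos (by positivity)]
    exact inv_lt_one_of_one_lt₀ hβ
  have hb2 : ‖(β⁻¹ : ℝ)‖ < 1 := by
    rw [Real.norm_eq_abs, abs_of_pos (by positivity)]
    exact inv_lt_one_of_one_lt₀ hβ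
  have hsa : Summable (fun i : ℕ => (-β⁻¹ : ℝ) ^ (i + 1)) := by
    simpa [pow_succ] using (summable_geometric_of_norm_lt_one hb1).mul_right (-β⁻¹)
  have hsb : Summable (fun i : ℕ => (β⁻¹ : ℝ) ^ (i + 1)) := by
    simpa [pow_succ] using (summable_geometric_of_norm_lt_one hb2).mul_right β⁻¹
  have hA : ∑' i : ℕ, (-β⁻¹ : ℝ) ^ (i + 1) = -(β + 1)⁻¹ := by
    have : (fun i : ℕ => (-β⁻¹ : ℝ) ^ (i + 1)) = fun i => (-β⁻¹ : ℝ) ^ i * (-β⁻¹) :=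
      funext fun i => pow_succ _ _
    rw [this, tsum_mul_right, tsum_geometric_of_norm_lt_one hb1]
    have h1 : (β:ℝ) + 1 ≠ 0 := by positivity
    field_simp
    linear_combination (-1 : ℝ) * (inv_mul_cancel₀ (by positivity : (1:ℝ) + β ≠ 0))
  have hB : ∑' i : ℕ, (β⁻¹ : ℝ) ^ (i + 1) = (β - 1)⁻¹ := by
    have : (fun i : ℕ => (β⁻¹ : ℝ) ^ (i + 1)) = fun i => (β⁻¹ : ℝ) ^ i * β⁻¹ :=
      funext fun i => pow_succ _ _
    rw [this, tsum_mul_right, tsum_geometric_of_norm_lt_one hb2]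
    have h1 : (β:ℝ) - 1 ≠ 0 := by linarith
    field_simp
  constructor
  · rintro ⟨s, hs, rfl⟩
    have hsb' : ∀ i, 0 ≤ s i ∧ s i ≤ M := by
      intro i
      obtain ⟨a, ha0, ham, hsa⟩ := hs i
      constructor
      · rw [hsa]; exact_mod_cast ha0
      · rw [hsa, hM]; exact_mod_cast ham
    have hteq : ∀ i : ℕ, s i / (-β) ^ (i + 1) = s i * (-β⁻¹ : ℝ) ^ (i + 1) := by
      intro i
      rw [div_eq_mul_inv, ← inv_pow, inv_neg]
    -- summability of t
    have hst : Summable (fun i : ℕ => s i / (-β) ^ (i + 1)) := by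
      refine Summable.of_norm_bounded (hsb.mul_left M) ?_
      intro i
      rw [hteq i, norm_mul, norm_pow, norm_neg, Real.norm_eq_abs, Real.norm_eq_abs,
        abs_of_pos (by positivity : (0:ℝ) < β⁻¹), abs_of_nonneg (hsb' i).1]
      exact mul_le_mul_of_nonneg_right (hsb' i).2 (by positivity)
    have hsu : Summable (fun i : ℕ => M / 2 * ((-β⁻¹ : ℝ) ^ (i + 1) + (β⁻¹ : ℝ) ^ (i + 1))) :=
      (hsa.add hsb).mul_left _
    have hsv : Summable (fun i : ℕ => M / 2 * ((-β⁻¹ : ℝ) ^ (i + 1) - (β⁻¹ : ℝ) ^ (i + 1))) :=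
      (hsa.sub hsb).mul_left _
    have hub : ∀ i : ℕ, s i / (-β) ^ (i + 1) ≤ M / 2 * ((-β⁻¹ : ℝ) ^ (i + 1) + (β⁻¹ : ℝ) ^ (i + 1)) := by
      intro i
      rw [hteq i]
      have hp : (0:ℝ) ≤ (β⁻¹ : ℝ) ^ (i + 1) := by positivity
      rcases Nat.even_or_odd (i + 1) with he | ho
      · rw [he.neg_pow]
        nlinarith [(hsb' i).1, (hsb' i).2]
      · rw [ho.neg_pow]
        nlinarith [(hsb' i).1, (hsb' i).2]
    have hlb : ∀ i : ℕ, M / 2 * ((-β⁻¹ : ℝ) ^ (i + 1) - (β⁻¹ : ℝ) ^ (i + 1)) ≤ s i / (-β) ^ (i + 1) := by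
      intro i
      rw [hteq i]
      have hp : (0:ℝ) ≤ (β⁻¹ : ℝ) ^ (i + 1) := by positivity
      rcases Nat.even_or_odd (i + 1) with he | ho
      · rw [he.neg_pow]
        nlinarith [(hsb' i).1, (hsb' i).2]
      · rw [ho.neg_pow]
        nlinarith [(hsb' i).1, (hsb' i).2]
    have htu : ∑' i : ℕ, M / 2 * ((-β⁻¹ : ℝ) ^ (i + 1) + (β⁻¹ : ℝ) ^ (i + 1)) = M / (β ^ 2 - 1) := by
      rw [tsum_mul_left, Summable.tsum_add hsa hsb, hA, hB]
      have h1 : (β:ℝ) + 1 ≠ 0 := by positivity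
      have h2 : (β:ℝ) - 1 ≠ 0 := by linarith
      have h3 : (β:ℝ) ^ 2 - 1 ≠ 0 := ne_of_gt hD
      field_simp
      ring
    have htv : ∑' i : ℕ, M / 2 * ((-β⁻¹ : ℝ) ^ (i + 1) - (β⁻¹ : ℝ) ^ (i + 1)) = -β * M / (β ^ 2 - 1) := by
      rw [tsum_mul_left, Summable.tsum_sub hsa hsb, hA, hB]
      have h1 : (β:ℝ) + 1 ≠ 0 := by positivity
      have h2 : (β:ℝ) - 1 ≠ 0 := by linarith
      have h3 : (β:ℝ) ^ 2 - 1 ≠ 0 := ne_of_gt hD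
      field_simp
      ring
    constructor
    · rw [← htv]; exact Summable.tsum_le_tsum hlb hsv hst
    · rw [← htu]; exact Summable.tsum_le_tsum hub hst hsu
  · rintro ⟨h1, h2⟩
    set r : ℝ := M / (β ^ 2 - 1) with hrdef
    have hr : r * (β ^ 2 - 1) = M := div_mul_cancel₀ _ (ne_of_gt hD)
    have h1' : -β * r ≤ x := by
      have : -β * M / (β ^ 2 - 1) = -β * r := by rw [hrdef]; ring
      linarith [this ▸ h1]
    set X : ℕ → ℝ := nbSeq β x r with hX
    have hinv : ∀ n, -β * r ≤ X n ∧ X n ≤ r := by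
      intro n
      induction n with
      | zero => exact ⟨h1', h2⟩
      | succ n ih =>
        have := nb_aux β (X n) r hβ hr ih.1 ih.2
        exact ⟨this.2.2.1, this.2.2.2⟩
    set s : ℕ → ℝ := fun n => (nbDig β (X n) r : ℝ) with hs
    have hdig : ∀ n, 0 ≤ nbDig β (X n) r ∧ nbDig β (X n) r ≤ ⌊β⌋ := fun n =>
      ⟨(nb_aux β (X n) r hβ hr (hinv n).1 (hinv n).2).1,
       (nb_aux β (X n) r hβ hr (hinv n).1 (hinv n).2).2.1⟩
    refine ⟨s, fun i => ⟨nbDig β (X i) r, (hdig i).1, (hdig i).2, rfl⟩, ?_⟩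
    have hsb' : ∀ i, 0 ≤ s i ∧ s i ≤ M := by
      intro i
      constructor
      · show (0:ℝ) ≤ ((nbDig β (X i) r : ℤ) : ℝ)
        exact_mod_cast (hdig i).1
      · show ((nbDig β (X i) r : ℤ) : ℝ) ≤ M
        rw [hM]; exact_mod_cast (hdig i).2
    -- summability
    have hst : Summable (fun i : ℕ => s i / (-β) ^ (i + 1)) := by
      refine Summable.of_norm_bounded (hsb.mul_left M) ?_
      intro i
      rw [div_eq_mul_inv, ← inv_pow, inv_neg, norm_mul, norm_pow, norm_neg,
        Real.norm_eq_abs, Real.norm_eq_abs,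
        abs_of_pos (by positivity : (0:ℝ) < β⁻¹), abs_of_nonneg (hsb' i).1]
      exact mul_le_mul_of_nonneg_right (hsb' i).2 (by positivity)
    -- partial sum identity
    have hpar : ∀ n, x = (∑ i ∈ Finset.range n, s i / (-β) ^ (i + 1)) + X n / (-β) ^ n := by
      intro n
      induction n with
      | zero => simp [hX, nbSeq]
      | succ n ih =>
        have hXs : X (n + 1) = -β * X n - s n := rfl
        have hpow : ((-β) : ℝ) ^ (n + 1) ≠ 0 := pow_ne_zero _ (by simpa using hβ0')
        have hpow' : ((-β) : ℝ) ^ n ≠ 0 := pow_ne_zero _ (by simpa using hβ0')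
        have key : X (n + 1) / (-β) ^ (n + 1) = X n / (-β) ^ n - s n / (-β) ^ (n + 1) := by
          rw [hXs]
          field_simp
          ring
        rw [Finset.sum_range_succ, key]
        linarith [ih]
    -- limit
    have hC : ∀ n, |X n| ≤ max (β * r) r := by
      intro n
      rw [abs_le]
      constructor
      · have := (hinv n).1
        have h' : β * r ≤ max (β * r) r := le_max_left _ _
        linarith
      · exact le_trans (hinv n).2 (le_max_right _ _)
    have hlim0 : Tendsto (fun n => X n / (-β) ^ n) atTop (nhds 0) := by
      apply squeeze_zero_norm (a := fun n => max (β * r) r * (β⁻¹ : ℝ) ^ n)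
      · intro n
        rw [Real.norm_eq_abs, abs_div, abs_pow, abs_neg, abs_of_pos hβ0]
        rw [div_eq_mul_inv, ← inv_pow]
        exact mul_le_mul_of_nonneg_right (hC n) (by positivity)
      · have := (tendsto_pow_atTop_nhds_zero_of_lt_one (by positivity : (0:ℝ) ≤ β⁻¹)
          (inv_lt_one_of_one_lt₀ hβ)).const_mul (max (β * r) r)
        simpa using this
    have hlim : Tendsto (fun n => ∑ i ∈ Finset.range n, s i / (-β) ^ (i + 1)) atTop (nhds x) := by
      have h := tendsto_const_nhds.sub hlim0 (f := fun _ : ℕ => x)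
      rw [sub_zero] at h
      refine h.congr fun n => ?_
      have := hpar n
      linarith
    exact tendsto_nhds_unique hlim hst.hasSum.tendsto_sum_nat
end

section
/- Let β > 1 with β ∉ ℕ and let x ∈ I. Define ε₀ = x and, for all i ≥ 0, z_{2i+1} = D_v(ε_{2i}), ε_{2i+1} = T_v(ε_{2i}), z_{2i+2} = D_m(ε_{2i+1}), ε_{2i+2} = T_m(ε_{2i+1}). Then z₁z₂z₃… is a (−β)-representation of x over 𝒜 and it is the maximal element of R_{−β,𝒜}(x) with respect to the alternate order, i.e., the greedy (−β)-representation of x. -/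
/-- Alternate order on infinite sequences of reals. -/
def AltLt (x y : ℕ → ℝ) : Prop :=
  ∃ k, (∀ i < k, x i = y i) ∧ (-1 : ℝ) ^ (k + 1) * x k < (-1 : ℝ) ^ (k + 1) * y k

theorem stmt5 (β : ℝ) (hβ : 1 < β) (hni : ∀ n : ℕ, β ≠ n)
    (l r : ℝ) (hl : l = -β * (⌊β⌋ : ℝ) / (β ^ 2 - 1)) (hr : r = (⌊β⌋ : ℝ) / (β ^ 2 - 1))
    (Ia : ℤ → Set ℝ)
    (hIa : ∀ a : ℤ, Ia a = Set.Icc (l + ((⌊β⌋ : ℝ) - a) / β) (r - a / β))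
    (Dm Dv : ℝ → ℝ)
    (hDmTop : ∀ x ∈ Ia ⌊β⌋, Dm x = (⌊β⌋ : ℝ))
    (hDm : ∀ a : ℤ, 0 ≤ a → a < ⌊β⌋ → ∀ x ∈ Ia a \ Ia (a + 1), Dm x = (a : ℝ))
    (hDv0 : ∀ x ∈ Ia 0, Dv x = 0)
    (hDv : ∀ a : ℤ, 1 ≤ a → a ≤ ⌊β⌋ → ∀ x ∈ Ia a \ Ia (a - 1), Dv x = (a : ℝ))
    (Tm Tv : ℝ → ℝ)
    (hTm : ∀ x, Tm x = -β * x - Dm x) (hTv : ∀ x, Tv x = -β * x - Dv x)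
    (x : ℝ) (hx : x ∈ Set.Icc l r)
    (z ε : ℕ → ℝ) (hε0 : ε 0 = x)
    (hrec : ∀ i : ℕ,
      z (2 * i) = Dv (ε (2 * i)) ∧ ε (2 * i + 1) = Tv (ε (2 * i)) ∧
        z (2 * i + 1) = Dm (ε (2 * i + 1)) ∧ ε (2 * i + 2) = Tm (ε (2 * i + 1))) :
    ((∀ i, ∃ a : ℤ, 0 ≤ a ∧ a ≤ ⌊β⌋ ∧ z i = (a : ℝ)) ∧
        x = ∑' i : ℕ, z i / (-β) ^ (i + 1)) ∧
      ∀ w : ℕ → ℝ,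
        ((∀ i, ∃ a : ℤ, 0 ≤ a ∧ a ≤ ⌊β⌋ ∧ w i = (a : ℝ)) ∧
            x = ∑' i : ℕ, w i / (-β) ^ (i + 1)) →
          w = z ∨ AltLt w z := by
  classical
  have hβ0 : (0:ℝ) < β := lt_trans one_pos hβ
  have hβne : β ≠ 0 := ne_of_gt hβ0
  have hnβne : (-β) ≠ 0 := by simpa using hβne
  have hb1 : (1:ℤ) ≤ ⌊β⌋ := by
    have := Int.le_floor.mpr (show ((1:ℤ):ℝ) ≤ β by exact_mod_cast hβ.le)
    simpa using this
  have hB1 : (1:ℝ) ≤ ((⌊β⌋:ℤ):ℝ) := by exact_mod_cast hb1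
  have hBβ : ((⌊β⌋:ℤ):ℝ) < β := by
    rcases lt_or_eq_of_le (Int.floor_le β) with h | h
    · exact h
    · exfalso
      apply hni ⌊β⌋.toNat
      have h0 : (0:ℤ) ≤ ⌊β⌋ := by omega
      rw [← Int.toNat_of_nonneg h0] at h
      exact_mod_cast h.symm
  have hβB : β < ((⌊β⌋:ℤ):ℝ) + 1 := Int.lt_floor_add_one β
  have hs : (0:ℝ) < β^2 - 1 := by nlinarith
  have hrr : (β^2 - 1) * r = ((⌊β⌋:ℤ):ℝ) := by rw [hr]; field_simp
  have hlr : l = -β * r := by rw [hl, hr]; field_simp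
  have hkey : -β*l - ((⌊β⌋:ℤ):ℝ) = r := by linear_combination hrr - β * hlr
  have hr1 : 1 ≤ r * (β + 1) := by nlinarith [hrr, hβB, hβ, hs]
  have hrl : (r - l)*β = ((⌊β⌋:ℤ):ℝ) + r*(β+1) := by rw [hlr]; linear_combination hrr
  -- normalized membership
  have hmem : ∀ (a:ℤ) (y:ℝ), y ∈ Ia a ↔
      (((⌊β⌋:ℤ):ℝ) - a ≤ (y - l) * β ∧ (a:ℝ) ≤ (r - y) * β) := by
    intro a y
    rw [hIa, Set.mem_Icc]
    constructor
    · rintro ⟨h1, h2⟩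
      have e1 := (div_le_iff₀ hβ0).mp (by linarith : (((⌊β⌋:ℤ):ℝ) - a)/β ≤ y - l)
      have e2 := (div_le_iff₀ hβ0).mp (by linarith : ((a:ℤ):ℝ)/β ≤ r - y)
      exact ⟨by linarith, by linarith⟩
    · rintro ⟨h1, h2⟩
      have e1 := (div_le_iff₀ hβ0).mpr h1
      have e2 := (div_le_iff₀ hβ0).mpr h2
      exact ⟨by linarith, by linarith⟩
  -- Dv specification
  have hDvSpec : ∀ y ∈ Set.Icc l r, ∃ a : ℤ, 0 ≤ a ∧ a ≤ ⌊β⌋ ∧ Dv y = (a:ℝ) ∧ y ∈ Ia a ∧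
      (∀ c : ℤ, 0 ≤ c → y ∈ Ia c → a ≤ c) := by
    rintro y ⟨hyl, hyr⟩
    set t : ℝ := (y - l) * β with ht
    have ht0 : 0 ≤ t := mul_nonneg (by linarith) hβ0.le
    set m : ℤ := min ⌊β⌋ ⌊t⌋ with hm
    have hm0 : 0 ≤ m := le_min (by omega) (Int.floor_nonneg.mpr ht0)
    have hmB : m ≤ ⌊β⌋ := min_le_left _ _
    have hmt : ((m:ℤ):ℝ) ≤ t := le_trans (by exact_mod_cast min_le_right ⌊β⌋ ⌊t⌋) (Int.floor_le t)
    have hmema : y ∈ Ia (⌊β⌋ - m) := by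
      rw [hmem]
      constructor
      · push_cast
        linarith
      · by_cases hc : m = ⌊β⌋
        · rw [hc]
          push_cast
          simp only [sub_self]
          nlinarith
        · have hmt2 : m = ⌊t⌋ := by
            rcases min_cases ⌊β⌋ ⌊t⌋ with ⟨h1, h2⟩ | ⟨h1, h2⟩ <;> omega
          have hlt : t < (m:ℝ) + 1 := by rw [hmt2]; exact_mod_cast Int.lt_floor_add_one t
          have hry : (r - y)*β = (r - l)*β - t := by rw [ht]; ring
          push_cast
          rw [hry, hrl]
          linarith
    refine ⟨⌊β⌋ - m, by omega, by omega, ?_, hmema, ?_⟩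
    · by_cases hc : m = ⌊β⌋
      · have h0 : y ∈ Ia 0 := by
          have : (⌊β⌋ - m : ℤ) = 0 := by omega
          rwa [this] at hmema
        rw [hDv0 y h0]
        rw [show (⌊β⌋ - m : ℤ) = 0 by omega]
        simp
      · have hmt2 : m = ⌊t⌋ := by
          rcases min_cases ⌊β⌋ ⌊t⌋ with ⟨h1, h2⟩ | ⟨h1, h2⟩ <;> omega
        have hlt : t < (m:ℝ) + 1 := by rw [hmt2]; exact_mod_cast Int.lt_floor_add_one t
        have hnot : y ∉ Ia (⌊β⌋ - m - 1) := by
          rw [hmem]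
          rintro ⟨h1, -⟩
          push_cast at h1
          linarith
        exact hDv (⌊β⌋ - m) (by omega) (by omega) y ⟨hmema, hnot⟩
    · intro c hc0 hyc
      rw [hmem] at hyc
      have h1 : ((⌊β⌋ - c : ℤ):ℝ) ≤ t := by push_cast; linarith [hyc.1]
      have h2 : ⌊β⌋ - c ≤ ⌊t⌋ := Int.le_floor.mpr h1
      omega
  -- Dm specification
  have hDmSpec : ∀ y ∈ Set.Icc l r, ∃ a : ℤ, 0 ≤ a ∧ a ≤ ⌊β⌋ ∧ Dm y = (a:ℝ) ∧ y ∈ Ia a ∧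
      (∀ c : ℤ, c ≤ ⌊β⌋ → y ∈ Ia c → c ≤ a) := by
    rintro y ⟨hyl, hyr⟩
    set s : ℝ := (r - y) * β with hsdef
    have hs0 : 0 ≤ s := mul_nonneg (by linarith) hβ0.le
    set a : ℤ := min ⌊β⌋ ⌊s⌋ with ha
    have ha0 : 0 ≤ a := le_min (by omega) (Int.floor_nonneg.mpr hs0)
    have haB : a ≤ ⌊β⌋ := min_le_left _ _
    have has : ((a:ℤ):ℝ) ≤ s := le_trans (by exact_mod_cast min_le_right ⌊β⌋ ⌊s⌋) (Int.floor_le s)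
    have hmema : y ∈ Ia a := by
      rw [hmem]
      refine ⟨?_, has⟩
      by_cases hc : a = ⌊β⌋
      · rw [hc]; simp only [sub_self]; linarith [mul_nonneg (show (0:ℝ) ≤ y - l by linarith) hβ0.le]
      · have hat : a = ⌊s⌋ := by
          rcases min_cases ⌊β⌋ ⌊s⌋ with ⟨h1, h2⟩ | ⟨h1, h2⟩ <;> omega
        have hlt : s < (a:ℝ) + 1 := by rw [hat]; exact_mod_cast Int.lt_floor_add_one s
        have hy : (y - l)*β = (r - l)*β - s := by rw [hsdef]; ring
        have hcB : (a:ℝ) + 1 ≤ ((⌊β⌋:ℤ):ℝ) := by exact_mod_cast (by omega : a + 1 ≤ ⌊β⌋)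
        rw [hy, hrl]
        linarith
    refine ⟨a, ha0, haB, ?_, hmema, ?_⟩
    · by_cases hc : a = ⌊β⌋
      · rw [hc] at hmema ⊢
        exact hDmTop y hmema
      · have hat : a = ⌊s⌋ := by
          rcases min_cases ⌊β⌋ ⌊s⌋ with ⟨h1, h2⟩ | ⟨h1, h2⟩ <;> omega
        have hlt : s < (a:ℝ) + 1 := by rw [hat]; exact_mod_cast Int.lt_floor_add_one s
        have hnot : y ∉ Ia (a + 1) := by
          rw [hmem]
          rintro ⟨-, h2⟩
          push_cast at h2
          linarith
        exact hDm a ha0 (by omega) y ⟨hmema, hnot⟩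
    · intro c hcB hyc
      rw [hmem] at hyc
      have h1 : ((c:ℤ):ℝ) ≤ s := hyc.2
      have h2 : c ≤ ⌊s⌋ := Int.le_floor.mpr h1
      omega
  -- T step keeps us in the interval
  have hTstep : ∀ (a:ℤ) (y:ℝ), y ∈ Ia a → (-β*y - (a:ℝ)) ∈ Set.Icc l r := by
    intro a y hy
    rw [hmem] at hy
    obtain ⟨h1, h2⟩ := hy
    constructor
    · nlinarith [hlr]
    · nlinarith [hkey]
  -- step lemma
  have step : ∀ n, ε n ∈ Set.Icc l r →
      ∃ a : ℤ, 0 ≤ a ∧ a ≤ ⌊β⌋ ∧ z n = (a:ℝ) ∧ ε n ∈ Ia a ∧ ε (n+1) = -β * ε n - (a:ℝ) ∧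
        (Even n → ∀ c : ℤ, 0 ≤ c → ε n ∈ Ia c → a ≤ c) ∧
        (¬ Even n → ∀ c : ℤ, c ≤ ⌊β⌋ → ε n ∈ Ia c → c ≤ a) := by
    intro n hn
    rcases Nat.even_or_odd n with ⟨i, hi⟩ | ⟨i, hi⟩
    · have hn2 : n = 2*i := by omega
      subst hn2
      obtain ⟨a, ha0, haB, haDv, hamem, hamin⟩ := hDvSpec _ hn
      refine ⟨a, ha0, haB, by rw [(hrec i).1, haDv], hamem, ?_, fun _ => hamin, ?_⟩
      · rw [(hrec i).2.1, hTv, haDv]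
      · intro h; exact absurd ⟨i, by omega⟩ h
    · have hn2 : n = 2*i + 1 := by omega
      subst hn2
      obtain ⟨a, ha0, haB, haDm, hamem, hamax⟩ := hDmSpec _ hn
      refine ⟨a, ha0, haB, by rw [(hrec i).2.2.1, haDm], hamem, ?_, ?_, fun _ => hamax⟩
      · rw [show 2*i+1+1 = 2*i+2 from rfl, (hrec i).2.2.2, hTm, haDm]
      · intro h; exact absurd h (by rw [Nat.even_iff]; omega)
  -- invariant
  have hI : ∀ n, ε n ∈ Set.Icc l r := by
    intro n
    induction n with
    | zero => rw [hε0]; exact hx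
    | succ n ih =>
      obtain ⟨a, -, -, -, hamem, heq, -, -⟩ := step n ih
      rw [heq]
      exact hTstep a _ hamem
  have main : ∀ n, ∃ a : ℤ, 0 ≤ a ∧ a ≤ ⌊β⌋ ∧ z n = (a:ℝ) ∧ ε n ∈ Ia a ∧
      ε (n+1) = -β * ε n - (a:ℝ) ∧
      (Even n → ∀ c : ℤ, 0 ≤ c → ε n ∈ Ia c → a ≤ c) ∧
      (¬ Even n → ∀ c : ℤ, c ≤ ⌊β⌋ → ε n ∈ Ia c → c ≤ a) := fun n => step n (hI n)
  have hdig : ∀ i, ∃ a : ℤ, 0 ≤ a ∧ a ≤ ⌊β⌋ ∧ z i = (a:ℝ) := by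
    intro i
    obtain ⟨a, h1, h2, h3, -⟩ := main i
    exact ⟨a, h1, h2, h3⟩
  have hrecur : ∀ n, ε (n+1) = -β * ε n - z n := by
    intro n
    obtain ⟨a, -, -, hz, -, heq, -⟩ := main n
    rw [heq, hz]
  -- summability helper
  have hsum_aux : ∀ (u : ℕ → ℝ), (∀ i, |u i| ≤ ((⌊β⌋:ℤ):ℝ)) →
      Summable (fun i => u i / (-β)^(i+1)) := by
    intro u hu
    have hgeo : Summable (fun i : ℕ => (1/β)^i) :=
      summable_geometric_of_lt_one (by positivity) (by rw [div_lt_one hβ0]; linarith)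
    apply Summable.of_norm_bounded (g := fun i => ((⌊β⌋:ℤ):ℝ) * (1/β)^(i+1))
    · exact (hgeo.mul_left (((⌊β⌋:ℤ):ℝ) * (1/β))).congr
        (fun i => by rw [pow_succ']; ring)
    · intro i
      have hb : ‖(-β)^(i+1)‖ = β^(i+1) := by
        rw [norm_pow, norm_neg, Real.norm_of_nonneg hβ0.le]
      rw [norm_div, hb, one_div, inv_pow, mul_comm, ← div_eq_inv_mul]
      rw [Real.norm_eq_abs]
      gcongr
      exact hu i
  have hzbound : ∀ i, |z i| ≤ ((⌊β⌋:ℤ):ℝ) := by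
    intro i
    obtain ⟨a, h1, h2, h3⟩ := hdig i
    rw [h3, abs_le]
    constructor
    · have h0 : (0:ℝ) ≤ (a:ℝ) := by exact_mod_cast h1
      linarith
    · exact_mod_cast h2
  have hzsum : Summable (fun i => z i / (-β)^(i+1)) := hsum_aux z hzbound
  -- partial sums
  have hPS : ∀ n, ∑ i ∈ Finset.range n, z i / (-β)^(i+1) = x - ε n / (-β)^n := by
    intro n
    induction n with
    | zero => simp [hε0]
    | succ n ih =>
      rw [Finset.sum_range_succ, ih, hrecur n]
      have h1 : (-β)^(n+1) ≠ 0 := pow_ne_zero _ hnβne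
      have h2 : (-β)^n ≠ 0 := pow_ne_zero _ hnβne
      field_simp
      ring
  -- tendsto
  have htend : Filter.Tendsto (fun n => ε n / (-β)^n) Filter.atTop (nhds 0) := by
    have hgt : Filter.Tendsto (fun n : ℕ => (|l| + |r|) * (1/β)^n) Filter.atTop (nhds 0) := by
      have := tendsto_pow_atTop_nhds_zero_of_lt_one (by positivity : (0:ℝ) ≤ 1/β)
        (by rw [div_lt_one hβ0]; linarith)
      simpa using this.const_mul (|l| + |r|)
    apply squeeze_zero_norm _ hgt
    intro n
    have hb : ‖(-β)^n‖ = β^n := by rw [norm_pow, norm_neg, Real.norm_of_nonneg hβ0.le]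
    have hεb : |ε n| ≤ |l| + |r| := by
      rw [abs_le]
      constructor
      · linarith [neg_abs_le l, abs_nonneg r, (hI n).1]
      · linarith [le_abs_self r, abs_nonneg l, (hI n).2]
    rw [norm_div, hb, Real.norm_eq_abs, one_div, inv_pow, mul_comm, ← div_eq_inv_mul]
    gcongr
  have hxsum : x = ∑' i : ℕ, z i / (-β) ^ (i + 1) := by
    have h1 : Filter.Tendsto (fun n => ∑ i ∈ Finset.range n, z i / (-β)^(i+1))
        Filter.atTop (nhds x) := by
      have he : (fun n => ∑ i ∈ Finset.range n, z i / (-β)^(i+1))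
          = fun n => x - ε n / (-β)^n := funext hPS
      rw [he]
      simpa using tendsto_const_nhds.sub htend
    exact tendsto_nhds_unique h1 hzsum.hasSum.tendsto_sum_nat
  refine ⟨⟨hdig, hxsum⟩, ?_⟩
  -- maximality
  rintro w ⟨hwdig, hwsum⟩
  by_cases hwz : w = z
  · exact Or.inl hwz
  right
  have hwb : ∀ i, 0 ≤ w i ∧ w i ≤ ((⌊β⌋:ℤ):ℝ) := by
    intro i
    obtain ⟨a, h1, h2, h3⟩ := hwdig i
    rw [h3]
    constructor
    · exact_mod_cast h1
    · exact_mod_cast h2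
  have hwabs : ∀ i, |w i| ≤ ((⌊β⌋:ℤ):ℝ) := fun i => by
    rw [abs_le]; exact ⟨by linarith [(hwb i).1, hB1], (hwb i).2⟩
  have hwS : ∀ n, Summable (fun i => w (n+i) / (-β)^(i+1)) :=
    fun n => hsum_aux _ (fun i => hwabs (n+i))
  set t : ℕ → ℝ := fun n => ∑' i, w (n+i) / (-β)^(i+1) with htdef
  have htapp : ∀ n, t n = ∑' i, w (n+i) / (-β)^(i+1) := fun _ => rfl
  clear_value t
  have ht0 : t 0 = x := by
    rw [htapp 0]
    simp only [zero_add]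
    exact hwsum.symm
  -- geometric sums
  have hq0 : (0:ℝ) ≤ (β^2)⁻¹ := by positivity
  have hq1 : (β^2)⁻¹ < 1 := by
    rw [inv_lt_one_iff₀]
    right; nlinarith
  have hgq : Summable (fun k : ℕ => ((β^2)⁻¹)^k) := summable_geometric_of_lt_one hq0 hq1
  have hgqs : ∑' k : ℕ, ((β^2)⁻¹)^k = (1 - (β^2)⁻¹)⁻¹ := tsum_geometric_of_lt_one hq0 hq1
  have hpow2 : ∀ k : ℕ, β^(2*k+2) = (β^2)^k * β^2 := by
    intro k
    rw [← pow_mul, ← pow_add]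
  have hpow1 : ∀ k : ℕ, β^(2*k+1) = (β^2)^k * β := by
    intro k
    rw [← pow_mul, ← pow_succ]
  have hterm2 : ∀ k : ℕ, ((⌊β⌋:ℤ):ℝ)/β^(2*k+2)
      = (((⌊β⌋:ℤ):ℝ)/β^2) * ((β^2)⁻¹)^k := by
    intro k
    rw [hpow2, inv_pow]
    ring
  have hterm1 : ∀ k : ℕ, ((⌊β⌋:ℤ):ℝ)/β^(2*k+1)
      = (((⌊β⌋:ℤ):ℝ)/β) * ((β^2)⁻¹)^k := by
    intro k
    rw [hpow1, inv_pow]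
    ring
  have hS2 : Summable (fun k : ℕ => ((⌊β⌋:ℤ):ℝ)/β^(2*k+2)) :=
    (hgq.mul_left (((⌊β⌋:ℤ):ℝ)/β^2)).congr (fun k => (hterm2 k).symm)
  have hS1 : Summable (fun k : ℕ => ((⌊β⌋:ℤ):ℝ)/β^(2*k+1)) :=
    (hgq.mul_left (((⌊β⌋:ℤ):ℝ)/β)).congr (fun k => (hterm1 k).symm)
  have h2nz : (β^2 - 1) ≠ 0 := ne_of_gt hs
  have hinveq : (1 - (β^2)⁻¹) = (β^2 - 1)/β^2 := by field_simp
  have hT2 : ∑' k : ℕ, ((⌊β⌋:ℤ):ℝ)/β^(2*k+2) = r := by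
    rw [tsum_congr hterm2, tsum_mul_left, hgqs, hinveq, inv_div, hr]
    field_simp
  have hT1 : ∑' k : ℕ, ((⌊β⌋:ℤ):ℝ)/β^(2*k+1) = -l := by
    rw [tsum_congr hterm1, tsum_mul_left, hgqs, hinveq, inv_div, hlr, hr]
    field_simp
  -- tail bounds
  have htmem : ∀ n, t n ∈ Set.Icc l r := by
    intro n
    have hf := hwS n
    have hfe : Summable (fun k => w (n+2*k) / (-β)^(2*k+1)) := by
      have hinj : Function.Injective (fun k : ℕ => 2*k) := by intro a b h; dsimp at h; omega
      exact hf.comp_injective hinj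
    have hfo : Summable (fun k => w (n+(2*k+1)) / (-β)^(2*k+1+1)) := by
      have hinj : Function.Injective (fun k : ℕ => 2*k+1) := by intro a b h; dsimp at h; omega
      exact hf.comp_injective hinj
    have hsplit : ∑' k, w (n+2*k) / (-β)^(2*k+1) + ∑' k, w (n+(2*k+1)) / (-β)^(2*k+1+1) = t n := by
      rw [htapp n]
      exact tsum_even_add_odd (f := fun i => w (n+i) / (-β)^(i+1)) hfe hfo
    have hnegpow_odd : ∀ k : ℕ, (-β)^(2*k+1) = -(β^(2*k+1)) := by
      intro k
      exact Odd.neg_pow ⟨k, by ring⟩ β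
    have hnegpow_even : ∀ k : ℕ, (-β)^(2*k+2) = β^(2*k+2) := by
      intro k
      exact Even.neg_pow ⟨k+1, by ring⟩ β
    constructor
    · -- lower bound
      have he : ∑' k, (-(((⌊β⌋:ℤ):ℝ)/β^(2*k+1))) ≤ ∑' k, w (n+2*k) / (-β)^(2*k+1) := by
        apply Summable.tsum_le_tsum _ (hS1.neg) hfe
        intro k
        rw [hnegpow_odd k, div_neg, neg_le_neg_iff]
        gcongr
        exact (hwb (n+2*k)).2
      have ho : (0:ℝ) ≤ ∑' k, w (n+(2*k+1)) / (-β)^(2*k+1+1) := by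
        apply tsum_nonneg
        intro k
        rw [hnegpow_even k]
        exact div_nonneg (hwb _).1 (by positivity)
      have hel : ∑' k, (-(((⌊β⌋:ℤ):ℝ)/β^(2*k+1))) = l := by
        rw [tsum_neg, hT1]; ring
      calc l = ∑' k, (-(((⌊β⌋:ℤ):ℝ)/β^(2*k+1))) + 0 := by rw [hel, add_zero]
        _ ≤ ∑' k, w (n+2*k) / (-β)^(2*k+1) + ∑' k, w (n+(2*k+1)) / (-β)^(2*k+1+1) :=
            add_le_add he ho
        _ = t n := hsplit
    · -- upper bound
      have he : ∑' k, w (n+2*k) / (-β)^(2*k+1) ≤ (0:ℝ) := by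
        apply tsum_nonpos
        intro k
        rw [hnegpow_odd k, div_neg]
        simp only [neg_nonpos]
        exact div_nonneg (hwb _).1 (by positivity)
      have ho : ∑' k, w (n+(2*k+1)) / (-β)^(2*k+1+1) ≤ ∑' k, ((⌊β⌋:ℤ):ℝ)/β^(2*k+2) := by
        apply Summable.tsum_le_tsum _ hfo hS2
        intro k
        rw [hnegpow_even k]
        gcongr
        exact (hwb _).2
      calc t n = ∑' k, w (n+2*k) / (-β)^(2*k+1) + ∑' k, w (n+(2*k+1)) / (-β)^(2*k+1+1) :=
            hsplit.symm
        _ ≤ 0 + ∑' k, ((⌊β⌋:ℤ):ℝ)/β^(2*k+2) := add_le_add he ho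
        _ = r := by rw [zero_add, hT2]
  -- tail recurrence
  have htrec : ∀ n, t (n+1) = -β * t n - w n := by
    intro n
    have h0 := Summable.tsum_eq_zero_add (hwS n)
    have hshift : ∑' i, w (n+(i+1)) / (-β)^(i+1+1) = (-β)⁻¹ * t (n+1) := by
      rw [htapp (n+1), ← tsum_mul_left]
      apply tsum_congr
      intro i
      rw [show n + (i+1) = n+1+i from by omega, pow_succ]
      ring
    have ht' : t n = w (n+0) / (-β)^(0+1) + (-β)⁻¹ * t (n+1) := by
      rw [htapp n, h0, hshift]
    rw [show n + 0 = n from rfl, pow_one] at ht'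
    have hmul : (-β) * t n = w n + t (n+1) := by
      rw [ht', mul_add, mul_comm (-β) (w n / (-β)), div_mul_cancel₀ _ hnβne,
        ← mul_assoc, mul_inv_cancel₀ hnβne, one_mul]
    linarith [hmul]
  -- t n lands in Ia (digit)
  have htIa : ∀ n (c : ℤ), w n = (c:ℝ) → t n ∈ Ia c := by
    intro n c hc
    have h1 := (htmem (n+1)).1
    have h2 := (htmem (n+1)).2
    rw [htrec n, hc] at h1 h2
    rw [hmem]
    constructor
    · linarith only [h2, hkey]
    · linarith only [h1, hlr]
  -- coincidence of tails
  have hteq : ∀ n, (∀ i, i < n → w i = z i) → t n = ε n := by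
    intro n
    induction n with
    | zero => intro _; rw [ht0, hε0]
    | succ n ih =>
      intro h
      rw [htrec n, hrecur n, ih (fun i hi => h i (by omega)), h n (by omega)]
  -- first difference
  have hk : ∃ k, w k ≠ z k := by
    by_contra hcon
    push_neg at hcon
    exact hwz (funext hcon)
  set k := Nat.find hk with hkdef
  have hkspec : w k ≠ z k := Nat.find_spec hk
  have hklt : ∀ i, i < k → w i = z i := by
    intro i hi
    have := Nat.find_min hk hi
    simpa using this
  have hte : t k = ε k := hteq k hklt
  obtain ⟨c, hc0, hcB, hwc⟩ := hwdig k
  have hcmem : ε k ∈ Ia c := by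
    rw [← hte]
    exact htIa k c hwc
  obtain ⟨a, ha0, haB, hza, hamem, -, hmin, hmax⟩ := main k
  have hane : a ≠ c := by
    intro h
    apply hkspec
    rw [hwc, hza, h]
  refine ⟨k, hklt, ?_⟩
  rcases Nat.even_or_odd k with hev | hodd
  · have hac : a < c := lt_of_le_of_ne (hmin hev c hc0 hcmem) hane
    have : (-1:ℝ)^(k+1) = -1 := Odd.neg_one_pow (by simpa using hev.add_one)
    rw [this, neg_one_mul, neg_one_mul, neg_lt_neg_iff, hwc, hza]
    exact_mod_cast hac
  · have hca : c < a := lt_of_le_of_ne (hmax (by simpa [Nat.even_iff, Nat.odd_iff] using hodd) c hcB hcmem) (fun h => hane h.symm)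
    have : (-1:ℝ)^(k+1) = 1 := Even.neg_one_pow (by simpa using hodd.add_one)
    rw [this, one_mul, one_mul, hwc, hza]
    exact_mod_cast hca
end

section
/- Let β > 1 with β ∉ ℕ and let x ∈ I. Define η₀ = x and, for all i ≥ 0, y_{2i+1} = D_m(η_{2i}), η_{2i+1} = T_m(η_{2i}), y_{2i+2} = D_v(η_{2i+1}), η_{2i+2} = T_v(η_{2i+1}). Then y₁y₂y₃… is a (−β)-representation of x over 𝒜 and it is the minimal element of R_{−β,𝒜}(x) with respect to the alternate order, i.e., the lazy (−β)-representation of x. -/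
lemma auxSummable {β : ℝ} (hβ : 1 < β) (F : ℝ) (c : ℕ → ℝ)
    (hc : ∀ i, 0 ≤ c i ∧ c i ≤ F) :
    Summable (fun i : ℕ => c i / (-β) ^ (i + 1)) := by
  have hβ0 : (0:ℝ) < β := by linarith
  apply Summable.of_abs
  apply Summable.of_nonneg_of_le (g := fun i : ℕ => |c i / (-β) ^ (i+1)|)
      (fun i => abs_nonneg _) (f := fun i : ℕ => (F / β) * (1/β) ^ i)
  · intro i
    have hpow : (0:ℝ) < β ^ (i+1) := by positivity
    have habs : |(-β) ^ (i+1)| = β ^ (i+1) := by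
      rw [abs_pow, abs_neg, abs_of_pos hβ0]
    rw [abs_div, habs, abs_of_nonneg (hc i).1]
    have h1 : (F / β) * (1/β) ^ i = F / β ^ (i+1) := by
      rw [div_pow, one_pow, mul_one_div, div_div, pow_succ']
    rw [h1]
    exact (div_le_div_iff_of_pos_right hpow).mpr (hc i).2
  · exact (summable_geometric_of_lt_one (by positivity)
      (by rw [div_lt_one hβ0]; linarith)).mul_left _

lemma auxTail {β F l r : ℝ} (hβ : 1 < β) (hF : 0 ≤ F)
    (hl : l = -β * F / (β ^ 2 - 1)) (hr : r = F / (β ^ 2 - 1))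
    (c : ℕ → ℝ) (hc : ∀ i, 0 ≤ c i ∧ c i ≤ F) :
    l ≤ ∑' i : ℕ, c i / (-β) ^ (i + 1) ∧ (∑' i : ℕ, c i / (-β) ^ (i + 1)) ≤ r := by
  have hβ0 : (0:ℝ) < β := by linarith
  have hb2 : (0:ℝ) < β ^ 2 - 1 := by nlinarith
  have hq0 : (0:ℝ) ≤ 1 / β ^ 2 := by positivity
  have hq1 : 1 / β ^ 2 < 1 := by rw [div_lt_one (by positivity)]; nlinarith
  have geo : Summable (fun k : ℕ => (1/β^2) ^ k) := summable_geometric_of_lt_one hq0 hq1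
  have geoSum : ∑' k : ℕ, (1/β^2) ^ k = β^2 / (β^2 - 1) := by
    rw [tsum_geometric_of_lt_one hq0 hq1]
    rw [show (1 - 1/β^2) = (β^2-1)/β^2 by field_simp, inv_div]
  set f : ℕ → ℝ := fun i => c i / (-β) ^ (i+1) with hf
  have hsum : Summable f := auxSummable hβ F c hc
  have Seven : Summable (fun k : ℕ => f (2 * k)) :=
    hsum.comp_injective (fun a b h => by omega)
  have Sodd : Summable (fun k : ℕ => f (2 * k + 1)) :=
    hsum.comp_injective (fun a b h => by omega)
  have fe : ∀ k : ℕ, f (2 * k) = -(c (2*k) / β * (1/β^2) ^ k) := by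
    intro k
    have h1 : (-β) ^ (2*k+1) = (β^2) ^ k * (-β) := by
      rw [pow_succ, pow_mul, neg_sq]
    have h2 : ((β:ℝ)^2) ^ k ≠ 0 := by positivity
    show c (2*k) / (-β) ^ (2*k+1) = _
    rw [h1, div_pow, one_pow]
    rw [mul_one_div, div_div, ← div_neg]
    congr 1
    ring
  have fo : ∀ k : ℕ, f (2 * k + 1) = c (2*k+1) / β^2 * (1/β^2) ^ k := by
    intro k
    have h1 : (-β) ^ (2*k+1+1) = (β^2) ^ (k+1) := by
      rw [show 2*k+1+1 = 2*(k+1) by ring, pow_mul, neg_sq]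
    show c (2*k+1) / (-β) ^ (2*k+1+1) = _
    rw [h1, div_pow, one_pow, mul_one_div, div_div, pow_succ]
    ring_nf
  have lowE : ∀ k : ℕ, -(F/β) * (1/β^2) ^ k ≤ f (2 * k) := by
    intro k
    rw [fe k]
    have hq : (0:ℝ) ≤ (1/β^2) ^ k := by positivity
    have h3 := mul_le_mul_of_nonneg_right ((div_le_div_iff_of_pos_right hβ0).mpr (hc (2*k)).2) hq
    linarith
  have upE : ∀ k : ℕ, f (2 * k) ≤ 0 := by
    intro k
    rw [fe k]
    have hq : (0:ℝ) ≤ (1/β^2) ^ k := by positivity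
    have := mul_nonneg (div_nonneg (hc (2*k)).1 hβ0.le) hq
    linarith
  have lowO : ∀ k : ℕ, 0 ≤ f (2 * k + 1) := by
    intro k
    rw [fo k]
    have hq : (0:ℝ) ≤ (1/β^2) ^ k := by positivity
    exact mul_nonneg (div_nonneg (hc (2*k+1)).1 (by positivity)) hq
  have upO : ∀ k : ℕ, f (2 * k + 1) ≤ (F/β^2) * (1/β^2) ^ k := by
    intro k
    rw [fo k]
    have hq : (0:ℝ) ≤ (1/β^2) ^ k := by positivity
    exact mul_le_mul_of_nonneg_right
      ((div_le_div_iff_of_pos_right (by positivity)).mpr (hc (2*k+1)).2) hq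
  have sumLowE : ∑' k : ℕ, (-(F/β) * (1/β^2) ^ k) = l := by
    rw [tsum_mul_left, geoSum, hl]
    field_simp
  have sumUpO : ∑' k : ℕ, ((F/β^2) * (1/β^2) ^ k) = r := by
    rw [tsum_mul_left, geoSum, hr]
    field_simp
  have hEl : l ≤ ∑' k : ℕ, f (2 * k) := by
    rw [← sumLowE]
    exact Summable.tsum_le_tsum lowE (geo.mul_left _) Seven
  have hEu : ∑' k : ℕ, f (2 * k) ≤ 0 := tsum_nonpos upE
  have hOl : (0:ℝ) ≤ ∑' k : ℕ, f (2 * k + 1) := tsum_nonneg lowO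
  have hOu : ∑' k : ℕ, f (2 * k + 1) ≤ r := by
    rw [← sumUpO]
    exact Summable.tsum_le_tsum upO Sodd (geo.mul_left _)
  have total : ∑' k : ℕ, f (2*k) + ∑' k : ℕ, f (2*k+1) = ∑' k : ℕ, f k :=
    tsum_even_add_odd Seven Sodd
  constructor <;> · simp only [hf] at total ⊢; linarith

set_option maxHeartbeats 1000000 in
theorem stmt6 (β : ℝ) (hβ : 1 < β) (hni : ∀ n : ℕ, β ≠ n)
    (l r : ℝ) (hl : l = -β * (⌊β⌋ : ℝ) / (β ^ 2 - 1)) (hr : r = (⌊β⌋ : ℝ) / (β ^ 2 - 1))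
    (Ia : ℤ → Set ℝ)
    (hIa : ∀ a : ℤ, Ia a = Set.Icc (l + ((⌊β⌋ : ℝ) - a) / β) (r - a / β))
    (Dm Dv : ℝ → ℝ)
    (hDmTop : ∀ x ∈ Ia ⌊β⌋, Dm x = (⌊β⌋ : ℝ))
    (hDm : ∀ a : ℤ, 0 ≤ a → a < ⌊β⌋ → ∀ x ∈ Ia a \ Ia (a + 1), Dm x = (a : ℝ))
    (hDv0 : ∀ x ∈ Ia 0, Dv x = 0)
    (hDv : ∀ a : ℤ, 1 ≤ a → a ≤ ⌊β⌋ → ∀ x ∈ Ia a \ Ia (a - 1), Dv x = (a : ℝ))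
    (Tm Tv : ℝ → ℝ)
    (hTm : ∀ x, Tm x = -β * x - Dm x) (hTv : ∀ x, Tv x = -β * x - Dv x)
    (x : ℝ) (hx : x ∈ Set.Icc l r)
    (y η : ℕ → ℝ) (hη0 : η 0 = x)
    (hrec : ∀ i : ℕ,
      y (2 * i) = Dm (η (2 * i)) ∧ η (2 * i + 1) = Tm (η (2 * i)) ∧
        y (2 * i + 1) = Dv (η (2 * i + 1)) ∧ η (2 * i + 2) = Tv (η (2 * i + 1))) :
    ((∀ i, ∃ a : ℤ, 0 ≤ a ∧ a ≤ ⌊β⌋ ∧ y i = (a : ℝ)) ∧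
        x = ∑' i : ℕ, y i / (-β) ^ (i + 1)) ∧
      ∀ w : ℕ → ℝ,
        ((∀ i, ∃ a : ℤ, 0 ≤ a ∧ a ≤ ⌊β⌋ ∧ w i = (a : ℝ)) ∧
            x = ∑' i : ℕ, w i / (-β) ^ (i + 1)) →
          w = y ∨ AltLt y w := by
  have hβ0 : (0:ℝ) < β := by linarith
  have hβne : β ≠ 0 := hβ0.ne'
  have hb2 : (0:ℝ) < β ^ 2 - 1 := by nlinarith
  have hfl1 : (1:ℤ) ≤ ⌊β⌋ := by
    rw [Int.le_floor]; exact_mod_cast hβ.le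
  have hF1 : (1:ℝ) ≤ (⌊β⌋ : ℝ) := by exact_mod_cast hfl1
  have hF0 : (0:ℝ) ≤ (⌊β⌋ : ℝ) := by linarith
  have hcast : ((⌊β⌋.toNat : ℕ) : ℝ) = (⌊β⌋ : ℝ) := by
    norm_cast
    omega
  have hne' : β ≠ (⌊β⌋ : ℝ) := fun h => hni ⌊β⌋.toNat (by rw [hcast]; exact h)
  have hFβ : (⌊β⌋ : ℝ) < β := lt_of_le_of_ne (Int.floor_le β) (fun h => hne' h.symm)
  have hβF1 : β < (⌊β⌋ : ℝ) + 1 := Int.lt_floor_add_one β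
  -- characterization of Ia via multiplied-out inequalities
  have charIa : ∀ (a : ℤ) (z : ℝ),
      z ∈ Ia a ↔ ((⌊β⌋ : ℝ) - a ≤ β * (z - l) ∧ (a : ℝ) ≤ β * (r - z)) := by
    intro a z
    rw [hIa, Set.mem_Icc]
    constructor
    · rintro ⟨h1, h2⟩
      constructor
      · have := (div_le_iff₀ hβ0).mp (by linarith : ((⌊β⌋ : ℝ) - a) / β ≤ z - l)
        linarith
      · have := (div_le_iff₀ hβ0).mp (by linarith : ((a : ℝ)) / β ≤ r - z)
        linarith
    · rintro ⟨h1, h2⟩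
      constructor
      · have := (div_le_iff₀ hβ0).mpr (by linarith : ((⌊β⌋ : ℝ) - a) ≤ (z - l) * β)
        linarith
      · have := (div_le_iff₀ hβ0).mpr (by linarith : ((a : ℝ)) ≤ (r - z) * β)
        linarith
  -- membership in Ia a means the image under the map lies in [l, r]
  have memIa : ∀ (a : ℤ) (z : ℝ), z ∈ Ia a ↔ (-β * z - a ∈ Set.Icc l r) := by
    intro a z
    rw [charIa, Set.mem_Icc]
    have hd : (β^2 - 1) ≠ 0 := ne_of_gt hb2
    have e3 : l = -(β * r) := by rw [hl, hr]; ring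
    have e5 : r = -(β * l) - (⌊β⌋ : ℝ) := by
      rw [hl, hr]
      rw [div_eq_iff hd] at *
      field_simp
      ring
    constructor
    · rintro ⟨h1, h2⟩
      constructor <;> nlinarith
    · rintro ⟨h1, h2⟩
      constructor <;> nlinarith
  -- key gap inequality
  have hrl : (β - 1) * (r - l) = (⌊β⌋ : ℝ) := by
    rw [hl, hr]; field_simp; ring
  have hrl1 : (1:ℝ) < r - l := by nlinarith
  have keygap : (⌊β⌋ : ℝ) + 1 < β * (r - l) := by nlinarith
  have hlr : l ≤ r := by nlinarith
  -- spec of Dm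
  have DmSpec : ∀ z ∈ Set.Icc l r, ∃ a : ℤ, 0 ≤ a ∧ a ≤ ⌊β⌋ ∧ Dm z = (a : ℝ) ∧ z ∈ Ia a ∧
      (∀ b : ℤ, b ≤ ⌊β⌋ → z ∈ Ia b → b ≤ a) := by
    rintro z ⟨hz1, hz2⟩
    set a : ℤ := min ⌊β⌋ ⌊β * (r - z)⌋ with ha
    have hrz : (0:ℝ) ≤ β * (r - z) := by nlinarith
    have ha0 : 0 ≤ a := le_min (by linarith) (Int.floor_nonneg.mpr hrz)
    have haβ : a ≤ ⌊β⌋ := min_le_left _ _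
    have haR : (a : ℝ) ≤ β * (r - z) := by
      calc (a : ℝ) ≤ (⌊β * (r - z)⌋ : ℝ) := by exact_mod_cast min_le_right _ _
        _ ≤ β * (r - z) := Int.floor_le _
    have haL : (⌊β⌋ : ℝ) - a ≤ β * (z - l) := by
      rcases le_total (⌊β⌋ : ℤ) ⌊β * (r - z)⌋ with h | h
      · have : a = ⌊β⌋ := min_eq_left h
        rw [this]; simp; nlinarith
      · have hae : a = ⌊β * (r - z)⌋ := min_eq_right h
        have h1 : β * (r - z) - 1 < (a : ℝ) := by
          rw [hae]; exact_mod_cast sub_lt_iff_lt_add.mpr (Int.lt_floor_add_one _)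
        nlinarith
    have hmem : z ∈ Ia a := (charIa a z).mpr ⟨haL, haR⟩
    have hmax : ∀ b : ℤ, b ≤ ⌊β⌋ → z ∈ Ia b → b ≤ a := by
      intro b hb hbz
      have := ((charIa b z).mp hbz).2
      exact le_min hb (Int.le_floor.mpr this)
    refine ⟨a, ha0, haβ, ?_, hmem, hmax⟩
    by_cases hcase : z ∈ Ia ⌊β⌋
    · have : ⌊β⌋ ≤ a := hmax ⌊β⌋ le_rfl hcase
      have hae : a = ⌊β⌋ := le_antisymm haβ this
      rw [hae]; exact hDmTop z hcase
    · have haβ' : a < ⌊β⌋ := lt_of_le_of_ne haβ (fun h => hcase (h ▸ hmem))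
      have hnot : z ∉ Ia (a + 1) := by
        intro hz
        have := hmax (a+1) (by omega) hz
        omega
      exact hDm a ha0 haβ' z ⟨hmem, hnot⟩
  -- spec of Dv
  have DvSpec : ∀ z ∈ Set.Icc l r, ∃ a : ℤ, 0 ≤ a ∧ a ≤ ⌊β⌋ ∧ Dv z = (a : ℝ) ∧ z ∈ Ia a ∧
      (∀ b : ℤ, 0 ≤ b → z ∈ Ia b → a ≤ b) := by
    rintro z ⟨hz1, hz2⟩
    set a : ℤ := max 0 ⌈(⌊β⌋ : ℝ) - β * (z - l)⌉ with ha
    have hzl : (0:ℝ) ≤ β * (z - l) := by nlinarith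
    have hrz : (0:ℝ) ≤ β * (r - z) := by nlinarith
    have ha0 : 0 ≤ a := le_max_left _ _
    have haβ : a ≤ ⌊β⌋ := by
      apply max_le (by linarith)
      rw [Int.ceil_le]
      push_cast
      linarith
    have haL : (⌊β⌋ : ℝ) - a ≤ β * (z - l) := by
      have h1 : ((⌊β⌋ : ℝ) - β * (z - l)) ≤ (a : ℝ) := by
        calc ((⌊β⌋ : ℝ) - β * (z - l)) ≤ (⌈(⌊β⌋ : ℝ) - β * (z - l)⌉ : ℝ) := Int.le_ceil _
          _ ≤ (a : ℝ) := by exact_mod_cast le_max_right _ _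
      linarith
    have haR : (a : ℝ) ≤ β * (r - z) := by
      rcases le_total (⌈(⌊β⌋ : ℝ) - β * (z - l)⌉) 0 with h | h
      · have : a = 0 := max_eq_left h
        rw [this]; exact_mod_cast hrz
      · have hae : a = ⌈(⌊β⌋ : ℝ) - β * (z - l)⌉ := max_eq_right h
        have h1 : (a : ℝ) < ((⌊β⌋ : ℝ) - β * (z - l)) + 1 := by
          rw [hae]; exact_mod_cast Int.ceil_lt_add_one _
        nlinarith
    have hmem : z ∈ Ia a := (charIa a z).mpr ⟨haL, haR⟩
    have hmin : ∀ b : ℤ, 0 ≤ b → z ∈ Ia b → a ≤ b := by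
      intro b hb hbz
      have h1 := ((charIa b z).mp hbz).1
      apply max_le hb
      rw [Int.ceil_le]
      push_cast
      linarith
    refine ⟨a, ha0, haβ, ?_, hmem, hmin⟩
    by_cases hcase : z ∈ Ia 0
    · have : a ≤ 0 := hmin 0 le_rfl hcase
      have hae : a = 0 := le_antisymm this ha0
      rw [hae]
      exact_mod_cast hDv0 z hcase
    · have ha1 : 1 ≤ a := by
        rcases lt_or_eq_of_le ha0 with h | h
        · omega
        · exfalso; exact hcase (h ▸ hmem)
      have hnot : z ∉ Ia (a - 1) := by
        intro hz
        have := hmin (a-1) (by omega) hz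
        omega
      exact hDv a ha1 haβ z ⟨hmem, hnot⟩
  -- invariance
  have stepm : ∀ z ∈ Set.Icc l r, (-β * z - Dm z) ∈ Set.Icc l r := by
    intro z hz
    obtain ⟨a, _, _, hDmz, hmem, _⟩ := DmSpec z hz
    rw [hDmz]
    exact (memIa a z).mp hmem
  have stepv : ∀ z ∈ Set.Icc l r, (-β * z - Dv z) ∈ Set.Icc l r := by
    intro z hz
    obtain ⟨a, _, _, hDvz, hmem, _⟩ := DvSpec z hz
    rw [hDvz]
    exact (memIa a z).mp hmem
  have ηeven : ∀ i : ℕ, η (2 * i) ∈ Set.Icc l r := by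
    intro i
    induction i with
    | zero => simpa [hη0] using hx
    | succ n ih =>
      obtain ⟨_, h1, _, h2⟩ := hrec n
      have hodd : η (2 * n + 1) ∈ Set.Icc l r := by
        rw [h1, hTm]; exact stepm _ ih
      have : η (2 * n + 2) ∈ Set.Icc l r := by
        rw [h2, hTv]; exact stepv _ hodd
      simpa [show 2 * (n + 1) = 2 * n + 2 by ring] using this
  have ηmem : ∀ n : ℕ, η n ∈ Set.Icc l r := by
    intro n
    rcases Nat.even_or_odd n with ⟨i, hi⟩ | ⟨i, hi⟩
    · have : n = 2 * i := by omega
      rw [this]; exact ηeven i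
    · have hn : n = 2 * i + 1 := by omega
      obtain ⟨_, h1, _, _⟩ := hrec i
      rw [hn, h1, hTm]
      exact stepm _ (ηeven i)
  have ydig : ∀ n : ℕ, ∃ a : ℤ, 0 ≤ a ∧ a ≤ ⌊β⌋ ∧ y n = (a : ℝ) := by
    intro n
    rcases Nat.even_or_odd n with ⟨i, hi⟩ | ⟨i, hi⟩
    · have hn : n = 2 * i := by omega
      obtain ⟨h0, _, _, _⟩ := hrec i
      obtain ⟨a, ha1, ha2, ha3, _, _⟩ := DmSpec (η (2*i)) (ηmem (2*i))
      exact ⟨a, ha1, ha2, by rw [hn, h0, ha3]⟩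
    · have hn : n = 2 * i + 1 := by omega
      obtain ⟨_, _, h0, _⟩ := hrec i
      obtain ⟨a, ha1, ha2, ha3, _, _⟩ := DvSpec (η (2*i+1)) (ηmem (2*i+1))
      exact ⟨a, ha1, ha2, by rw [hn, h0, ha3]⟩
  have recur : ∀ n : ℕ, η (n + 1) = -β * η n - y n := by
    intro n
    rcases Nat.even_or_odd n with ⟨i, hi⟩ | ⟨i, hi⟩
    · have hn : n = 2 * i := by omega
      obtain ⟨h0, h1, _, _⟩ := hrec i
      rw [hn, h1, hTm, h0]
    · have hn : n = 2 * i + 1 := by omega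
      obtain ⟨_, _, h0, h1⟩ := hrec i
      rw [hn, show 2*i+1+1 = 2*i+2 from rfl, h1, hTv, h0]
  have ybdd : ∀ i, 0 ≤ y i ∧ y i ≤ (⌊β⌋ : ℝ) := by
    intro i
    obtain ⟨a, h1, h2, h3⟩ := ydig i
    constructor
    · rw [h3]; exact_mod_cast h1
    · rw [h3]; exact_mod_cast h2
  have ysum : Summable (fun i : ℕ => y i / (-β) ^ (i+1)) := auxSummable hβ _ y ybdd
  -- eta formula
  have etaF : ∀ n : ℕ, η n = (-β) ^ n * (x - ∑ i ∈ Finset.range n, y i / (-β) ^ (i+1)) := by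
    intro n
    induction n with
    | zero => simp [hη0]
    | succ n ih =>
      have hne : ((-β) : ℝ) ^ (n+1) ≠ 0 := by
        apply pow_ne_zero; simpa using hβne
      rw [recur n, ih, Finset.sum_range_succ]
      field_simp
      ring
  -- x equals the sum
  have hxsum : x = ∑' i : ℕ, y i / (-β) ^ (i+1) := by
    have hM : ∀ n : ℕ, ‖η n / (-β) ^ n‖ ≤ (max ‖l‖ ‖r‖) * (1/β) ^ n := by
      intro n
      obtain ⟨h1, h2⟩ := ηmem n
      have hpow : (0:ℝ) < β ^ n := by positivity
      have habs : |(-β) ^ n| = β ^ n := by rw [abs_pow, abs_neg, abs_of_pos hβ0]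
      rw [Real.norm_eq_abs, abs_div, habs]
      have hη : |η n| ≤ max ‖l‖ ‖r‖ := by
        rw [abs_le]
        constructor
        · have : -‖l‖ ≤ l := neg_abs_le l
          have h3 : ‖l‖ ≤ max ‖l‖ ‖r‖ := le_max_left _ _
          linarith
        · have : r ≤ ‖r‖ := le_abs_self r
          have h3 : ‖r‖ ≤ max ‖l‖ ‖r‖ := le_max_right _ _
          linarith
      have h4 : (max ‖l‖ ‖r‖) * (1/β) ^ n = (max ‖l‖ ‖r‖) / β ^ n := by
        rw [div_pow, one_pow, mul_one_div]
      rw [h4]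
      exact (div_le_div_iff_of_pos_right hpow).mpr hη
    have hzero : Filter.Tendsto (fun n : ℕ => η n / (-β) ^ n) Filter.atTop (nhds 0) := by
      apply squeeze_zero_norm hM
      rw [show (0:ℝ) = (max ‖l‖ ‖r‖) * 0 by ring]
      exact (tendsto_pow_atTop_nhds_zero_of_lt_one (by positivity)
        (by rw [div_lt_one hβ0]; linarith)).const_mul _
    have hS : ∀ n : ℕ, ∑ i ∈ Finset.range n, y i / (-β) ^ (i+1) = x - η n / (-β) ^ n := by
      intro n
      have hne : ((-β) : ℝ) ^ n ≠ 0 := by apply pow_ne_zero; simpa using hβne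
      rw [etaF n]
      field_simp
      ring
    have hten : Filter.Tendsto (fun n : ℕ => ∑ i ∈ Finset.range n, y i / (-β) ^ (i+1))
        Filter.atTop (nhds x) := by
      simp_rw [hS]
      simpa using Filter.Tendsto.const_sub x hzero
    exact tendsto_nhds_unique hten ysum.hasSum.tendsto_sum_nat
  refine ⟨⟨ydig, hxsum⟩, ?_⟩
  -- minimality
  rintro w ⟨hwdig, hwsum⟩
  by_cases hwy : w = y
  · left; exact hwy
  right
  have hwbdd : ∀ i, 0 ≤ w i ∧ w i ≤ (⌊β⌋ : ℝ) := by
    intro i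
    obtain ⟨a, h1, h2, h3⟩ := hwdig i
    exact ⟨by rw [h3]; exact_mod_cast h1, by rw [h3]; exact_mod_cast h2⟩
  have wsum : Summable (fun i : ℕ => w i / (-β) ^ (i+1)) := auxSummable hβ _ w hwbdd
  set R : ℕ → ℝ := fun n => (-β) ^ n * (x - ∑ i ∈ Finset.range n, w i / (-β) ^ (i+1)) with hR
  have tailR : ∀ n : ℕ, R n = ∑' i : ℕ, w (i + n) / (-β) ^ (i+1) := by
    intro n
    have h1 := Summable.sum_add_tsum_nat_add (f := fun i : ℕ => w i / (-β) ^ (i+1)) n wsum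
    have h2 : x - ∑ i ∈ Finset.range n, w i / (-β) ^ (i+1)
        = ∑' i : ℕ, w (i + n) / (-β) ^ (i + n + 1) := by
      rw [hwsum]; linarith [h1]
    rw [hR]
    simp only [h2]
    rw [← tsum_mul_left]
    apply tsum_congr
    intro i
    have hne : ((-β) : ℝ) ≠ 0 := by simpa using hβne
    rw [show i + n + 1 = (i + 1) + n by ring, pow_add]
    field_simp
  have Rmem : ∀ n : ℕ, R n ∈ Set.Icc l r := by
    intro n
    rw [tailR n, Set.mem_Icc]
    exact auxTail hβ hF0 hl hr (fun i => w (i + n)) (fun i => hwbdd (i + n))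
  have Rrec : ∀ n : ℕ, R (n + 1) = -β * R n - w n := by
    intro n
    have hne : ((-β) : ℝ) ^ (n+1) ≠ 0 := by apply pow_ne_zero; simpa using hβne
    rw [hR]
    simp only
    rw [Finset.sum_range_succ]
    field_simp
    ring
  have RIa : ∀ (n : ℕ) (b : ℤ), w n = (b : ℝ) → R n ∈ Ia b := by
    intro n b hb
    rw [memIa]
    have := Rmem (n + 1)
    rw [Rrec n, hb] at this
    exact this
  -- first disagreement
  have hne : ∃ k, w k ≠ y k := by
    by_contra hcon
    push_neg at hcon
    exact hwy (funext hcon)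
  set k := Nat.find hne with hk
  have hkne : w k ≠ y k := Nat.find_spec hne
  have hmin : ∀ i < k, w i = y i := by
    intro i hi
    have := Nat.find_min hne hi
    push_neg at this
    exact this
  have Rk : R k = η k := by
    rw [hR, etaF k]
    simp only
    congr 1
    congr 1
    apply Finset.sum_congr rfl
    intro i hi
    rw [hmin i (Finset.mem_range.mp hi)]
  refine ⟨k, fun i hi => (hmin i hi).symm, ?_⟩
  obtain ⟨b, hb0, hbβ, hbw⟩ := hwdig k
  rcases Nat.even_or_odd k with ⟨i, hi⟩ | ⟨i, hi⟩
  · -- k even : y k is maximal digit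
    have hki : k = 2 * i := by omega
    obtain ⟨h0, _, _, _⟩ := hrec i
    obtain ⟨a, ha0, haβ, haD, hamem, hamax⟩ := DmSpec (η (2*i)) (ηmem (2*i))
    have hyk : y k = (a : ℝ) := by rw [hki, h0, haD]
    have hwIa : η k ∈ Ia b := by
      rw [← Rk]; exact RIa k b hbw
    have hba : b ≤ a := hamax b hbβ (by rw [← hki]; exact hwIa)
    have hbne : b ≠ a := by
      intro h
      apply hkne
      rw [hbw, hyk, h]
    have hblt : (b : ℝ) < (a : ℝ) := by exact_mod_cast lt_of_le_of_ne hba hbne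
    have hodd : Odd (k + 1) := by exact ⟨i, by omega⟩
    rw [hodd.neg_one_pow, hyk, hbw]
    nlinarith
  · -- k odd : y k is minimal digit
    have hki : k = 2 * i + 1 := by omega
    obtain ⟨_, _, h0, _⟩ := hrec i
    obtain ⟨a, ha0, haβ, haD, hamem, hamin⟩ := DvSpec (η (2*i+1)) (ηmem (2*i+1))
    have hyk : y k = (a : ℝ) := by rw [hki, h0, haD]
    have hwIa : η k ∈ Ia b := by
      rw [← Rk]; exact RIa k b hbw
    have hab : a ≤ b := hamin b hb0 (by rw [← hki]; exact hwIa)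
    have hbne : a ≠ b := by
      intro h
      apply hkne
      rw [hbw, hyk, h]
    have hblt : (a : ℝ) < (b : ℝ) := by exact_mod_cast lt_of_le_of_ne hab hbne
    have heven : Even (k + 1) := by exact ⟨i+1, by omega⟩
    rw [heven.neg_one_pow, hyk, hbw]
    nlinarith
end

section
/- Let β > 1 with β ∉ ℕ and let x ∈ I. Then d_G(x) is a β²-representation of x over ℬ that is maximal in the lexicographic order among all β²-representations of x over ℬ (the greedy β²-representation of x over ℬ), and ψ(d_G(x)) is the maximal element of R_{−β,𝒜}(x) with respect to the alternate order (the greedy (−β)-representation of x over 𝒜). -/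
section Greedy
variable {β l r : ℝ} {Ia : ℤ → Set ℝ}

lemma keyA (hb0 : 0 < β) (hlr : l = -β*r) (hrl : r = -β*l - (⌊β⌋:ℝ))
    (hIa : ∀ a : ℤ, Ia a = Set.Icc (l + ((⌊β⌋:ℝ) - a)/β) (r - a/β))
    (a : ℤ) (z : ℝ) : z ∈ Ia a ↔ -β*z - a ∈ Set.Icc l r := by
  have hbne : β ≠ 0 := ne_of_gt hb0
  rw [hIa, Set.mem_Icc, Set.mem_Icc]
  constructor
  · rintro ⟨h1, h2⟩
    constructor
    · rw [hlr]; nlinarith [mul_le_mul_of_nonneg_right h2 hb0.le,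
        div_mul_cancel₀ ((a:ℝ)) hbne]
    · rw [hrl]; nlinarith [mul_le_mul_of_nonneg_right h1 hb0.le,
        div_mul_cancel₀ (((⌊β⌋:ℝ) - a)) hbne]
  · rintro ⟨h1, h2⟩
    constructor
    · have key : (z - (l + ((⌊β⌋:ℝ)-a)/β)) * β = (-β*l - (⌊β⌋:ℝ)) - (-β*z - a) := by
        field_simp; ring
      have h0 : (0:ℝ)*β ≤ (z - (l + ((⌊β⌋:ℝ)-a)/β)) * β := by
        rw [key, zero_mul]; rw [hrl] at h2; linarith
      have := le_of_mul_le_mul_right h0 hb0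
      linarith
    · have key : ((r - a/β) - z) * β = (-β*z - a) - (-β*r) := by
        field_simp; ring
      have h0 : (0:ℝ)*β ≤ ((r - a/β) - z) * β := by
        rw [key, zero_mul]; rw [hlr] at h1; linarith
      have := le_of_mul_le_mul_right h0 hb0
      linarith

end Greedy

section Greedy2
variable {β l r : ℝ} {Ia : ℤ → Set ℝ}

lemma IaSub (hb0 : 0 < β)
    (hIa : ∀ a : ℤ, Ia a = Set.Icc (l + ((⌊β⌋:ℝ) - a)/β) (r - a/β))
    (a : ℤ) (ha0 : 0 ≤ a) (ha1 : a ≤ ⌊β⌋) : Ia a ⊆ Set.Icc l r := by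
  rw [hIa]
  apply Set.Icc_subset_Icc
  · have : (0:ℝ) ≤ ((⌊β⌋:ℝ) - a)/β := by
      apply div_nonneg _ hb0.le
      have : (a:ℝ) ≤ (⌊β⌋:ℝ) := by exact_mod_cast ha1
      linarith
    linarith
  · have : (0:ℝ) ≤ (a:ℝ)/β := by
      apply div_nonneg _ hb0.le
      exact_mod_cast ha0
    linarith

lemma cover (hβ : 1 < β) (hβP : β < (⌊β⌋:ℝ) + 1)
    (hl : l = -β * (⌊β⌋ : ℝ) / (β ^ 2 - 1)) (hr : r = (⌊β⌋ : ℝ) / (β ^ 2 - 1))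
    (hIa : ∀ a : ℤ, Ia a = Set.Icc (l + ((⌊β⌋:ℝ) - a)/β) (r - a/β))
    (z : ℝ) (hz : z ∈ Set.Icc l r) : ∃ a : ℤ, 0 ≤ a ∧ a ≤ ⌊β⌋ ∧ z ∈ Ia a := by
  have hb0 : 0 < β := by linarith
  have hden : 0 < β^2 - 1 := by nlinarith
  have hP1 : (1:ℝ) ≤ (⌊β⌋:ℝ) := by exact_mod_cast Int.le_floor.mpr (by exact_mod_cast hβ.le)
  obtain ⟨hz1, hz2⟩ := Set.mem_Icc.mp hz
  have hrz : 0 ≤ β * (r - z) := mul_nonneg hb0.le (by linarith)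
  have hrr : r*(β^2-1) = (⌊β⌋:ℝ) := by rw [hr]; field_simp
  have hll : l*(β^2-1) = -β*(⌊β⌋:ℝ) := by rw [hl]; field_simp
  have mem_of : ∀ a : ℤ, ((⌊β⌋:ℝ) - a) ≤ (z-l)*β → (a:ℝ) ≤ (r-z)*β → z ∈ Ia a := by
    intro a h1 h2
    rw [hIa, Set.mem_Icc]
    constructor
    · have : ((⌊β⌋:ℝ) - a)/β ≤ z - l := (div_le_iff₀ hb0).mpr h1
      linarith
    · have : (a:ℝ)/β ≤ r - z := (div_le_iff₀ hb0).mpr h2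
      linarith
  rcases le_total (⌊β⌋ : ℤ) ⌊β*(r-z)⌋ with hc | hc
  · refine ⟨⌊β⌋, by positivity, le_refl _, mem_of _ ?_ ?_⟩
    · have : 0 ≤ (z - l)*β := mul_nonneg (by linarith) hb0.le
      linarith
    · have h4 : ((⌊β⌋:ℝ)) ≤ (⌊β*(r-z)⌋:ℝ) := by exact_mod_cast hc
      have h5 : ((⌊β*(r-z)⌋:ℝ)) ≤ β*(r-z) := Int.floor_le _
      nlinarith
  · refine ⟨⌊β*(r-z)⌋, Int.floor_nonneg.mpr hrz, hc, mem_of _ ?_ ?_⟩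
    · have h3 : β*(r-z) - 1 < (⌊β*(r-z)⌋ : ℝ) := Int.sub_one_lt_floor _
      nlinarith
    · have h5 : ((⌊β*(r-z)⌋:ℝ)) ≤ β*(r-z) := Int.floor_le _
      nlinarith

end Greedy2

section Greedy3
variable {β l r : ℝ} {Ia : ℤ → Set ℝ} {Dm Dv : ℝ → ℝ}

lemma specDv (hβ : 1 < β) (hβP : β < (⌊β⌋:ℝ) + 1)
    (hl : l = -β * (⌊β⌋ : ℝ) / (β ^ 2 - 1)) (hr : r = (⌊β⌋ : ℝ) / (β ^ 2 - 1))
    (hIa : ∀ a : ℤ, Ia a = Set.Icc (l + ((⌊β⌋:ℝ) - a)/β) (r - a/β))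
    (hDv0 : ∀ x ∈ Ia 0, Dv x = 0)
    (hDv : ∀ a : ℤ, 1 ≤ a → a ≤ ⌊β⌋ → ∀ x ∈ Ia a \ Ia (a - 1), Dv x = (a : ℝ))
    (z : ℝ) (hz : z ∈ Set.Icc l r) :
    ∃ b : ℤ, 0 ≤ b ∧ b ≤ ⌊β⌋ ∧ Dv z = (b:ℝ) ∧ z ∈ Ia b ∧
      (∀ b' : ℤ, 0 ≤ b' → z ∈ Ia b' → b ≤ b') := by
  classical
  set S : Finset ℤ := (Finset.Icc 0 ⌊β⌋).filter (fun a => z ∈ Ia a) with hS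
  have hne : S.Nonempty := by
    obtain ⟨a, h0, h1, h2⟩ := cover hβ hβP hl hr hIa z hz
    exact ⟨a, by simp [hS, Finset.mem_filter, Finset.mem_Icc, h0, h1, h2]⟩
  set b := S.min' hne with hb
  have hbS : b ∈ S := S.min'_mem hne
  obtain ⟨hbIcc, hbmem⟩ := Finset.mem_filter.mp hbS
  obtain ⟨hb0, hb1⟩ := Finset.mem_Icc.mp hbIcc
  have hmin : ∀ b' : ℤ, 0 ≤ b' → z ∈ Ia b' → b ≤ b' := by
    intro b' h0 h2
    rcases le_or_gt b' ⌊β⌋ with h1 | h1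
    · exact S.min'_le b' (Finset.mem_filter.mpr ⟨Finset.mem_Icc.mpr ⟨h0, h1⟩, h2⟩)
    · omega
  refine ⟨b, hb0, hb1, ?_, hbmem, hmin⟩
  rcases eq_or_lt_of_le hb0 with h | h
  · rw [← h] at hbmem ⊢
    simp [hDv0 z hbmem]
  · apply hDv b h hb1
    refine ⟨hbmem, fun hmem => ?_⟩
    have := hmin (b-1) (by omega) hmem
    omega

lemma specDm (hβ : 1 < β) (hβP : β < (⌊β⌋:ℝ) + 1)
    (hl : l = -β * (⌊β⌋ : ℝ) / (β ^ 2 - 1)) (hr : r = (⌊β⌋ : ℝ) / (β ^ 2 - 1))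
    (hIa : ∀ a : ℤ, Ia a = Set.Icc (l + ((⌊β⌋:ℝ) - a)/β) (r - a/β))
    (hDmTop : ∀ x ∈ Ia ⌊β⌋, Dm x = (⌊β⌋ : ℝ))
    (hDm : ∀ a : ℤ, 0 ≤ a → a < ⌊β⌋ → ∀ x ∈ Ia a \ Ia (a + 1), Dm x = (a : ℝ))
    (z : ℝ) (hz : z ∈ Set.Icc l r) :
    ∃ a : ℤ, 0 ≤ a ∧ a ≤ ⌊β⌋ ∧ Dm z = (a:ℝ) ∧ z ∈ Ia a ∧
      (∀ a' : ℤ, a' ≤ ⌊β⌋ → z ∈ Ia a' → a' ≤ a) := by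
  classical
  set S : Finset ℤ := (Finset.Icc 0 ⌊β⌋).filter (fun a => z ∈ Ia a) with hS
  have hne : S.Nonempty := by
    obtain ⟨a, h0, h1, h2⟩ := cover hβ hβP hl hr hIa z hz
    exact ⟨a, by simp [hS, Finset.mem_filter, Finset.mem_Icc, h0, h1, h2]⟩
  set a := S.max' hne with hadef
  have haS : a ∈ S := S.max'_mem hne
  obtain ⟨haIcc, hamem⟩ := Finset.mem_filter.mp haS
  obtain ⟨ha0, ha1⟩ := Finset.mem_Icc.mp haIcc
  -- any a' ≤ ⌊β⌋ in Ia has a' ≤ a (for a' < 0 trivial)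
  have hmax : ∀ a' : ℤ, a' ≤ ⌊β⌋ → z ∈ Ia a' → a' ≤ a := by
    intro a' h1 h2
    rcases le_or_gt 0 a' with h0 | h0
    · exact S.le_max' a' (Finset.mem_filter.mpr ⟨Finset.mem_Icc.mpr ⟨h0, h1⟩, h2⟩)
    · omega
  refine ⟨a, ha0, ha1, ?_, hamem, hmax⟩
  rcases eq_or_lt_of_le ha1 with h | h
  · rw [h] at hamem ⊢
    simp [hDmTop z hamem]
  · apply hDm a ha0 h
    refine ⟨hamem, fun hmem => ?_⟩
    have := hmax (a+1) (by omega) hmem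
    omega

end Greedy3

section Greedy4
variable {β l r : ℝ} {Ia : ℤ → Set ℝ} {Dm Dv DG TG : ℝ → ℝ}

lemma specDG (hβ : 1 < β) (hPβ : (⌊β⌋:ℝ) < β) (hβP : β < (⌊β⌋:ℝ) + 1)
    (hl : l = -β * (⌊β⌋ : ℝ) / (β ^ 2 - 1)) (hr : r = (⌊β⌋ : ℝ) / (β ^ 2 - 1))
    (hIa : ∀ a : ℤ, Ia a = Set.Icc (l + ((⌊β⌋:ℝ) - a)/β) (r - a/β))
    (hDmTop : ∀ x ∈ Ia ⌊β⌋, Dm x = (⌊β⌋ : ℝ))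
    (hDm : ∀ a : ℤ, 0 ≤ a → a < ⌊β⌋ → ∀ x ∈ Ia a \ Ia (a + 1), Dm x = (a : ℝ))
    (hDv0 : ∀ x ∈ Ia 0, Dv x = 0)
    (hDv : ∀ a : ℤ, 1 ≤ a → a ≤ ⌊β⌋ → ∀ x ∈ Ia a \ Ia (a - 1), Dv x = (a : ℝ))
    (hDG : ∀ x, DG x = -β * Dv x + Dm (-β * x - Dv x))
    (hTG : ∀ x, TG x = β ^ 2 * x - DG x)
    (z : ℝ) (hz : z ∈ Set.Icc l r) :
    ∃ a b : ℤ, 0 ≤ a ∧ a ≤ ⌊β⌋ ∧ 0 ≤ b ∧ b ≤ ⌊β⌋ ∧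
      Dv z = (b:ℝ) ∧ (-β*z - (b:ℝ)) ∈ Set.Icc l r ∧ Dm (-β*z - (b:ℝ)) = (a:ℝ) ∧
      DG z = -(b:ℝ)*β + a ∧ TG z = -β*(-β*z - (b:ℝ)) - a ∧ TG z ∈ Set.Icc l r ∧
      (∀ b' : ℤ, 0 ≤ b' → z ∈ Ia b' → b ≤ b') ∧
      (∀ a' : ℤ, a' ≤ ⌊β⌋ → (-β*z - (b:ℝ)) ∈ Ia a' → a' ≤ a) ∧
      (∀ a' b' : ℤ, 0 ≤ a' → a' ≤ ⌊β⌋ → 0 ≤ b' → b' ≤ ⌊β⌋ →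
        β^2*z - (-(b':ℝ)*β + a') ∈ Set.Icc l r → -(b':ℝ)*β + a' ≤ -(b:ℝ)*β + a) := by
  have hb0' : 0 < β := by linarith
  have hden : 0 < β^2 - 1 := by nlinarith
  have hlr : l = -β*r := by rw [hl, hr]; ring
  have hrl : r = -β*l - (⌊β⌋:ℝ) := by rw [hl, hr]; field_simp; ring
  obtain ⟨b, hb0, hb1, hDvz, hzb, hbmin⟩ := specDv hβ hβP hl hr hIa hDv0 hDv z hz
  have hz2 : (-β*z - (b:ℝ)) ∈ Set.Icc l r := (keyA hb0' hlr hrl hIa b z).mp hzb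
  obtain ⟨a, ha0, ha1, hDmz2, hz2a, hamax⟩ := specDm hβ hβP hl hr hIa hDmTop hDm _ hz2
  have hDGz : DG z = -(b:ℝ)*β + a := by rw [hDG z, hDvz, hDmz2]; ring
  have hTGz : TG z = -β*(-β*z - (b:ℝ)) - a := by rw [hTG z, hDGz]; ring
  have hTGI : TG z ∈ Set.Icc l r := by
    rw [hTGz]; exact (keyA hb0' hlr hrl hIa a _).mp hz2a
  refine ⟨a, b, ha0, ha1, hb0, hb1, hDvz, hz2, hDmz2, hDGz, hTGz, hTGI, hbmin, hamax, ?_⟩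
  intro a' b' ha'0 ha'1 hb'0 hb'1 hmem
  have h6 : (-β*z - (b':ℝ)) ∈ Ia a' := by
    apply (keyA hb0' hlr hrl hIa a' _).mpr
    have h5 : -β*(-β*z - (b':ℝ)) - (a':ℝ) = β^2*z - (-(b':ℝ)*β + a') := by ring
    rw [h5]; exact hmem
  have h7 : (-β*z - (b':ℝ)) ∈ Set.Icc l r := IaSub hb0' hIa a' ha'0 ha'1 h6
  have h8 : z ∈ Ia b' := (keyA hb0' hlr hrl hIa b' z).mpr h7
  have h9 : b ≤ b' := hbmin b' hb'0 h8
  rcases eq_or_lt_of_le h9 with he | hlt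
  · rw [← he] at h6 ⊢
    have h10 : a' ≤ a := hamax a' ha'1 h6
    have h11 : (a':ℝ) ≤ (a:ℝ) := by exact_mod_cast h10
    linarith
  · have h12 : (b:ℝ) + 1 ≤ (b':ℝ) := by exact_mod_cast hlt
    have h13 : (a':ℝ) ≤ (⌊β⌋:ℝ) := by exact_mod_cast ha'1
    have h14 : (0:ℝ) ≤ (a:ℝ) := by exact_mod_cast ha0
    nlinarith [mul_le_mul_of_nonneg_right h12 hb0'.le]

end Greedy4

open Filter

lemma summable_aux {d : ℝ} (hd : 1 < |d|) {C : ℝ} {f : ℕ → ℝ} (hf : ∀ j, |f j| ≤ C) :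
    Summable (fun j => f j / d^(j+1)) := by
  have hd0 : (0:ℝ) < |d| := by linarith
  apply Summable.of_norm_bounded (g := fun j => (C/|d|) * (|d|⁻¹)^j)
    ((summable_geometric_of_lt_one (by positivity) (inv_lt_one_of_one_lt₀ hd)).mul_left _)
  intro j
  have he : C/|d| * (|d|⁻¹)^j = C/|d|^(j+1) := by
    rw [eq_div_iff (by positivity : |d|^(j+1) ≠ 0)]
    have h7 : C/|d| * (|d|⁻¹)^j * |d|^(j+1) = C * ((|d|⁻¹*|d|) * ((|d|⁻¹)^j * |d|^j)) := by
      rw [pow_succ]; ring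
    rw [h7, inv_mul_cancel₀ hd0.ne', ← mul_pow, inv_mul_cancel₀ hd0.ne', one_pow, mul_one, mul_one]
  rw [he, Real.norm_eq_abs, abs_div, abs_pow]
  have hC : 0 ≤ C := le_trans (abs_nonneg _) (hf 0)
  gcongr
  exact hf j

lemma tsum_inv_pow {b : ℝ} (hb : 1 < b) : ∑' j:ℕ, (b^(j+1))⁻¹ = (b-1)⁻¹ := by
  have h0 : (0:ℝ) < b := by linarith
  have h1 : (b:ℝ)⁻¹ < 1 := inv_lt_one_of_one_lt₀ hb
  have h2 : ∑' j:ℕ, (b⁻¹)^j = (1 - b⁻¹)⁻¹ := tsum_geometric_of_lt_one (by positivity) h1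
  have h3 : (fun j:ℕ => (b^(j+1))⁻¹) = fun j:ℕ => (b⁻¹)^j * b⁻¹ := by
    funext j; rw [pow_succ, mul_inv, inv_pow]
  rw [h3, tsum_mul_right, h2]
  have h4 : 1 - b⁻¹ ≠ 0 := by
    intro h; rw [sub_eq_zero] at h; rw [← h] at h1; linarith
  have h5 : b - 1 ≠ 0 := by intro h; rw [sub_eq_zero] at h; rw [← h] at hb; linarith
  field_simp

lemma tail_rec {d : ℝ} (hd : 1 < |d|) {C : ℝ} {c : ℕ → ℝ} (hc : ∀ j, |c j| ≤ C) (n : ℕ) :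
    ∑' j:ℕ, c (j+(n+1))/d^(j+1) = d * (∑' j:ℕ, c (j+n)/d^(j+1)) - c n := by
  have hd0 : d ≠ 0 := by
    intro h; rw [h] at hd; simp at hd; linarith
  have hs : ∀ m : ℕ, Summable (fun j => c (j+m)/d^(j+1)) :=
    fun m => summable_aux hd (fun j => hc _)
  have h := Summable.tsum_eq_zero_add (hs n)
  have h2 : ∀ j:ℕ, c ((j+1)+n)/d^((j+1)+1) = (c (j+(n+1))/d^(j+1)) * d⁻¹ := by
    intro j
    have e1 : (j+1)+n = j+(n+1) := by omega
    rw [e1, pow_succ, ← div_div, div_eq_mul_inv (c (j+(n+1)) / d^(j+1))]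
  have h3 : ∑' (j:ℕ), c ((j+1)+n)/d^((j+1)+1) = (∑' j:ℕ, c (j+(n+1))/d^(j+1)) * d⁻¹ := by
    rw [← tsum_mul_right]; exact tsum_congr h2
  rw [h3] at h
  simp only [zero_add, pow_one] at h
  field_simp at h
  linarith [h]

lemma sum_eq {d : ℝ} (hd : 1 < |d|) {C C' : ℝ} {c : ℕ → ℝ} (hc : ∀ j, |c j| ≤ C)
    {x : ℝ} {s : ℕ → ℝ} (hbound : ∀ n, |s n| ≤ C')
    (hpart : ∀ n, ∑ i ∈ Finset.range n, c i/d^(i+1) = x - s n/d^n) :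
    x = ∑' i:ℕ, c i/d^(i+1) := by
  have hd0 : (0:ℝ) < |d| := by linarith
  have hsum : Summable (fun i => c i/d^(i+1)) := summable_aux hd hc
  have h1 := hsum.hasSum.tendsto_sum_nat
  have hC' : 0 ≤ C' := le_trans (abs_nonneg _) (hbound 0)
  have h3 : Filter.Tendsto (fun n => s n/d^n) atTop (nhds 0) := by
    refine squeeze_zero_norm (a := fun n => C' * (|d|⁻¹)^n) ?_ ?_
    · intro n
      rw [Real.norm_eq_abs, abs_div, abs_pow]
      simp only [inv_pow]
      rw [div_eq_mul_inv]
      exact mul_le_mul (hbound n) (le_refl _) (by positivity) hC'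
    · simpa using (tendsto_pow_atTop_nhds_zero_of_lt_one (by positivity : (0:ℝ) ≤ |d|⁻¹)
        (inv_lt_one_of_one_lt₀ hd)).const_mul C'
  have h2 : Filter.Tendsto (fun n => x - s n/d^n) atTop (nhds x) := by
    simpa using tendsto_const_nhds.sub h3
  have h4 : (fun n => ∑ i ∈ Finset.range n, c i/d^(i+1)) = fun n => x - s n/d^n :=
    funext hpart
  rw [h4] at h1
  exact (tendsto_nhds_unique h1 h2).symm

lemma tail_bd_sq {β : ℝ} (hβ : 1 < β) {P : ℝ} (hP : 0 ≤ P) {c : ℕ → ℝ}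
    (hcl : ∀ j, -β*P ≤ c j) (hcu : ∀ j, c j ≤ P) :
    -β*P/(β^2-1) ≤ (∑' j:ℕ, c j/(β^2)^(j+1)) ∧ (∑' j:ℕ, c j/(β^2)^(j+1)) ≤ P/(β^2-1) := by
  have hb2 : 1 < β^2 := by nlinarith
  have habs : (1:ℝ) < |β^2| := by rwa [abs_of_pos (by positivity)]
  have hcb : ∀ j, |c j| ≤ β*P := fun j => abs_le.mpr ⟨by linarith [hcl j], le_trans (hcu j) (by nlinarith)⟩
  have hs : Summable (fun j => c j/(β^2)^(j+1)) := summable_aux habs hcb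
  have hginv : Summable (fun j:ℕ => (((β^2):ℝ)^(j+1))⁻¹) := by
    apply ((summable_geometric_of_lt_one (by positivity) (inv_lt_one_of_one_lt₀ hb2)).mul_right
      ((β^2)⁻¹)).congr
    intro j
    rw [← pow_succ, inv_pow]
  constructor
  · have h1 : ∑' j:ℕ, (-β*P) * ((β^2)^(j+1))⁻¹ ≤ ∑' j:ℕ, c j/(β^2)^(j+1) := by
      apply Summable.tsum_le_tsum _ (hginv.mul_left _) hs
      intro j
      rw [div_eq_mul_inv]
      exact mul_le_mul_of_nonneg_right (hcl j) (by positivity)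
    rw [tsum_mul_left, tsum_inv_pow hb2] at h1
    rw [div_eq_mul_inv]
    exact h1
  · have h1 : ∑' j:ℕ, c j/(β^2)^(j+1) ≤ ∑' j:ℕ, P * ((β^2)^(j+1))⁻¹ := by
      apply Summable.tsum_le_tsum _ hs (hginv.mul_left _)
      intro j
      rw [div_eq_mul_inv]
      exact mul_le_mul_of_nonneg_right (hcu j) (by positivity)
    rw [tsum_mul_left, tsum_inv_pow hb2] at h1
    rw [div_eq_mul_inv]
    exact h1

lemma tail_bd_neg {β : ℝ} (hβ : 1 < β) {P : ℝ} (hP : 0 ≤ P) {c : ℕ → ℝ}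
    (hcl : ∀ j, 0 ≤ c j) (hcu : ∀ j, c j ≤ P) :
    -β*P/(β^2-1) ≤ (∑' j:ℕ, c j/(-β)^(j+1)) ∧ (∑' j:ℕ, c j/(-β)^(j+1)) ≤ P/(β^2-1) := by
  have hb0 : 0 < β := by linarith
  have hb2 : 1 < β^2 := by nlinarith
  have hd2 : (0:ℝ) < β^2 - 1 := by linarith
  have hq1 : ((β^2):ℝ)⁻¹ < 1 := inv_lt_one_of_one_lt₀ hb2
  have hq0 : (0:ℝ) ≤ (β^2)⁻¹ := by positivity
  have habs : (1:ℝ) < |(-β)| := by rw [abs_neg, abs_of_pos hb0]; exact hβ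
  have habsb : (1:ℝ) < |β| := by rwa [abs_of_pos hb0]
  have hcb : ∀ j, |c j| ≤ P := fun j => abs_le.mpr ⟨by linarith [hcl j], hcu j⟩
  have hs : Summable (fun j => c j/(-β)^(j+1)) := summable_aux habs hcb
  set gl : ℕ → ℝ := fun j => (if Even j then -P else 0)/β^(j+1) with hgl
  set gr : ℕ → ℝ := fun j => (if Even j then 0 else P)/β^(j+1) with hgr
  have hite1 : ∀ j:ℕ, |if Even j then -P else (0:ℝ)| ≤ P := by
    intro j; by_cases h : Even j <;> simp [h, abs_of_nonneg hP, hP]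
  have hite2 : ∀ j:ℕ, |if Even j then (0:ℝ) else P| ≤ P := by
    intro j; by_cases h : Even j <;> simp [h, abs_of_nonneg hP, hP]
  have hsgl : Summable gl := summable_aux habsb hite1
  have hsgr : Summable gr := summable_aux habsb hite2
  -- values of the comparison sums
  have hgeo : ∑' k:ℕ, (((β^2):ℝ)⁻¹)^k = (1 - (β^2)⁻¹)⁻¹ := tsum_geometric_of_lt_one hq0 hq1
  have hpow1 : ∀ k:ℕ, β^(2*k+1) = (β^2)^k * β := by
    intro k; rw [pow_succ, pow_mul]
  have hpow2 : ∀ k:ℕ, β^(2*k+1+1) = (β^2)^k * β^2 := by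
    intro k
    rw [show 2*k+1+1 = 2*(k+1) by omega, pow_mul, pow_succ]
  have hgl2 : ∀ k:ℕ, gl (2*k) = (-P/β) * (((β^2):ℝ)⁻¹)^k := by
    intro k
    simp only [hgl, even_two_mul, if_pos, exists_apply_eq_apply]
    have hβne : β ≠ 0 := hb0.ne'
    rw [hpow1 k, inv_pow]
    field_simp
  have hgl2' : ∀ k:ℕ, gl (2*k+1) = 0 := by
    intro k
    simp only [hgl]
    rw [if_neg (by simp [Nat.even_add_one]), zero_div]
  have hgr2 : ∀ k:ℕ, gr (2*k) = 0 := by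
    intro k
    simp only [hgr]
    rw [if_pos ⟨k, two_mul k⟩, zero_div]
  have hgr2' : ∀ k:ℕ, gr (2*k+1) = (P/β^2) * (((β^2):ℝ)⁻¹)^k := by
    intro k
    simp only [hgr]
    have hβne : β ≠ 0 := hb0.ne'
    rw [if_neg (by simp [Nat.even_add_one]), hpow2 k, inv_pow]
    field_simp
  have hglval : ∑' j:ℕ, gl j = -β*P/(β^2-1) := by
    rw [← tsum_even_add_odd]
    · rw [tsum_congr hgl2, tsum_congr hgl2', tsum_zero, add_zero, tsum_mul_left, hgeo]
      have h1 : (1:ℝ) - (β^2)⁻¹ ≠ 0 := by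
        have : ((β^2):ℝ)⁻¹ < 1 := hq1
        intro h; rw [sub_eq_zero] at h; rw [← h] at this; linarith
      field_simp
    · exact ((summable_geometric_of_lt_one hq0 hq1).mul_left _).congr (fun k => (hgl2 k).symm)
    · exact summable_zero.congr (fun k => (hgl2' k).symm)
  have hgrval : ∑' j:ℕ, gr j = P/(β^2-1) := by
    rw [← tsum_even_add_odd]
    · rw [tsum_congr hgr2, tsum_congr hgr2', tsum_zero, zero_add, tsum_mul_left, hgeo]
      have h1 : (1:ℝ) - (β^2)⁻¹ ≠ 0 := by
        have : ((β^2):ℝ)⁻¹ < 1 := hq1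
        intro h; rw [sub_eq_zero] at h; rw [← h] at this; linarith
      field_simp
    · exact summable_zero.congr (fun k => (hgr2 k).symm)
    · exact ((summable_geometric_of_lt_one hq0 hq1).mul_left _).congr (fun k => (hgr2' k).symm)
  -- termwise bounds
  have hterm1 : ∀ j, gl j ≤ c j/(-β)^(j+1) := by
    intro j
    rcases Nat.even_or_odd j with he | ho
    · have hodd : Odd (j+1) := Even.add_one he
      rw [hodd.neg_pow, div_neg]
      simp only [hgl]
      rw [if_pos he, neg_div]
      have h1 : c j/β^(j+1) ≤ P/β^(j+1) := by
        gcongr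
        exact hcu j
      linarith
    · have heven : Even (j+1) := Odd.add_one ho
      rw [heven.neg_pow]
      simp only [hgl]
      rw [if_neg (Nat.not_even_iff_odd.mpr ho), zero_div]
      exact div_nonneg (hcl j) (by positivity)
  have hterm2 : ∀ j, c j/(-β)^(j+1) ≤ gr j := by
    intro j
    rcases Nat.even_or_odd j with he | ho
    · have hodd : Odd (j+1) := Even.add_one he
      rw [hodd.neg_pow, div_neg]
      simp only [hgr]
      rw [if_pos he, zero_div]
      have h1 : 0 ≤ c j/β^(j+1) := div_nonneg (hcl j) (by positivity)
      linarith
    · have heven : Even (j+1) := Odd.add_one ho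
      rw [heven.neg_pow]
      simp only [hgr]
      rw [if_neg (Nat.not_even_iff_odd.mpr ho)]
      have h1 : c j/β^(j+1) ≤ P/β^(j+1) := by
        gcongr
        exact hcu j
      linarith
  constructor
  · rw [← hglval]
    exact Summable.tsum_le_tsum hterm1 hsgl hs
  · rw [← hgrval]
    exact Summable.tsum_le_tsum hterm2 hs hsgr

theorem stmt7 (β : ℝ) (hβ : 1 < β) (hni : ∀ n : ℕ, β ≠ n)
    (l r : ℝ) (hl : l = -β * (⌊β⌋ : ℝ) / (β ^ 2 - 1)) (hr : r = (⌊β⌋ : ℝ) / (β ^ 2 - 1))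
    (Ia : ℤ → Set ℝ)
    (hIa : ∀ a : ℤ, Ia a = Set.Icc (l + ((⌊β⌋ : ℝ) - a) / β) (r - a / β))
    (Dm Dv : ℝ → ℝ)
    (hDmTop : ∀ x ∈ Ia ⌊β⌋, Dm x = (⌊β⌋ : ℝ))
    (hDm : ∀ a : ℤ, 0 ≤ a → a < ⌊β⌋ → ∀ x ∈ Ia a \ Ia (a + 1), Dm x = (a : ℝ))
    (hDv0 : ∀ x ∈ Ia 0, Dv x = 0)
    (hDv : ∀ a : ℤ, 1 ≤ a → a ≤ ⌊β⌋ → ∀ x ∈ Ia a \ Ia (a - 1), Dv x = (a : ℝ))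
    (DG TG : ℝ → ℝ)
    (hDG : ∀ x, DG x = -β * Dv x + Dm (-β * x - Dv x))
    (hTG : ∀ x, TG x = β ^ 2 * x - DG x)
    (x : ℝ) (hx : x ∈ Set.Icc l r)
    (dG : ℕ → ℝ) (hdG : ∀ k, dG k = DG (TG^[k] x))
    (w : ℕ → ℝ)
    (hw : ∀ k, w (2 * k) = Dv (TG^[k] x) ∧
      w (2 * k + 1) = Dm (-β * TG^[k] x - Dv (TG^[k] x))) :
    -- `d_G(x)` is the greedy β²-representation of x over ℬ (lex-maximal)
    ((∀ k, ∃ a b : ℤ, 0 ≤ a ∧ a ≤ ⌊β⌋ ∧ 0 ≤ b ∧ b ≤ ⌊β⌋ ∧ dG k = -(b : ℝ) * β + a) ∧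
        x = ∑' k : ℕ, dG k / (β ^ 2) ^ (k + 1) ∧
        (∀ w' : ℕ → ℝ,
          ((∀ k, ∃ a b : ℤ, 0 ≤ a ∧ a ≤ ⌊β⌋ ∧ 0 ≤ b ∧ b ≤ ⌊β⌋ ∧ w' k = -(b : ℝ) * β + a) ∧
              x = ∑' k : ℕ, w' k / (β ^ 2) ^ (k + 1)) →
            w' = dG ∨ LexLt w' dG)) ∧
    -- `ψ(d_G(x))` is the greedy (−β)-representation of x over 𝒜 (alt-maximal)
    ((∀ i, ∃ a : ℤ, 0 ≤ a ∧ a ≤ ⌊β⌋ ∧ w i = (a : ℝ)) ∧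
        x = ∑' i : ℕ, w i / (-β) ^ (i + 1) ∧
        (∀ w' : ℕ → ℝ,
          ((∀ i, ∃ a : ℤ, 0 ≤ a ∧ a ≤ ⌊β⌋ ∧ w' i = (a : ℝ)) ∧
              x = ∑' i : ℕ, w' i / (-β) ^ (i + 1)) →
            w' = w ∨ AltLt w' w)) := by
  classical
  have hb0' : 0 < β := by linarith
  have hP1 : (1:ℝ) ≤ (⌊β⌋:ℝ) := by exact_mod_cast Int.le_floor.mpr (by exact_mod_cast hβ.le)
  have hP0 : (0:ℝ) ≤ (⌊β⌋:ℝ) := by linarith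
  have hPβ : (⌊β⌋:ℝ) < β := by
    rcases lt_or_eq_of_le (Int.floor_le β) with h | h
    · exact h
    · exfalso
      have h0 : (1:ℤ) ≤ ⌊β⌋ := Int.le_floor.mpr (by exact_mod_cast hβ.le)
      have hc : ((⌊β⌋.toNat : ℕ) : ℝ) = ((⌊β⌋ : ℤ) : ℝ) := by
        exact_mod_cast congrArg (fun z : ℤ => (z : ℝ)) (Int.toNat_of_nonneg (by omega))
      exact hni ⌊β⌋.toNat (by rw [hc]; exact h.symm)
  have hβP : β < (⌊β⌋:ℝ) + 1 := Int.lt_floor_add_one β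
  have hb2 : 1 < β^2 := by nlinarith
  have hden : 0 < β^2 - 1 := by linarith
  have habs2 : (1:ℝ) < |β^2| := by rwa [abs_of_pos (by positivity)]
  have habsn : (1:ℝ) < |(-β)| := by rw [abs_neg, abs_of_pos hb0']; exact hβ
  have hlr : l = -β*r := by rw [hl, hr]; ring
  have hrl : r = -β*l - (⌊β⌋:ℝ) := by rw [hl, hr]; field_simp; ring
  -- the orbit
  obtain ⟨y, hydef⟩ : ∃ y : ℕ → ℝ, y = fun k => TG^[k] x := ⟨_, rfl⟩
  have hy' : ∀ k, y k = TG^[k] x := fun k => by rw [hydef]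
  have hy0 : y 0 = x := by rw [hy']; rfl
  have hyS : ∀ k, y (k+1) = TG (y k) := fun k => by
    rw [hy', hy', Function.iterate_succ_apply']
  have hyI : ∀ k, y k ∈ Set.Icc l r := by
    intro k
    induction k with
    | zero => rw [hy0]; exact hx
    | succ n ih =>
      rw [hyS n]
      obtain ⟨a, b, _, _, _, _, _, _, _, _, _, hTGI, _, _, _⟩ :=
        specDG hβ hPβ hβP hl hr hIa hDmTop hDm hDv0 hDv hDG hTG (y n) ih
      exact hTGI
  have Hc : ∀ k, ∃ a b : ℤ, 0 ≤ a ∧ a ≤ ⌊β⌋ ∧ 0 ≤ b ∧ b ≤ ⌊β⌋ ∧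
      Dv (y k) = (b:ℝ) ∧ (-β*(y k) - (b:ℝ)) ∈ Set.Icc l r ∧ Dm (-β*(y k) - (b:ℝ)) = (a:ℝ) ∧
      DG (y k) = -(b:ℝ)*β + a ∧ TG (y k) = -β*(-β*(y k) - (b:ℝ)) - a ∧ TG (y k) ∈ Set.Icc l r ∧
      (∀ b' : ℤ, 0 ≤ b' → (y k) ∈ Ia b' → b ≤ b') ∧
      (∀ a' : ℤ, a' ≤ ⌊β⌋ → (-β*(y k) - (b:ℝ)) ∈ Ia a' → a' ≤ a) ∧
      (∀ a' b' : ℤ, 0 ≤ a' → a' ≤ ⌊β⌋ → 0 ≤ b' → b' ≤ ⌊β⌋ →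
        β^2*(y k) - (-(b':ℝ)*β + a') ∈ Set.Icc l r → -(b':ℝ)*β + a' ≤ -(b:ℝ)*β + a) :=
    fun k => specDG hβ hPβ hβP hl hr hIa hDmTop hDm hDv0 hDv hDG hTG (y k) (hyI k)
  choose A B hA0 hA1 hB0 hB1 hDvy hz2I hDmy hDGy hTGy hTGIy hBmin hAmax hMax using Hc
  have hdGA : ∀ k, dG k = -(B k:ℝ)*β + A k := fun k => by
    rw [hdG k, ← hy' k, hDGy k]
  have hrec : ∀ k, y (k+1) = β^2 * y k - dG k := fun k => by
    rw [hyS k, hTG (y k), hdG k, hy' k]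
  have hdGb : ∀ k, -β*(⌊β⌋:ℝ) ≤ dG k ∧ dG k ≤ (⌊β⌋:ℝ) := by
    intro k
    rw [hdGA k]
    have c1 : (0:ℝ) ≤ (A k:ℝ) := by exact_mod_cast hA0 k
    have c2 : (A k:ℝ) ≤ (⌊β⌋:ℝ) := by exact_mod_cast hA1 k
    have c3 : (0:ℝ) ≤ (B k:ℝ) := by exact_mod_cast hB0 k
    have c4 : (B k:ℝ) ≤ (⌊β⌋:ℝ) := by exact_mod_cast hB1 k
    constructor
    · nlinarith [mul_le_mul_of_nonneg_right c4 hb0'.le]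
    · nlinarith [mul_nonneg c3 hb0'.le]
  have hdGabs : ∀ k, |dG k| ≤ β*(⌊β⌋:ℝ) := by
    intro k
    have := hdGb k
    apply abs_le.mpr
    constructor
    · linarith [this.1]
    · nlinarith [this.2]
  have hyB : ∀ n, |y n| ≤ |l| + |r| := by
    intro n
    have h1 := (hyI n).1
    have h2 := (hyI n).2
    apply abs_le.mpr
    constructor
    · linarith [neg_abs_le l, abs_nonneg r]
    · linarith [le_abs_self r, abs_nonneg l]
  -- partial sums for dG
  have hpart1 : ∀ n, ∑ i ∈ Finset.range n, dG i/(β^2)^(i+1) = x - y n/(β^2)^n := by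
    intro n
    induction n with
    | zero => simp [hy0]
    | succ n ih =>
      rw [Finset.sum_range_succ, ih, hrec n]
      have hne : ((β^2):ℝ)^n ≠ 0 := by positivity
      have hne2 : ((β^2):ℝ) ≠ 0 := by positivity
      field_simp
      ring
  have hsum1 : x = ∑' k : ℕ, dG k / (β ^ 2) ^ (k + 1) :=
    sum_eq habs2 hdGabs hyB hpart1
  -- part 1 maximality
  have hmax1 : ∀ w' : ℕ → ℝ,
      ((∀ k, ∃ a b : ℤ, 0 ≤ a ∧ a ≤ ⌊β⌋ ∧ 0 ≤ b ∧ b ≤ ⌊β⌋ ∧ w' k = -(b : ℝ) * β + a) ∧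
          x = ∑' k : ℕ, w' k / (β ^ 2) ^ (k + 1)) → w' = dG ∨ LexLt w' dG := by
    rintro w' ⟨hw'd, hw'sum⟩
    by_cases hiff : ∀ k, w' k = dG k
    · exact Or.inl (funext hiff)
    right
    have hex : ∃ k, w' k ≠ dG k := by push_neg at hiff; exact hiff
    have hkspec : w' (Nat.find hex) ≠ dG (Nat.find hex) := Nat.find_spec hex
    have hkmin : ∀ i < Nat.find hex, w' i = dG i := fun i hi =>
      not_not.mp (Nat.find_min hex hi)
    set k := Nat.find hex with hk
    refine ⟨k, hkmin, ?_⟩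
    have hw'b : ∀ j, -β*(⌊β⌋:ℝ) ≤ w' j ∧ w' j ≤ (⌊β⌋:ℝ) := by
      intro j
      obtain ⟨a, b, h1, h2, h3, h4, h5⟩ := hw'd j
      rw [h5]
      have c1 : (0:ℝ) ≤ (a:ℝ) := by exact_mod_cast h1
      have c2 : (a:ℝ) ≤ (⌊β⌋:ℝ) := by exact_mod_cast h2
      have c3 : (0:ℝ) ≤ (b:ℝ) := by exact_mod_cast h3
      have c4 : (b:ℝ) ≤ (⌊β⌋:ℝ) := by exact_mod_cast h4
      constructor
      · nlinarith [mul_le_mul_of_nonneg_right c4 hb0'.le]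
      · nlinarith [mul_nonneg c3 hb0'.le]
    have hw'abs : ∀ j, |w' j| ≤ β*(⌊β⌋:ℝ) := by
      intro j
      have := hw'b j
      apply abs_le.mpr
      exact ⟨by linarith [this.1], by nlinarith [this.2]⟩
    obtain ⟨t, htdef⟩ : ∃ t : ℕ → ℝ, t = fun n => ∑' j:ℕ, w' (j+n)/(β^2)^(j+1) := ⟨_, rfl⟩
    have ht' : ∀ n, t n = ∑' j:ℕ, w' (j+n)/(β^2)^(j+1) := fun n => by rw [htdef]
    have ht0 : t 0 = x := by
      rw [ht' 0]
      simp only [Nat.add_zero]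
      exact hw'sum.symm
    have htrec : ∀ n, t (n+1) = β^2 * t n - w' n := fun n => by
      rw [ht' (n+1), ht' n]; exact tail_rec habs2 hw'abs n
    have htI : ∀ n, t n ∈ Set.Icc l r := by
      intro n
      rw [ht' n, Set.mem_Icc, hl, hr]
      exact tail_bd_sq hβ hP0 (c := fun j => w' (j+n)) (fun j => (hw'b _).1) (fun j => (hw'b _).2)
    have hty : ∀ n, n ≤ k → t n = y n := by
      intro n
      induction n with
      | zero => intro _; rw [ht0, hy0]
      | succ m ih =>
        intro hle
        have h1 : m < k := by omega
        rw [htrec m, ih (by omega), hkmin m h1, ← hrec m]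
    obtain ⟨a', b', ha'0, ha'1, hb'0, hb'1, hw'k⟩ := hw'd k
    have hmem : β^2*(y k) - w' k ∈ Set.Icc l r := by
      have h2 : t (k+1) = β^2 * t k - w' k := htrec k
      rw [hty k le_rfl] at h2
      rw [← h2]
      exact htI (k+1)
    have hle : w' k ≤ dG k := by
      rw [hw'k] at hmem ⊢
      rw [hdGA k]
      exact hMax k a' b' ha'0 ha'1 hb'0 hb'1 hmem
    exact lt_of_le_of_ne hle hkspec
  -- part 2 : the (-β) expansion
  have hw1 : ∀ m, w (2*m) = (B m:ℝ) := fun m => by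
    rw [(hw m).1, ← hy' m, hDvy m]
  have hw2 : ∀ m, w (2*m+1) = (A m:ℝ) := fun m => by
    rw [(hw m).2, ← hy' m, hDvy m, hDmy m]
  obtain ⟨s, hsdef⟩ : ∃ s : ℕ → ℝ,
      s = fun n => if n % 2 = 0 then y (n/2) else -β * y (n/2) - (B (n/2):ℝ) := ⟨_, rfl⟩
  have hs' : ∀ n, s n = if n % 2 = 0 then y (n/2) else -β * y (n/2) - (B (n/2):ℝ) :=
    fun n => by rw [hsdef]
  have hs5 : ∀ m, s (2*m) = y m := by
    intro m
    rw [hs' (2*m), if_pos (by omega : (2*m) % 2 = 0), (by omega : 2*m/2 = m)]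
  have hs6 : ∀ m, s (2*m+1) = -β * y m - (B m:ℝ) := by
    intro m
    rw [hs' (2*m+1), if_neg (by omega : ¬((2*m+1) % 2 = 0)), (by omega : (2*m+1)/2 = m)]
  have hs0 : s 0 = x := by
    have := hs5 0
    rw [hy0] at this
    simpa using this
  have hsrec : ∀ n, s (n+1) = -β * s n - w n := by
    intro n
    rcases Nat.even_or_odd n with ⟨m, hm⟩ | ⟨m, hm⟩
    · obtain rfl : n = 2*m := by omega
      rw [hs6 m, hs5 m, hw1 m]
    · obtain rfl : n = 2*m+1 := by omega
      rw [(by ring : 2*m+1+1 = 2*(m+1)), hs5 (m+1), hs6 m, hw2 m, hyS m, hTGy m]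
  have hsI : ∀ n, s n ∈ Set.Icc l r := by
    intro n
    rcases Nat.even_or_odd n with ⟨m, hm⟩ | ⟨m, hm⟩
    · obtain rfl : n = 2*m := by omega
      rw [hs5 m]; exact hyI m
    · obtain rfl : n = 2*m+1 := by omega
      rw [hs6 m]; exact hz2I m
  have hsB : ∀ n, |s n| ≤ |l| + |r| := by
    intro n
    have h1 := (hsI n).1
    have h2 := (hsI n).2
    apply abs_le.mpr
    constructor
    · linarith [neg_abs_le l, abs_nonneg r]
    · linarith [le_abs_self r, abs_nonneg l]
  have hwb : ∀ i, 0 ≤ w i ∧ w i ≤ (⌊β⌋:ℝ) := by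
    intro i
    rcases Nat.even_or_odd i with ⟨m, hm⟩ | ⟨m, hm⟩
    · obtain rfl : i = 2*m := by omega
      rw [hw1 m]
      exact ⟨by exact_mod_cast hB0 m, by exact_mod_cast hB1 m⟩
    · obtain rfl : i = 2*m+1 := by omega
      rw [hw2 m]
      exact ⟨by exact_mod_cast hA0 m, by exact_mod_cast hA1 m⟩
  have hwabs : ∀ i, |w i| ≤ (⌊β⌋:ℝ) := fun i =>
    abs_le.mpr ⟨by linarith [(hwb i).1], (hwb i).2⟩
  have hpart2 : ∀ n, ∑ i ∈ Finset.range n, w i/(-β)^(i+1) = x - s n/(-β)^n := by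
    intro n
    induction n with
    | zero => simp [hs0]
    | succ n ih =>
      rw [Finset.sum_range_succ, ih, hsrec n]
      have hne : ((-β):ℝ)^n ≠ 0 := pow_ne_zero _ (neg_ne_zero.mpr hb0'.ne')
      have hne2 : ((-β):ℝ) ≠ 0 := neg_ne_zero.mpr hb0'.ne'
      field_simp
      ring
  have hsum2 : x = ∑' i : ℕ, w i / (-β) ^ (i + 1) :=
    sum_eq habsn hwabs hsB hpart2
  have hdig2 : ∀ i, ∃ a : ℤ, 0 ≤ a ∧ a ≤ ⌊β⌋ ∧ w i = (a : ℝ) := by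
    intro i
    rcases Nat.even_or_odd i with ⟨m, hm⟩ | ⟨m, hm⟩
    · obtain rfl : i = 2*m := by omega
      exact ⟨B m, hB0 m, hB1 m, hw1 m⟩
    · obtain rfl : i = 2*m+1 := by omega
      exact ⟨A m, hA0 m, hA1 m, hw2 m⟩
  -- part 2 maximality
  have hmax2 : ∀ w' : ℕ → ℝ,
      ((∀ i, ∃ a : ℤ, 0 ≤ a ∧ a ≤ ⌊β⌋ ∧ w' i = (a : ℝ)) ∧
          x = ∑' i : ℕ, w' i / (-β) ^ (i + 1)) → w' = w ∨ AltLt w' w := by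
    rintro w' ⟨hw'd, hw'sum⟩
    by_cases hiff : ∀ i, w' i = w i
    · exact Or.inl (funext hiff)
    right
    have hex : ∃ i, w' i ≠ w i := by push_neg at hiff; exact hiff
    have hkspec : w' (Nat.find hex) ≠ w (Nat.find hex) := Nat.find_spec hex
    have hkmin : ∀ i < Nat.find hex, w' i = w i := fun i hi =>
      not_not.mp (Nat.find_min hex hi)
    set k := Nat.find hex with hk
    have hw'b : ∀ j, 0 ≤ w' j ∧ w' j ≤ (⌊β⌋:ℝ) := by
      intro j
      obtain ⟨a, h1, h2, h3⟩ := hw'd j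
      rw [h3]
      exact ⟨by exact_mod_cast h1, by exact_mod_cast h2⟩
    have hw'abs : ∀ j, |w' j| ≤ (⌊β⌋:ℝ) := fun j =>
      abs_le.mpr ⟨by linarith [(hw'b j).1], (hw'b j).2⟩
    obtain ⟨t, htdef⟩ : ∃ t : ℕ → ℝ, t = fun n => ∑' j:ℕ, w' (j+n)/(-β)^(j+1) := ⟨_, rfl⟩
    have ht' : ∀ n, t n = ∑' j:ℕ, w' (j+n)/(-β)^(j+1) := fun n => by rw [htdef]
    have ht0 : t 0 = x := by
      rw [ht' 0]
      simp only [Nat.add_zero]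
      exact hw'sum.symm
    have htrec : ∀ n, t (n+1) = -β * t n - w' n := fun n => by
      rw [ht' (n+1), ht' n]; exact tail_rec habsn hw'abs n
    have htI : ∀ n, t n ∈ Set.Icc l r := by
      intro n
      rw [ht' n, Set.mem_Icc, hl, hr]
      exact tail_bd_neg hβ hP0 (c := fun j => w' (j+n)) (fun j => (hw'b _).1) (fun j => (hw'b _).2)
    have hts : ∀ n, n ≤ k → t n = s n := by
      intro n
      induction n with
      | zero => intro _; rw [ht0, hs0]
      | succ m ih =>
        intro hle
        have h1 : m < k := by omega
        rw [htrec m, ih (by omega), hkmin m h1, ← hsrec m]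
    obtain ⟨a', ha'0, ha'1, hw'k⟩ := hw'd k
    have hmem : -β*(s k) - w' k ∈ Set.Icc l r := by
      have h2 : t (k+1) = -β * t k - w' k := htrec k
      rw [hts k le_rfl] at h2
      rw [← h2]
      exact htI (k+1)
    have hsIa : s k ∈ Ia a' := by
      apply (keyA hb0' hlr hrl hIa a' (s k)).mpr
      rw [← hw'k]
      exact hmem
    refine ⟨k, hkmin, ?_⟩
    rcases Nat.even_or_odd k with ⟨m, hm⟩ | ⟨m, hm⟩
    · -- k = 2m : Dv minimal digit, sign is -1
      have hkm : k = 2*m := by omega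
      have h5 : s k ∈ Ia a' := hsIa
      rw [hkm, hs5 m] at h5
      have h6 : B m ≤ a' := hBmin m a' ha'0 h5
      have h7 : (B m:ℝ) ≤ (a':ℝ) := by exact_mod_cast h6
      have hlt : w k < w' k := by
        apply lt_of_le_of_ne _ (Ne.symm hkspec)
        rw [hw'k, hkm, hw1 m]
        exact h7
      have hsign : ((-1:ℝ))^(k+1) = -1 := by
        apply Odd.neg_one_pow
        rw [hkm]
        exact ⟨m, by ring⟩
      rw [hsign]
      linarith
    · -- k = 2m+1 : Dm maximal digit, sign is +1
      have hkm : k = 2*m+1 := by omega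
      have h5 : s k ∈ Ia a' := hsIa
      rw [hkm, hs6 m] at h5
      have h6 : a' ≤ A m := hAmax m a' ha'1 h5
      have h7 : (a':ℝ) ≤ (A m:ℝ) := by exact_mod_cast h6
      have hlt : w' k < w k := by
        apply lt_of_le_of_ne _ hkspec
        rw [hw'k, hkm, hw2 m]
        exact h7
      have hsign : ((-1:ℝ))^(k+1) = 1 := by
        apply Even.neg_one_pow
        rw [hkm]
        exact ⟨m+1, by ring⟩
      rw [hsign]
      linarith
  exact ⟨⟨fun k => ⟨A k, B k, hA0 k, hA1 k, hB0 k, hB1 k, hdGA k⟩, hsum1, hmax1⟩,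
    ⟨hdig2, hsum2, hmax2⟩⟩
end

section
/- Let β > 1 with β ∉ ℕ and let x ∈ I. Then d_L(x) is a β²-representation of x over ℬ that is minimal in the lexicographic order among all β²-representations of x over ℬ (the lazy β²-representation of x over ℬ), and ψ(d_L(x)) is the minimal element of R_{−β,𝒜}(x) with respect to the alternate order (the lazy (−β)-representation of x over 𝒜). -/
set_option maxHeartbeats 2000000 in
theorem stmt8 (β : ℝ) (hβ : 1 < β) (hni : ∀ n : ℕ, β ≠ n)
    (l r : ℝ) (hl : l = -β * (⌊β⌋ : ℝ) / (β ^ 2 - 1)) (hr : r = (⌊β⌋ : ℝ) / (β ^ 2 - 1))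
    (Ia : ℤ → Set ℝ)
    (hIa : ∀ a : ℤ, Ia a = Set.Icc (l + ((⌊β⌋ : ℝ) - a) / β) (r - a / β))
    (Dm Dv : ℝ → ℝ)
    (hDmTop : ∀ x ∈ Ia ⌊β⌋, Dm x = (⌊β⌋ : ℝ))
    (hDm : ∀ a : ℤ, 0 ≤ a → a < ⌊β⌋ → ∀ x ∈ Ia a \ Ia (a + 1), Dm x = (a : ℝ))
    (hDv0 : ∀ x ∈ Ia 0, Dv x = 0)
    (hDv : ∀ a : ℤ, 1 ≤ a → a ≤ ⌊β⌋ → ∀ x ∈ Ia a \ Ia (a - 1), Dv x = (a : ℝ))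
    (DL TL : ℝ → ℝ)
    (hDL : ∀ x, DL x = -β * Dm x + Dv (-β * x - Dm x))
    (hTL : ∀ x, TL x = β ^ 2 * x - DL x)
    (x : ℝ) (hx : x ∈ Set.Icc l r)
    (dL : ℕ → ℝ) (hdL : ∀ k, dL k = DL (TL^[k] x))
    (w : ℕ → ℝ)
    (hw : ∀ k, w (2 * k) = Dm (TL^[k] x) ∧
      w (2 * k + 1) = Dv (-β * TL^[k] x - Dm (TL^[k] x))) :
    -- `d_L(x)` is the lazy β²-representation of x over ℬ (lex-minimal)
    ((∀ k, ∃ a b : ℤ, 0 ≤ a ∧ a ≤ ⌊β⌋ ∧ 0 ≤ b ∧ b ≤ ⌊β⌋ ∧ dL k = -(b : ℝ) * β + a) ∧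
        x = ∑' k : ℕ, dL k / (β ^ 2) ^ (k + 1) ∧
        (∀ w' : ℕ → ℝ,
          ((∀ k, ∃ a b : ℤ, 0 ≤ a ∧ a ≤ ⌊β⌋ ∧ 0 ≤ b ∧ b ≤ ⌊β⌋ ∧ w' k = -(b : ℝ) * β + a) ∧
              x = ∑' k : ℕ, w' k / (β ^ 2) ^ (k + 1)) →
            w' = dL ∨ LexLt dL w')) ∧
    -- `ψ(d_L(x))` is the lazy (−β)-representation of x over 𝒜 (alt-minimal)
    ((∀ i, ∃ a : ℤ, 0 ≤ a ∧ a ≤ ⌊β⌋ ∧ w i = (a : ℝ)) ∧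
        x = ∑' i : ℕ, w i / (-β) ^ (i + 1) ∧
        (∀ w' : ℕ → ℝ,
          ((∀ i, ∃ a : ℤ, 0 ≤ a ∧ a ≤ ⌊β⌋ ∧ w' i = (a : ℝ)) ∧
              x = ∑' i : ℕ, w' i / (-β) ^ (i + 1)) →
            w' = w ∨ AltLt w w')) := by
  classical
  obtain ⟨hxl, hxr⟩ := hx
  have hβ0 : (0:ℝ) < β := by linarith
  have hβne : β ≠ 0 := ne_of_gt hβ0
  have hβF1 : β < (⌊β⌋ : ℝ) + 1 := Int.lt_floor_add_one β
  have hFle : ((⌊β⌋ : ℤ) : ℝ) ≤ β := Int.floor_le β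
  set bf : ℤ := ⌊β⌋ with hbf
  have hb1 : (1:ℤ) ≤ bf := by
    rw [hbf]
    exact Int.le_floor.mpr (by push_cast; linarith)
  have hF1 : (1:ℝ) ≤ (bf:ℝ) := by exact_mod_cast hb1
  have hFβ : (bf:ℝ) < β := by
    rcases lt_or_eq_of_le hFle with h | h
    · exact h
    · exfalso
      refine hni bf.toNat ?_
      rw [← h]
      norm_cast
      omega
  have h21 : (0:ℝ) < β^2 - 1 := by nlinarith
  have hd21 : (β^2 - 1 : ℝ) ≠ 0 := ne_of_gt h21
  have hlr1 : -β * r = l := by rw [hl, hr]; ring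
  have hlr2 : -β * l - (bf:ℝ) = r := by
    rw [hl, hr]
    field_simp
    ring
  have hr0 : 0 ≤ r := by rw [hr]; positivity
  have hl0 : l ≤ 0 := by nlinarith
  have hKey : (bf:ℝ) + 1 < β * (r - l) := by
    have h1 : β * (r - l) * (β^2 - 1) = β * (bf:ℝ) * (1 + β) := by
      rw [hl, hr]; field_simp; ring
    nlinarith [mul_pos (show (0:ℝ) < 1 + β by linarith)
      (show (0:ℝ) < (bf:ℝ) + 1 - β by linarith), h21]
  -- membership criteria
  have mem_Ia_iff : ∀ (a : ℤ) (v : ℝ),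
      v ∈ Ia a ↔ ((a:ℝ) ≤ (r - v) * β ∧ (bf:ℝ) - a ≤ (v - l) * β) := by
    intro a v
    rw [hIa a, Set.mem_Icc]
    constructor
    · rintro ⟨h1, h2⟩
      constructor
      · have h3 : (a:ℝ)/β ≤ r - v := by linarith
        have := (div_le_iff₀ hβ0).mp h3
        linarith
      · have h3 : ((bf:ℝ) - a)/β ≤ v - l := by linarith
        have := (div_le_iff₀ hβ0).mp h3
        linarith
    · rintro ⟨h1, h2⟩
      constructor
      · have := (div_le_iff₀ hβ0).mpr h2
        linarith
      · have := (div_le_iff₀ hβ0).mpr h1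
        linarith
  have memP : ∀ (a : ℤ) (v : ℝ),
      (l ≤ -β*v - a ∧ -β*v - a ≤ r) ↔ ((a:ℝ) ≤ (r - v) * β ∧ (bf:ℝ) - a ≤ (v - l) * β) := by
    intro a v
    constructor <;> rintro ⟨h1, h2⟩ <;> constructor <;> nlinarith [hlr1, hlr2]
  have mem_Ia_iff' : ∀ (a : ℤ) (v : ℝ), v ∈ Ia a ↔ (l ≤ -β*v - a ∧ -β*v - a ≤ r) := by
    intro a v
    rw [mem_Ia_iff a v]
    exact (memP a v).symm
  -- spec of Dm
  have specDm : ∀ v : ℝ, l ≤ v → v ≤ r →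
      (∃ b : ℤ, 0 ≤ b ∧ b ≤ bf ∧ Dm v = (b:ℝ)) ∧
      (l ≤ -β*v - Dm v ∧ -β*v - Dm v ≤ r) ∧
      (∀ b' : ℤ, 0 ≤ b' → b' ≤ bf → l ≤ -β*v - b' → -β*v - b' ≤ r → (b':ℝ) ≤ Dm v) := by
    intro v hv1 hv2
    have ht0 : 0 ≤ (r - v) * β := mul_nonneg (by linarith) hβ0.le
    by_cases hc : bf ≤ ⌊(r - v) * β⌋
    · have hbt : (bf:ℝ) ≤ (r - v) * β := Int.le_floor.mp hc
      have hmem : v ∈ Ia bf := (mem_Ia_iff bf v).mpr ⟨hbt, by nlinarith⟩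
      have hDmv : Dm v = (bf:ℝ) := hDmTop v hmem
      have hP := (mem_Ia_iff' bf v).mp hmem
      refine ⟨⟨bf, by omega, le_refl _, hDmv⟩, by rw [hDmv]; exact hP, ?_⟩
      intro b' _ h1 _ _
      rw [hDmv]
      exact_mod_cast h1
    · push_neg at hc
      set b := ⌊(r - v) * β⌋ with hbdef
      have hb0 : 0 ≤ b := Int.floor_nonneg.mpr ht0
      have hfl : (b:ℝ) ≤ (r - v)*β := Int.floor_le _
      have hfl2 : (r - v)*β < (b:ℝ) + 1 := Int.lt_floor_add_one _
      have hmem : v ∈ Ia b := (mem_Ia_iff b v).mpr ⟨hfl, by nlinarith [hKey]⟩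
      have hnmem : v ∉ Ia (b+1) := by
        rw [mem_Ia_iff]
        rintro ⟨h1, -⟩
        push_cast at h1
        linarith
      have hDmv : Dm v = (b:ℝ) := hDm b hb0 hc v ⟨hmem, hnmem⟩
      have hP := (mem_Ia_iff' b v).mp hmem
      refine ⟨⟨b, hb0, by omega, hDmv⟩, by rw [hDmv]; exact hP, ?_⟩
      intro b' _ _ h2 h3
      have hle := ((memP b' v).mp ⟨h2, h3⟩).1
      rw [hDmv]
      exact_mod_cast Int.le_floor.mpr hle
  -- spec of Dv
  have specDv : ∀ v : ℝ, l ≤ v → v ≤ r →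
      (∃ a : ℤ, 0 ≤ a ∧ a ≤ bf ∧ Dv v = (a:ℝ)) ∧
      (l ≤ -β*v - Dv v ∧ -β*v - Dv v ≤ r) ∧
      (∀ a' : ℤ, 0 ≤ a' → a' ≤ bf → l ≤ -β*v - a' → -β*v - a' ≤ r → Dv v ≤ (a':ℝ)) := by
    intro v hv1 hv2
    have ht0 : 0 ≤ (r - v) * β := mul_nonneg (by linarith) hβ0.le
    have hs0 : 0 ≤ (v - l) * β := mul_nonneg (by linarith) hβ0.le
    by_cases hc : ⌈(bf:ℝ) - (v - l) * β⌉ ≤ 0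
    · have hsle : (bf:ℝ) - (v - l)*β ≤ 0 :=
        le_trans (Int.le_ceil _) (by exact_mod_cast hc)
      have hmem : v ∈ Ia 0 := (mem_Ia_iff 0 v).mpr ⟨by push_cast; linarith, by push_cast; linarith⟩
      have hDvv : Dv v = 0 := hDv0 v hmem
      have hP := (mem_Ia_iff' 0 v).mp hmem
      refine ⟨⟨0, le_refl _, by omega, by rw [hDvv]; norm_num⟩, ⟨?_, ?_⟩, ?_⟩
      · rw [hDvv]; simpa using hP.1
      · rw [hDvv]; simpa using hP.2
      · intro a' h0 _ _ _
        rw [hDvv]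
        exact_mod_cast h0
    · push_neg at hc
      set a := ⌈(bf:ℝ) - (v - l) * β⌉ with hadef
      have ha1 : 1 ≤ a := hc
      have hub : a ≤ bf := by
        have h1 : (bf:ℝ) - (v-l)*β ≤ (bf:ℝ) := by linarith
        calc a ≤ ⌈(bf:ℝ)⌉ := Int.ceil_le_ceil h1
          _ = bf := Int.ceil_intCast bf
      have hce : (bf:ℝ) - (v-l)*β ≤ (a:ℝ) := Int.le_ceil _
      have hce2 : (a:ℝ) < (bf:ℝ) - (v-l)*β + 1 := Int.ceil_lt_add_one _
      have hmem : v ∈ Ia a := (mem_Ia_iff a v).mpr ⟨by nlinarith [hKey], by linarith⟩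
      have hnmem : v ∉ Ia (a-1) := by
        rw [mem_Ia_iff]
        rintro ⟨-, h2⟩
        push_cast at h2
        linarith
      have hDvv : Dv v = (a:ℝ) := hDv a ha1 hub v ⟨hmem, hnmem⟩
      have hP := (mem_Ia_iff' a v).mp hmem
      refine ⟨⟨a, by omega, hub, hDvv⟩, by rw [hDvv]; exact hP, ?_⟩
      intro a' _ _ h2 h3
      have hq := ((memP a' v).mp ⟨h2, h3⟩).2
      rw [hDvv]
      have : a ≤ a' := Int.ceil_le.mpr (by push_cast; linarith)
      exact_mod_cast this
  -- the combined one-step lemma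
  have step : ∀ v : ℝ, l ≤ v → v ≤ r →
      (∃ b : ℤ, 0 ≤ b ∧ b ≤ bf ∧ Dm v = (b:ℝ)) ∧
      (l ≤ -β*v - Dm v ∧ -β*v - Dm v ≤ r) ∧
      (∃ a : ℤ, 0 ≤ a ∧ a ≤ bf ∧ Dv (-β*v - Dm v) = (a:ℝ)) ∧
      TL v = -β*(-β*v - Dm v) - Dv (-β*v - Dm v) ∧
      (l ≤ TL v ∧ TL v ≤ r) ∧
      (∀ b' : ℤ, 0 ≤ b' → b' ≤ bf → l ≤ -β*v - b' → -β*v - b' ≤ r → (b':ℝ) ≤ Dm v) ∧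
      (∀ a' : ℤ, 0 ≤ a' → a' ≤ bf → l ≤ -β*(-β*v - Dm v) - a' → -β*(-β*v - Dm v) - a' ≤ r →
        Dv (-β*v - Dm v) ≤ (a':ℝ)) ∧
      (∀ b' a' : ℤ, 0 ≤ b' → b' ≤ bf → 0 ≤ a' → a' ≤ bf →
        l ≤ β^2*v - (-(b':ℝ)*β + a') → β^2*v - (-(b':ℝ)*β + a') ≤ r →
        DL v ≤ -(b':ℝ)*β + a') := by
    intro v hv1 hv2
    obtain ⟨⟨b, hb0, hbbf, hDmv⟩, ⟨hz1, hz2⟩, hmaxb⟩ := specDm v hv1 hv2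
    obtain ⟨⟨a, ha0, habf, hDvz⟩, ⟨hy1, hy2⟩, hmina⟩ := specDv (-β*v - Dm v) hz1 hz2
    have hTLv : TL v = -β*(-β*v - Dm v) - Dv (-β*v - Dm v) := by rw [hTL, hDL]; ring
    refine ⟨⟨b, hb0, hbbf, hDmv⟩, ⟨hz1, hz2⟩, ⟨a, ha0, habf, hDvz⟩, hTLv,
      ⟨by rw [hTLv]; exact hy1, by rw [hTLv]; exact hy2⟩, hmaxb, hmina, ?_⟩
    intro b' a' hb'0 hb'bf ha'0 ha'bf hu1 hu2
    have ha'0c : (0:ℝ) ≤ (a':ℝ) := by exact_mod_cast ha'0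
    have ha'bc : ((a':ℤ):ℝ) ≤ (bf:ℝ) := by exact_mod_cast ha'bf
    have hu1' : l ≤ -β*(-β*v - b') - a' := by nlinarith [hu1]
    have hu2' : -β*(-β*v - b') - a' ≤ r := by nlinarith [hu2]
    have hpq := (memP a' (-β*v - b')).mp ⟨hu1', hu2'⟩
    have hv'2 : -β*v - b' ≤ r := by nlinarith [hpq.1]
    have hv'1 : l ≤ -β*v - b' := by nlinarith [hpq.2]
    have hble := hmaxb b' hb'0 hb'bf hv'1 hv'2
    rw [hDL]
    rcases eq_or_lt_of_le hble with hbe | hbl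
    · rw [hbe] at hu1' hu2'
      have hmin := hmina a' ha'0 ha'bf hu1' hu2'
      nlinarith [hmin, mul_le_mul_of_nonneg_left hbe.le hβ0.le,
        mul_le_mul_of_nonneg_left hbe.ge hβ0.le]
    · have hbi : (b':ℝ) ≤ (b:ℝ) - 1 := by
        rw [hDmv] at hbl
        have hblt : b' < b := by exact_mod_cast hbl
        have : b' ≤ b - 1 := by omega
        calc (b':ℝ) ≤ ((b-1 : ℤ) : ℝ) := by exact_mod_cast this
          _ = (b:ℝ) - 1 := by push_cast; ring
      rw [hDvz, hDmv]
      have h1 : (a:ℝ) ≤ (bf:ℝ) := by exact_mod_cast habf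
      nlinarith [mul_le_mul_of_nonneg_left hbi hβ0.le]
  -- orbit
  let Y : ℕ → ℝ := fun k => TL^[k] x
  have hYk : ∀ k, Y k = TL^[k] x := fun _ => rfl
  have hY0 : Y 0 = x := rfl
  have hYs : ∀ k, Y (k+1) = TL (Y k) := fun k => Function.iterate_succ_apply' TL k x
  have hYI : ∀ k, l ≤ Y k ∧ Y k ≤ r := by
    intro k
    induction k with
    | zero => exact ⟨hxl, hxr⟩
    | succ n ih =>
      have h := (step (Y n) ih.1 ih.2).2.2.2.2.1
      rw [hYs n]
      exact h
  let Z : ℕ → ℝ := fun k => -β * Y k - Dm (Y k)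
  have hZk : ∀ k, Z k = -β * Y k - Dm (Y k) := fun _ => rfl
  have hZI : ∀ k, l ≤ Z k ∧ Z k ≤ r := fun k => (step (Y k) (hYI k).1 (hYI k).2).2.1
  have hwe : ∀ k, w (2*k) = Dm (Y k) := fun k => (hw k).1
  have hwo : ∀ k, w (2*k+1) = Dv (Z k) := fun k => (hw k).2
  have hdig : ∀ k, (∃ b : ℤ, 0 ≤ b ∧ b ≤ bf ∧ Dm (Y k) = (b:ℝ)) ∧
      (∃ a : ℤ, 0 ≤ a ∧ a ≤ bf ∧ Dv (Z k) = (a:ℝ)) :=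
    fun k => ⟨(step (Y k) (hYI k).1 (hYI k).2).1, (step (Y k) (hYI k).1 (hYI k).2).2.2.1⟩
  have hrec1 : ∀ k, Z k = -β * Y k - w (2*k) := by
    intro k
    rw [hwe k]
  have hrecTL : ∀ k, Y (k+1) = -β * Z k - w (2*k+1) := by
    intro k
    rw [hYs k, hwo k, hZk k]
    exact (step (Y k) (hYI k).1 (hYI k).2).2.2.2.1
  have hdLk : ∀ k, dL k = -β * Dm (Y k) + Dv (Z k) := by
    intro k
    rw [hZk k, hYk k, hdL k, hDL]
  have hdLrec : ∀ k, Y (k+1) = β^2 * Y k - dL k := by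
    intro k
    rw [hYs k, hTL (Y k), hdL k, ← hYk k]
  -- digit facts
  have hwdig : ∀ i, ∃ a : ℤ, 0 ≤ a ∧ a ≤ bf ∧ w i = (a:ℝ) := by
    intro i
    rcases Nat.even_or_odd i with ⟨m, hm⟩ | ⟨m, hm⟩
    · obtain ⟨b, h0, h1, h2⟩ := (hdig m).1
      exact ⟨b, h0, h1, by rw [show i = 2*m by omega, hwe m, h2]⟩
    · obtain ⟨a, h0, h1, h2⟩ := (hdig m).2
      exact ⟨a, h0, h1, by rw [show i = 2*m+1 by omega, hwo m, h2]⟩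
  have hwb : ∀ i, 0 ≤ w i ∧ w i ≤ (bf:ℝ) := by
    intro i
    obtain ⟨a, h0, h1, h2⟩ := hwdig i
    rw [h2]
    exact ⟨by exact_mod_cast h0, by exact_mod_cast h1⟩
  have hdLdig : ∀ k, ∃ a b : ℤ, 0 ≤ a ∧ a ≤ bf ∧ 0 ≤ b ∧ b ≤ bf ∧ dL k = -(b:ℝ)*β + a := by
    intro k
    obtain ⟨⟨b, hb0, hb1, hb2⟩, ⟨a, ha0, ha1, ha2⟩⟩ := hdig k
    exact ⟨a, b, ha0, ha1, hb0, hb1, by rw [hdLk k, hb2, ha2]; ring⟩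
  have hdLb : ∀ k, -β*(bf:ℝ) ≤ dL k ∧ dL k ≤ (bf:ℝ) := by
    intro k
    obtain ⟨a, b, ha0, ha1, hb0, hb1, he⟩ := hdLdig k
    rw [he]
    have c1 : (0:ℝ) ≤ (a:ℝ) := by exact_mod_cast ha0
    have c2 : (a:ℝ) ≤ (bf:ℝ) := by exact_mod_cast ha1
    have c3 : (0:ℝ) ≤ (b:ℝ) := by exact_mod_cast hb0
    have c4 : (b:ℝ) ≤ (bf:ℝ) := by exact_mod_cast hb1
    constructor
    · nlinarith [mul_le_mul_of_nonneg_left c4 hβ0.le]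
    · nlinarith [mul_nonneg hβ0.le c3]
  -- summability helpers
  have hgeo : ∀ c q : ℝ, 0 ≤ q → q < 1 → Summable (fun k : ℕ => c * q^(k+1)) := by
    intro c q h0 h1
    have h := (summable_geometric_of_lt_one h0 h1).mul_left (c*q)
    exact h.congr (fun k => by ring)
  have hsummable : ∀ γ : ℝ, 1 < |γ| → ∀ (c : ℕ → ℝ) (C : ℝ), (∀ i, |c i| ≤ C) →
      Summable (fun i => c i / γ^(i+1)) := by
    intro γ hγ c C hc
    have hγ0 : (0:ℝ) < |γ| := by linarith
    refine Summable.of_norm_bounded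
      (hgeo C (|γ|⁻¹) (by positivity) (inv_lt_one_of_one_lt₀ hγ)) ?_
    intro i
    show ‖c i / γ^(i+1)‖ ≤ C * (|γ|⁻¹)^(i+1)
    rw [Real.norm_eq_abs, abs_div, abs_pow, inv_pow, ← div_eq_mul_inv]
    gcongr
    exact hc i
  have h2abs : 1 < |(β^2 : ℝ)| := by
    rw [abs_of_pos (by positivity)]
    nlinarith
  have hβa : 1 < |(-β : ℝ)| := by
    rw [abs_neg, abs_of_pos hβ0]
    exact hβ
  have hq2 : ((β^2 : ℝ))⁻¹ < 1 := inv_lt_one_of_one_lt₀ (by nlinarith)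
  have h2pos : ∀ n : ℕ, (0:ℝ) < (β^2)^n := fun n => by positivity
  -- partial sums for dL
  have hpart2 : ∀ n, x - ∑ i ∈ Finset.range n, dL i / (β^2)^(i+1) = Y n / (β^2)^n := by
    intro n
    induction n with
    | zero => simp [hY0]
    | succ n ih =>
      rw [Finset.sum_range_succ, sub_add_eq_sub_sub, ih, hdLrec n]
      field_simp
      ring
  -- bound constant
  set M : ℝ := |l| + |r| with hMdef
  have hM : ∀ v, l ≤ v → v ≤ r → |v| ≤ M := by
    intro v h1 h2
    rw [abs_le]
    constructor
    · nlinarith [neg_abs_le l, abs_nonneg r]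
    · nlinarith [le_abs_self r, abs_nonneg l]
  have hM0 : 0 ≤ M := by positivity
  -- tendsto for dL partial sums
  have hbound2 : ∀ n, ‖(∑ i ∈ Finset.range n, dL i/(β^2)^(i+1)) - x‖ ≤ M * ((β^2)⁻¹)^n := by
    intro n
    rw [Real.norm_eq_abs, abs_sub_comm, hpart2 n, abs_div, abs_of_pos (h2pos n), inv_pow,
      ← div_eq_mul_inv]
    gcongr
    exact hM _ (hYI n).1 (hYI n).2
  have hten2 : Filter.Tendsto (fun n => ∑ i ∈ Finset.range n, dL i/(β^2)^(i+1))
      Filter.atTop (nhds x) := by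
    have h0 : Filter.Tendsto (fun n : ℕ => M * ((β^2)⁻¹)^n) Filter.atTop (nhds 0) := by
      have := (tendsto_pow_atTop_nhds_zero_of_lt_one (by positivity) hq2).const_mul M
      simpa using this
    have h1 : Filter.Tendsto (fun n => (∑ i ∈ Finset.range n, dL i/(β^2)^(i+1)) - x)
        Filter.atTop (nhds 0) := squeeze_zero_norm hbound2 h0
    have h2 := h1.add (tendsto_const_nhds (x := x))
    simpa using h2
  have hsum2 : Summable (fun k => dL k / (β^2)^(k+1)) := by
    refine hsummable (β^2) h2abs dL (β*(bf:ℝ)) ?_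
    intro k
    rw [abs_le]
    refine ⟨by linarith [(hdLb k).1], ?_⟩
    nlinarith [(hdLb k).2]
  have hx2 : x = ∑' k : ℕ, dL k / (β ^ 2) ^ (k + 1) :=
    (((hsum2.hasSum_iff_tendsto_nat).mpr hten2).tsum_eq).symm
  -- power identities for -β
  have hpe : ∀ m : ℕ, ((-β):ℝ)^(2*m) = (β^2)^m := by
    intro m
    rw [pow_mul, neg_sq]
  have hpo : ∀ m : ℕ, ((-β):ℝ)^(2*m+1) = -((β^2)^m * β) := by
    intro m
    rw [pow_succ, hpe m]
    ring
  -- partial sums for w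
  have hpart1 : ∀ m, (x - ∑ i ∈ Finset.range (2*m), w i/(-β)^(i+1) = Y m / (β^2)^m) ∧
      (x - ∑ i ∈ Finset.range (2*m+1), w i/(-β)^(i+1) = -(Z m) / ((β^2)^m * β)) := by
    intro m
    induction m with
    | zero =>
      constructor
      · simp [hY0]
      · have hw0 : w 0 = Dm (Y 0) := by
          have := hwe 0
          norm_num at this
          exact this
        rw [show 2*0+1 = 1 by norm_num, Finset.sum_range_one, pow_one, hw0, hZk 0, hY0,
          pow_zero, one_mul, eq_div_iff hβne, sub_mul, div_mul_eq_mul_div, mul_div_assoc,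
          div_neg, div_self hβne]
        ring
    | succ m ih =>
      have he : x - ∑ i ∈ Finset.range (2*(m+1)), w i/(-β)^(i+1) = Y (m+1) / (β^2)^(m+1) := by
        rw [show 2*(m+1) = (2*m+1)+1 by ring, Finset.sum_range_succ, sub_add_eq_sub_sub,
          ih.2, show 2*m+1+1 = 2*(m+1) by ring, hpe (m+1), hrecTL m]
        field_simp
        ring
      refine ⟨he, ?_⟩
      rw [Finset.sum_range_succ, sub_add_eq_sub_sub, he, hpo (m+1), hrec1 (m+1)]
      field_simp
      ring
  have hbound1 : ∀ n, ‖(∑ i ∈ Finset.range n, w i/(-β)^(i+1)) - x‖ ≤ M * (β⁻¹)^n := by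
    intro n
    rw [Real.norm_eq_abs, abs_sub_comm]
    rcases Nat.even_or_odd n with ⟨m, hm⟩ | ⟨m, hm⟩
    · rw [show n = 2*m by omega, (hpart1 m).1, abs_div, abs_of_pos (h2pos m),
        show ((β^2 : ℝ))^m = β^(2*m) from (pow_mul β 2 m).symm, inv_pow, ← div_eq_mul_inv]
      gcongr
      exact hM _ (hYI m).1 (hYI m).2
    · rw [show n = 2*m+1 by omega, (hpart1 m).2, abs_div, abs_neg]
      have hd : |((β^2 : ℝ))^m * β| = β^(2*m+1) := by
        rw [abs_of_pos (by positivity), ← pow_mul, ← pow_succ]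
      rw [hd, inv_pow, ← div_eq_mul_inv]
      gcongr
      exact hM _ (hZI m).1 (hZI m).2
  have hten1 : Filter.Tendsto (fun n => ∑ i ∈ Finset.range n, w i/(-β)^(i+1))
      Filter.atTop (nhds x) := by
    have h0 : Filter.Tendsto (fun n : ℕ => M * (β⁻¹)^n) Filter.atTop (nhds 0) := by
      have := (tendsto_pow_atTop_nhds_zero_of_lt_one (by positivity) (inv_lt_one_of_one_lt₀ hβ)).const_mul M
      simpa using this
    have h1 := squeeze_zero_norm hbound1 h0
    have h2 := h1.add (tendsto_const_nhds (x := x))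
    simpa using h2
  have hsum1 : Summable (fun i => w i / (-β)^(i+1)) := by
    refine hsummable (-β) hβa w (bf:ℝ) ?_
    intro i
    rw [abs_of_nonneg (hwb i).1]
    exact (hwb i).2
  have hx1 : x = ∑' i : ℕ, w i / (-β) ^ (i + 1) :=
    (((hsum1.hasSum_iff_tendsto_nat).mpr hten1).tsum_eq).symm
  -- tail recurrence
  have htailrec : ∀ γ : ℝ, γ ≠ 0 → 1 < |γ| → ∀ (c : ℕ → ℝ) (C : ℝ), (∀ i, |c i| ≤ C) →
      ∀ j, (∑' m, c (j+1+m)/γ^(m+1)) = γ * (∑' m, c (j+m)/γ^(m+1)) - c j := by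
    intro γ hγ0 hγ c C hC j
    have hf : Summable (fun m => c (j+m)/γ^(m+1)) :=
      hsummable γ hγ _ C (fun i => hC _)
    have h1 : (∑' m, c (j+m)/γ^(m+1)) = c j/γ + (∑' m, c (j+1+m)/γ^(m+1)) * γ⁻¹ := by
      rw [Summable.tsum_eq_zero_add hf]
      congr 1
      · norm_num
      · rw [← tsum_mul_right]
        apply tsum_congr
        intro m
        rw [show j+(m+1) = j+1+m from by omega, pow_succ, div_mul_eq_div_div, div_eq_mul_inv]
    rw [h1]
    field_simp
    ring
  -- tail bounds over ℬ digits
  have htail2 : ∀ c : ℕ → ℝ, (∀ i, -β*(bf:ℝ) ≤ c i ∧ c i ≤ (bf:ℝ)) →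
      l ≤ (∑' m, c m/(β^2)^(m+1)) ∧ (∑' m, c m/(β^2)^(m+1)) ≤ r := by
    intro c hc
    have habs : ∀ i, |c i| ≤ β*(bf:ℝ) := by
      intro i
      rw [abs_le]
      refine ⟨by linarith [(hc i).1], ?_⟩
      nlinarith [(hc i).2]
    have hf : Summable (fun m => c m/(β^2)^(m+1)) := hsummable _ h2abs _ _ habs
    have hgu : Summable (fun m : ℕ => (bf:ℝ) * ((β^2)⁻¹)^(m+1)) :=
      hgeo _ _ (by positivity) hq2
    have hgl : Summable (fun m : ℕ => (-(β*(bf:ℝ))) * ((β^2)⁻¹)^(m+1)) :=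
      hgeo _ _ (by positivity) hq2
    have hgeoval : (∑' m : ℕ, ((β^2)⁻¹ : ℝ)^(m+1)) = (β^2 - 1)⁻¹ := by
      have h := tsum_geometric_of_lt_one (show (0:ℝ) ≤ (β^2)⁻¹ by positivity) hq2
      calc (∑' m : ℕ, ((β^2)⁻¹ : ℝ)^(m+1)) = ∑' m : ℕ, ((β^2)⁻¹ : ℝ)^m * (β^2)⁻¹ := by
            apply tsum_congr
            intro m
            rw [pow_succ]
        _ = (1 - (β^2)⁻¹)⁻¹ * (β^2)⁻¹ := by rw [tsum_mul_right, h]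
        _ = (β^2 - 1)⁻¹ := by
            rw [show (1 - (β^2)⁻¹ : ℝ) = (β^2 - 1)/β^2 from by field_simp, inv_div]
            field_simp
    have hU : (∑' m : ℕ, (bf:ℝ) * ((β^2)⁻¹)^(m+1)) = r := by
      rw [tsum_mul_left, hgeoval, hr, div_eq_mul_inv]
    have hL : (∑' m : ℕ, (-(β*(bf:ℝ))) * ((β^2)⁻¹)^(m+1)) = l := by
      rw [tsum_mul_left, hgeoval, hl]
      field_simp
    constructor
    · rw [← hL]
      refine Summable.tsum_le_tsum (fun m => ?_) hgl hf
      show (-(β*(bf:ℝ))) * ((β^2)⁻¹)^(m+1) ≤ c m/(β^2)^(m+1)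
      rw [inv_pow, ← div_eq_mul_inv]
      gcongr
      linarith [(hc m).1]
    · rw [← hU]
      refine Summable.tsum_le_tsum (fun m => ?_) hf hgu
      show c m/(β^2)^(m+1) ≤ (bf:ℝ) * ((β^2)⁻¹)^(m+1)
      rw [inv_pow, ← div_eq_mul_inv]
      gcongr
      exact (hc m).2
  -- pairing
  have hpair : ∀ c : ℕ → ℝ, (∀ i, |c i| ≤ (bf:ℝ)) →
      (∑' i, c i/(-β)^(i+1)) = ∑' m, (-β * c (2*m) + c (2*m+1))/(β^2)^(m+1) := by
    intro c hc
    have hf : Summable (fun i => c i/(-β)^(i+1)) := hsummable _ hβa _ _ hc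
    have he : Summable (fun m => c (2*m)/(-β)^(2*m+1)) := by
      have h := hf.comp_injective (i := fun m : ℕ => 2*m) (fun p q hpq => by simpa using hpq)
      exact h
    have ho : Summable (fun m => c (2*m+1)/(-β)^(2*m+1+1)) := by
      have h := hf.comp_injective (i := fun m : ℕ => 2*m+1) (fun p q hpq => by simpa using hpq)
      exact h
    have hkey := tsum_even_add_odd (f := fun i => c i/(-β)^(i+1)) he ho
    rw [← hkey, ← Summable.tsum_add he ho]
    apply tsum_congr
    intro m
    rw [hpo m, show 2*m+1+1 = 2*(m+1) from by ring, hpe (m+1)]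
    have h2 : ((β^2 : ℝ))^m ≠ 0 := by positivity
    field_simp
    ring
  -- tail bounds over 𝒜 digits
  have htail1 : ∀ c : ℕ → ℝ, (∀ i, 0 ≤ c i ∧ c i ≤ (bf:ℝ)) →
      l ≤ (∑' m, c m/(-β)^(m+1)) ∧ (∑' m, c m/(-β)^(m+1)) ≤ r := by
    intro c hc
    rw [hpair c (fun i => by rw [abs_of_nonneg (hc i).1]; exact (hc i).2)]
    refine htail2 _ (fun m => ⟨?_, ?_⟩)
    · nlinarith [(hc (2*m)).2, (hc (2*m+1)).1, mul_le_mul_of_nonneg_left (hc (2*m)).2 hβ0.le]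
    · nlinarith [(hc (2*m+1)).2, mul_nonneg hβ0.le (hc (2*m)).1]
  -- assemble
  refine ⟨⟨hdLdig, hx2, ?_⟩, hwdig, hx1, ?_⟩
  · -- lex minimality
    rintro w' ⟨hw'dig, hw'sum⟩
    by_cases hcase : w' = dL
    · exact Or.inl hcase
    right
    have hex : ∃ k, w' k ≠ dL k := by
      by_contra h
      push_neg at h
      exact hcase (funext h)
    have hk : w' (Nat.find hex) ≠ dL (Nat.find hex) := Nat.find_spec hex
    set k := Nat.find hex with hkdef
    have hbef : ∀ i < k, w' i = dL i := fun i hi => not_not.mp (Nat.find_min hex hi)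
    have hw'b : ∀ i, -β*(bf:ℝ) ≤ w' i ∧ w' i ≤ (bf:ℝ) := by
      intro i
      obtain ⟨a, b, ha0, ha1, hb0, hb1, he⟩ := hw'dig i
      have c1 : (0:ℝ) ≤ (a:ℝ) := by exact_mod_cast ha0
      have c2 : (a:ℝ) ≤ (bf:ℝ) := by exact_mod_cast ha1
      have c3 : (0:ℝ) ≤ (b:ℝ) := by exact_mod_cast hb0
      have c4 : (b:ℝ) ≤ (bf:ℝ) := by exact_mod_cast hb1
      rw [he]
      constructor
      · nlinarith [mul_le_mul_of_nonneg_left c4 hβ0.le]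
      · nlinarith [mul_nonneg hβ0.le c3]
    have hw'abs : ∀ i, |w' i| ≤ β*(bf:ℝ) := by
      intro i
      rw [abs_le]
      refine ⟨by linarith [(hw'b i).1], ?_⟩
      nlinarith [(hw'b i).2]
    have hTrec : ∀ j, (∑' m, w' (j+1+m)/(β^2)^(m+1))
        = β^2 * (∑' m, w' (j+m)/(β^2)^(m+1)) - w' j :=
      htailrec (β^2) (by positivity) h2abs w' _ hw'abs
    have hT0 : (∑' m, w' (0+m)/(β^2)^(m+1)) = x := by
      rw [hw'sum]
      apply tsum_congr
      intro m
      rw [Nat.zero_add]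
    have hTI : ∀ j, l ≤ (∑' m, w' (j+m)/(β^2)^(m+1)) ∧ (∑' m, w' (j+m)/(β^2)^(m+1)) ≤ r :=
      fun j => htail2 (fun m => w' (j+m)) (fun m => hw'b _)
    have hTY : ∀ j, j ≤ k → (∑' m, w' (j+m)/(β^2)^(m+1)) = Y j := by
      intro j
      induction j with
      | zero =>
        intro _
        rw [hY0]
        exact hT0
      | succ n ih =>
        intro hn
        rw [hTrec n, ih (by omega), hbef n (by omega), ← hdLrec n]
    have hadm : l ≤ β^2 * Y k - w' k ∧ β^2 * Y k - w' k ≤ r := by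
      have h1 := hTrec k
      rw [hTY k le_rfl] at h1
      rw [← h1]
      exact hTI (k+1)
    obtain ⟨a, b, ha0, ha1, hb0, hb1, he⟩ := hw'dig k
    have hmin := (step (Y k) (hYI k).1 (hYI k).2).2.2.2.2.2.2.2
    have hDLle : DL (Y k) ≤ -(b:ℝ)*β + a := by
      refine hmin b a hb0 hb1 ha0 ha1 ?_ ?_
      · rw [← he]; exact hadm.1
      · rw [← he]; exact hadm.2
    have hdLle : dL k ≤ w' k := by
      rw [he, hdL k, ← hYk k]
      exact hDLle
    exact ⟨k, fun i hi => (hbef i hi).symm, lt_of_le_of_ne hdLle (Ne.symm hk)⟩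
  · -- alt minimality
    rintro w' ⟨hw'dig, hw'sum⟩
    by_cases hcase : w' = w
    · exact Or.inl hcase
    right
    have hex : ∃ i, w' i ≠ w i := by
      by_contra h
      push_neg at h
      exact hcase (funext h)
    have hk : w' (Nat.find hex) ≠ w (Nat.find hex) := Nat.find_spec hex
    set i := Nat.find hex with hidef
    have hbef : ∀ j < i, w' j = w j := fun j hj => not_not.mp (Nat.find_min hex hj)
    have hw'b : ∀ j, 0 ≤ w' j ∧ w' j ≤ (bf:ℝ) := by
      intro j
      obtain ⟨a, h0, h1, h2⟩ := hw'dig j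
      rw [h2]
      exact ⟨by exact_mod_cast h0, by exact_mod_cast h1⟩
    have hw'abs : ∀ j, |w' j| ≤ (bf:ℝ) := by
      intro j
      rw [abs_of_nonneg (hw'b j).1]
      exact (hw'b j).2
    have hTrec : ∀ j, (∑' m, w' (j+1+m)/(-β)^(m+1))
        = -β * (∑' m, w' (j+m)/(-β)^(m+1)) - w' j :=
      htailrec (-β) (neg_ne_zero.mpr hβne) hβa w' _ hw'abs
    have hT0 : (∑' m, w' (0+m)/(-β)^(m+1)) = x := by
      rw [hw'sum]
      apply tsum_congr
      intro m
      rw [Nat.zero_add]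
    have hTI : ∀ j, l ≤ (∑' m, w' (j+m)/(-β)^(m+1)) ∧ (∑' m, w' (j+m)/(-β)^(m+1)) ≤ r :=
      fun j => htail1 (fun m => w' (j+m)) (fun m => hw'b _)
    have hTY : ∀ j, j ≤ i →
        (∀ m, 2*m = j → (∑' m', w' (j+m')/(-β)^(m'+1)) = Y m) ∧
        (∀ m, 2*m+1 = j → (∑' m', w' (j+m')/(-β)^(m'+1)) = Z m) := by
      intro j
      induction j with
      | zero =>
        intro _
        refine ⟨fun m hm => ?_, fun m hm => by omega⟩
        obtain rfl : m = 0 := by omega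
        rw [hY0]
        exact hT0
      | succ n ih =>
        intro hn
        have ihn := ih (by omega)
        constructor
        · intro m hm
          obtain rfl : n = 2*(m-1)+1 := by omega
          rw [hTrec (2*(m-1)+1), ihn.2 (m-1) rfl, hbef (2*(m-1)+1) (by omega),
            ← hrecTL (m-1), show m-1+1 = m from by omega]
        · intro m hm
          obtain rfl : n = 2*m := by omega
          rw [hTrec (2*m), ihn.1 m rfl, hbef (2*m) (by omega)]
          exact (hrec1 m).symm
    rcases Nat.even_or_odd i with ⟨m, hm⟩ | ⟨m, hm⟩
    · -- even position
      have him : 2*m = i := by omega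
      have hTi : (∑' m', w' (i+m')/(-β)^(m'+1)) = Y m := (hTY i le_rfl).1 m him
      have h1 := hTrec i
      rw [hTi] at h1
      have hadm : l ≤ -β * Y m - w' i ∧ -β * Y m - w' i ≤ r := by
        rw [← h1]
        exact hTI (i+1)
      obtain ⟨a, ha0, ha1, he⟩ := hw'dig i
      have hmax := (step (Y m) (hYI m).1 (hYI m).2).2.2.2.2.2.1
      have hle : w' i ≤ Dm (Y m) := by
        rw [he]
        refine hmax a ha0 ha1 ?_ ?_
        · rw [← he]; exact hadm.1
        · rw [← he]; exact hadm.2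
      have hwi : w i = Dm (Y m) := by
        rw [← him]
        exact hwe m
      have hlt : w' i < w i := lt_of_le_of_ne (by rw [hwi]; exact hle) hk
      refine ⟨i, fun j hj => (hbef j hj).symm, ?_⟩
      have hodd : Odd (i+1) := by
        rw [← him]
        exact ⟨m, by ring⟩
      rw [hodd.neg_one_pow]
      linarith
    · -- odd position
      have him : 2*m+1 = i := by omega
      have hTi : (∑' m', w' (i+m')/(-β)^(m'+1)) = Z m := (hTY i le_rfl).2 m him
      have h1 := hTrec i
      rw [hTi] at h1
      have hadm : l ≤ -β * Z m - w' i ∧ -β * Z m - w' i ≤ r := by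
        rw [← h1]
        exact hTI (i+1)
      rw [hZk m] at hadm
      obtain ⟨a, ha0, ha1, he⟩ := hw'dig i
      have hminv := (step (Y m) (hYI m).1 (hYI m).2).2.2.2.2.2.2.1
      have hle : Dm (Y m) = Dm (Y m) := rfl
      have hge : Dv (-β * Y m - Dm (Y m)) ≤ w' i := by
        rw [he]
        refine hminv a ha0 ha1 ?_ ?_
        · rw [← he]; exact hadm.1
        · rw [← he]; exact hadm.2
      have hwi : w i = Dv (-β * Y m - Dm (Y m)) := by
        rw [← him, hwo m, hZk m]
      have hlt : w i < w' i := lt_of_le_of_ne (by rw [hwi]; exact hge) (Ne.symm hk)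
      refine ⟨i, fun j hj => (hbef j hj).symm, ?_⟩
      have heven : Even (i+1) := by
        rw [← him]
        exact ⟨m+1, by ring⟩
      rw [heven.neg_one_pow]
      linarith
end

section
/- Let β > 1 with β ∉ ℕ. Let z₁z₂z₃z₄… be the greedy (−β)-representation of a number z ∈ I and let y₁y₂y₃y₄… be the lazy (−β)-representation of a number y ∈ I. Then y_i + z_i = ⌊β⌋ for every i ≥ 1 if and only if y + z = −⌊β⌋/(β+1). -/
lemma altLt_asymm {x y : ℕ → ℝ} (h1 : AltLt x y) (h2 : AltLt y x) : False := by
  obtain ⟨k1, ha1, hb1⟩ := h1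
  obtain ⟨k2, ha2, hb2⟩ := h2
  rcases lt_trichotomy k1 k2 with h | h | h
  · rw [ha2 k1 h] at hb1; exact lt_irrefl _ hb1
  · subst h; linarith
  · rw [ha1 k2 h] at hb2; exact lt_irrefl _ hb2

lemma altLt_flip (c : ℝ) {x y : ℕ → ℝ} (h : AltLt x y) :
    AltLt (fun i => c - y i) (fun i => c - x i) := by
  obtain ⟨k, ha, hb⟩ := h
  refine ⟨k, fun i hi => by simp only [ha i hi], ?_⟩
  simp only
  linarith [mul_sub ((-1:ℝ)^(k+1)) c (y k), mul_sub ((-1:ℝ)^(k+1)) c (x k)]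

lemma summable_aux_s9 (β : ℝ) (hβ : 1 < β) (c : ℝ) (s : ℕ → ℝ) (hs : ∀ i, |s i| ≤ c) :
    Summable (fun i : ℕ => s i / (-β) ^ (i + 1)) := by
  have hβ0 : (0:ℝ) < β := by linarith
  apply Summable.of_norm
  have hg : Summable (fun i : ℕ => c * (β⁻¹) ^ (i + 1)) := by
    apply Summable.mul_left
    have : Summable (fun i : ℕ => (β⁻¹) ^ i) :=
      summable_geometric_of_lt_one (by positivity) (inv_lt_one_of_one_lt₀ hβ)
    simpa [pow_succ'] using this.mul_left β⁻¹
  apply Summable.of_nonneg_of_le (fun i => norm_nonneg _) _ hg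
  intro i
  rw [norm_div, norm_pow, norm_neg, Real.norm_of_nonneg hβ0.le, Real.norm_eq_abs,
    div_eq_mul_inv, ← inv_pow]
  exact mul_le_mul_of_nonneg_right (hs i) (by positivity)

lemma tsum_const_aux (β : ℝ) (hβ : 1 < β) (c : ℝ) :
    ∑' i : ℕ, c / (-β) ^ (i + 1) = -c / (β + 1) := by
  have hβ0 : (0:ℝ) < β := by linarith
  have h1 : ‖(-β)⁻¹‖ < 1 := by
    rw [norm_inv, norm_neg, Real.norm_of_nonneg hβ0.le]
    exact inv_lt_one_of_one_lt₀ hβ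
  have h2 : ∑' i : ℕ, ((-β)⁻¹) ^ i = (1 - (-β)⁻¹)⁻¹ := tsum_geometric_of_norm_lt_one h1
  have h3 : ∀ i : ℕ, c / (-β) ^ (i+1) = (c * (-β)⁻¹) * ((-β)⁻¹) ^ i := by
    intro i; rw [div_eq_mul_inv, ← inv_pow, pow_succ']; ring
  rw [tsum_congr h3, tsum_mul_left, h2]
  have hne : β ≠ 0 := ne_of_gt hβ0
  have hne1 : β + 1 ≠ 0 := by positivity
  have hden : 1 - (-β)⁻¹ ≠ 0 := by
    rw [inv_neg]
    intro h
    have : β⁻¹ = -1 := by linarith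
    have : β⁻¹ > 0 := by positivity
    linarith
  rw [show 1 - (-β)⁻¹ = (β + 1) / β by rw [inv_neg]; field_simp; ring, inv_div, inv_neg]
  field_simp

theorem stmt9 (β : ℝ) (hβ : 1 < β) (hni : ∀ n : ℕ, β ≠ n)
    (l r : ℝ) (hl : l = -β * (⌊β⌋ : ℝ) / (β ^ 2 - 1)) (hr : r = (⌊β⌋ : ℝ) / (β ^ 2 - 1))
    (Rep : ℝ → (ℕ → ℝ) → Prop)
    (hRep : ∀ t s, Rep t s ↔
      ((∀ i, ∃ a : ℤ, 0 ≤ a ∧ a ≤ ⌊β⌋ ∧ s i = (a : ℝ)) ∧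
        t = ∑' i : ℕ, s i / (-β) ^ (i + 1)))
    (z y : ℝ) (hz : z ∈ Set.Icc l r) (hy : y ∈ Set.Icc l r)
    (zs ys : ℕ → ℝ)
    (hzs : Rep z zs) (hzmax : ∀ w, Rep z w → w ≠ zs → AltLt w zs)
    (hys : Rep y ys) (hymin : ∀ w, Rep y w → w ≠ ys → AltLt ys w) :
    (∀ i, ys i + zs i = (⌊β⌋ : ℝ)) ↔ y + z = -(⌊β⌋ : ℝ) / (β + 1) := by
  have hβ0 : (0:ℝ) < β := by linarith
  set c : ℝ := (⌊β⌋ : ℝ) with hc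
  have hfl : (1:ℤ) ≤ ⌊β⌋ := by
    rw [Int.le_floor]; exact_mod_cast hβ.le
  have hfl0 : (0:ℤ) ≤ ⌊β⌋ := by linarith
  have hc0 : (0:ℝ) ≤ c := by rw [hc]; exact_mod_cast hfl0
  -- digit bounds
  have digit_bound : ∀ s : ℕ → ℝ, (∀ i, ∃ a : ℤ, 0 ≤ a ∧ a ≤ ⌊β⌋ ∧ s i = (a : ℝ)) →
      ∀ i, 0 ≤ s i ∧ s i ≤ c := by
    intro s hdig i
    obtain ⟨a, ha0, ha1, ha2⟩ := hdig i
    constructor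
    · rw [ha2]; exact_mod_cast ha0
    · rw [ha2, hc]; exact_mod_cast ha1
  obtain ⟨hzd, hzsum⟩ := (hRep z zs).mp hzs
  obtain ⟨hyd, hysum⟩ := (hRep y ys).mp hys
  have habs : ∀ s : ℕ → ℝ, (∀ i, ∃ a : ℤ, 0 ≤ a ∧ a ≤ ⌊β⌋ ∧ s i = (a : ℝ)) →
      ∀ i, |s i| ≤ c := by
    intro s hdig i
    obtain ⟨h0, h1⟩ := digit_bound s hdig i
    rw [abs_of_nonneg h0]; exact h1
  have hzS : Summable (fun i : ℕ => zs i / (-β) ^ (i + 1)) :=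
    summable_aux_s9 β hβ c zs (habs zs hzd)
  have hyS : Summable (fun i : ℕ => ys i / (-β) ^ (i + 1)) :=
    summable_aux_s9 β hβ c ys (habs ys hyd)
  have hcS : Summable (fun i : ℕ => c / (-β) ^ (i + 1)) :=
    summable_aux_s9 β hβ c (fun _ => c) (fun i => by rw [abs_of_nonneg hc0])
  have hgeom : ∑' i : ℕ, c / (-β) ^ (i + 1) = -c / (β + 1) := tsum_const_aux β hβ c
  constructor
  · intro h
    rw [hysum, hzsum, ← Summable.tsum_add hyS hzS]
    rw [← hgeom]
    apply tsum_congr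
    intro i
    rw [← add_div, h i]
  · intro h
    -- complementary sequence of zs represents y
    have hw : Rep y (fun i => c - zs i) := by
      rw [hRep]
      constructor
      · intro i
        obtain ⟨a, ha0, ha1, ha2⟩ := hzd i
        exact ⟨⌊β⌋ - a, by omega, by omega, by push_cast [ha2, hc]; ring⟩
      · have : ∑' i : ℕ, (c - zs i) / (-β) ^ (i + 1)
            = ∑' i : ℕ, (c / (-β) ^ (i + 1) - zs i / (-β) ^ (i + 1)) := by
          apply tsum_congr; intro i; rw [div_sub_div_same]
        rw [this, Summable.tsum_sub hcS hzS, hgeom, ← hzsum]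
        linarith
    by_cases hwe : (fun i => c - zs i) = ys
    · intro i
      have := congrFun hwe i
      linarith
    · exfalso
      have h1 : AltLt ys (fun i => c - zs i) := hymin _ hw hwe
      have h2 : AltLt (fun i => c - (c - zs i)) (fun i => c - ys i) := altLt_flip c h1
      have h2' : AltLt zs (fun i => c - ys i) := by
        have he : (fun i => c - (c - zs i)) = zs := by funext i; ring
        rwa [he] at h2
      -- complementary sequence of ys represents z
      have hv : Rep z (fun i => c - ys i) := by
        rw [hRep]
        constructor
        · intro i
          obtain ⟨a, ha0, ha1, ha2⟩ := hyd i
          exact ⟨⌊β⌋ - a, by omega, by omega, by push_cast [ha2, hc]; ring⟩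
        · have : ∑' i : ℕ, (c - ys i) / (-β) ^ (i + 1)
              = ∑' i : ℕ, (c / (-β) ^ (i + 1) - ys i / (-β) ^ (i + 1)) := by
            apply tsum_congr; intro i; rw [div_sub_div_same]
          rw [this, Summable.tsum_sub hcS hyS, hgeom, ← hysum]
          linarith
      by_cases hve : (fun i => c - ys i) = zs
      · apply hwe
        funext i
        have := congrFun hve i
        linarith
      · exact altLt_asymm h2' (hzmax _ hv hve)
end

section
/- Let β > 1 with β ∉ ℕ. Then: (a) for every x ∈ [l, l+1), every digit of d_G(x) belongs to 𝒜_G; (b) every element of 𝒜_G occurs as a digit of d_G(x) for some x ∈ [l, l+1) (so 𝒜_G is the minimal such alphabet); and (c) for every x ∈ I ∖ {r} there exists N ∈ ℕ such that D_G(T_G^{k}(x)) ∈ 𝒜_G for all k ≥ N. -/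
theorem stmt10 (β : ℝ) (hβ : 1 < β) (hni : ∀ n : ℕ, β ≠ n)
    (l r : ℝ) (hl : l = -β * (⌊β⌋ : ℝ) / (β ^ 2 - 1)) (hr : r = (⌊β⌋ : ℝ) / (β ^ 2 - 1))
    (Ia : ℤ → Set ℝ)
    (hIa : ∀ a : ℤ, Ia a = Set.Icc (l + ((⌊β⌋ : ℝ) - a) / β) (r - a / β))
    (Dm Dv : ℝ → ℝ)
    (hDmTop : ∀ x ∈ Ia ⌊β⌋, Dm x = (⌊β⌋ : ℝ))
    (hDm : ∀ a : ℤ, 0 ≤ a → a < ⌊β⌋ → ∀ x ∈ Ia a \ Ia (a + 1), Dm x = (a : ℝ))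
    (hDv0 : ∀ x ∈ Ia 0, Dv x = 0)
    (hDv : ∀ a : ℤ, 1 ≤ a → a ≤ ⌊β⌋ → ∀ x ∈ Ia a \ Ia (a - 1), Dv x = (a : ℝ))
    (DG TG : ℝ → ℝ)
    (hDG : ∀ x, DG x = -β * Dv x + Dm (-β * x - Dv x))
    (hTG : ∀ x, TG x = β ^ 2 * x - DG x)
    (AG : Set ℝ)
    (hAG : AG =
      {X : ℝ | ∃ a b : ℤ, 0 ≤ a ∧ a ≤ ⌊β⌋ ∧ 1 ≤ b ∧ b ≤ ⌊β⌋ ∧ X = -(b : ℝ) * β + a} ∪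
      {X : ℝ | ∃ a : ℤ, 0 ≤ a ∧ a ≤ ⌊β⌋ ∧ (a : ℝ) < β * (β - ⌊β⌋) ∧ X = (a : ℝ)}) :
    -- (a) all digits of d_G(x) for x ∈ [l, l+1) lie in 𝒜_G
    (∀ x ∈ Set.Ico l (l + 1), ∀ k : ℕ, DG (TG^[k] x) ∈ AG) ∧
    -- (b) every element of 𝒜_G occurs as some digit (minimality of 𝒜_G)
    (∀ X ∈ AG, ∃ x ∈ Set.Ico l (l + 1), ∃ k : ℕ, DG (TG^[k] x) = X) ∧
    -- (c) for every x ∈ I ∖ {r}, the digits of d_G(x) eventually lie in 𝒜_G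
    (∀ x ∈ Set.Icc l r, x ≠ r → ∃ N : ℕ, ∀ k ≥ N, DG (TG^[k] x) ∈ AG) := by
  have hβ0 : (0:ℝ) < β := by linarith
  have hF1 : (1:ℤ) ≤ ⌊β⌋ := Int.le_floor.mpr (by exact_mod_cast hβ.le)
  have hF1' : (1:ℝ) ≤ (⌊β⌋:ℝ) := by exact_mod_cast hF1
  have hFle : ((⌊β⌋:ℝ)) ≤ β := Int.floor_le β
  have hFβ : ((⌊β⌋:ℝ)) < β := by
    rcases lt_or_eq_of_le hFle with h | h
    · exact h
    · exfalso
      apply hni (⌊β⌋).toNat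
      have h2 : ((⌊β⌋.toNat : ℤ) : ℝ) = ((⌊β⌋ : ℤ) : ℝ) := by
        congr 1
        exact Int.toNat_of_nonneg (by omega)
      push_cast at h2 ⊢
      rw [← h] at *
      linarith [h2]
  have hβF1 : β < (⌊β⌋:ℝ) + 1 := Int.lt_floor_add_one β
  have hd : (0:ℝ) < β^2 - 1 := by nlinarith
  have e1 : β * l = -(⌊β⌋:ℝ) - r := by
    rw [hl, hr]; field_simp; ring
  have e2 : β * r = -l := by
    rw [hl, hr]; field_simp
  have e3 : 1 < r - l := by
    have h : r - l = ((⌊β⌋:ℝ) + β*⌊β⌋)/(β^2-1) := by rw [hl, hr]; field_simp; ring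
    rw [h, lt_div_iff₀ hd]; nlinarith
  have hmem : ∀ (a : ℤ) (x : ℝ), x ∈ Ia a ↔
      ((⌊β⌋:ℝ) - a ≤ β*(x - l) ∧ (a:ℝ) ≤ β*(r - x)) := by
    intro a x
    rw [hIa a, Set.mem_Icc]
    constructor
    · rintro ⟨h1, h2⟩
      constructor
      · have h1' : ((⌊β⌋:ℝ) - a) / β ≤ x - l := by linarith
        have := (div_le_iff₀ hβ0).mp h1'
        linarith
      · have h2' : (a:ℝ)/β ≤ r - x := by linarith
        have := (div_le_iff₀ hβ0).mp h2'
        linarith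
    · rintro ⟨h1, h2⟩
      constructor
      · have : ((⌊β⌋:ℝ) - a)/β ≤ x - l := (div_le_iff₀ hβ0).mpr (by linarith)
        linarith
      · have : (a:ℝ)/β ≤ r - x := (div_le_iff₀ hβ0).mpr (by linarith)
        linarith
  have lemA : ∀ x, l ≤ x → x ≤ r → ∃ b : ℤ, 0 ≤ b ∧ b ≤ ⌊β⌋ ∧ Dv x = (b:ℝ) ∧
      l ≤ -β*x - b ∧ -β*x - b ≤ r ∧ (1 ≤ b → r - 1 < -β*x - b) ∧
      (b = 0 → (⌊β⌋:ℝ) ≤ β*(x - l)) := by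
    intro x hxl hxr
    have hxe : β*(x-l) = β*x - β*l := by ring
    have hre : β*(r-x) = β*r - β*x := by ring
    by_cases hx : (⌊β⌋:ℝ) ≤ β*(x - l)
    · have hm0 : x ∈ Ia 0 := by
        rw [hmem]
        constructor
        · push_cast; linarith
        · push_cast
          exact mul_nonneg hβ0.le (by linarith)
      have h0 : Dv x = 0 := hDv0 x hm0
      refine ⟨0, le_refl 0, by omega, ?_, ?_, ?_, ?_, fun _ => hx⟩
      · rw [h0]; norm_num
      · push_cast
        have := mul_le_mul_of_nonneg_left hxr hβ0.le
        linarith [e2]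
      · push_cast
        linarith [e1]
      · intro h; exfalso; omega
    · push_neg at hx
      have hn1 : ((⌊β*(x-l)⌋:ℤ):ℝ) ≤ β*(x-l) := Int.floor_le _
      have hn2 : β*(x-l) < (⌊β*(x-l)⌋:ℤ) + 1 := Int.lt_floor_add_one _
      have hn0 : 0 ≤ ⌊β*(x-l)⌋ := Int.floor_nonneg.mpr (mul_nonneg hβ0.le (by linarith))
      have hnF : ⌊β*(x-l)⌋ < ⌊β⌋ := Int.floor_lt.mpr (by push_cast; linarith)
      have hdvx : Dv x = ((⌊β⌋ - ⌊β*(x-l)⌋ : ℤ) : ℝ) := by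
        apply hDv (⌊β⌋ - ⌊β*(x-l)⌋) (by omega) (by omega) x
        constructor
        · rw [hmem]
          constructor
          · push_cast; linarith
          · have h5 : β*(r-x) = β*(r-l) - β*(x-l) := by ring
            have h6 : β*(r-l) = β*r - β*l := by ring
            push_cast
            linarith [e1, e2, e3]
        · rw [hmem]
          rintro ⟨h1, -⟩
          push_cast at h1
          linarith
      refine ⟨⌊β⌋ - ⌊β*(x-l)⌋, by omega, by omega, hdvx, ?_, ?_, ?_, ?_⟩
      · push_cast; linarith [e1, e3]
      · push_cast; linarith [e1]
      · intro _; push_cast; linarith [e1]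
      · intro h; exfalso; omega
  have lemB : ∀ y, l ≤ y → y ≤ r → ∃ a : ℤ, 0 ≤ a ∧ a ≤ ⌊β⌋ ∧ Dm y = (a:ℝ) ∧
      l ≤ -β*y - a ∧ -β*y - a ≤ r ∧ (a < ⌊β⌋ → -β*y - a < l + 1) ∧
      (r - 1 < y → -β*y - a < l + 1) ∧
      (r - (β - ⌊β⌋) < y → (a:ℝ) < β*(β - ⌊β⌋)) := by
    intro y hyl hyr
    have hyd : β*(r-y) = β*r - β*y := by ring
    by_cases hy : (⌊β⌋:ℝ) ≤ β*(r - y)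
    · have hm : y ∈ Ia ⌊β⌋ := by
        rw [hmem]
        constructor
        · have : (⌊β⌋:ℝ) - (⌊β⌋:ℝ) = 0 := by ring
          rw [this]
          exact mul_nonneg hβ0.le (by linarith)
        · exact hy
      have hdmy : Dm y = ((⌊β⌋:ℤ):ℝ) := hDmTop y hm
      refine ⟨⌊β⌋, by omega, le_refl _, hdmy, ?_, ?_, ?_, ?_, ?_⟩
      · linarith [e2]
      · linarith [mul_le_mul_of_nonneg_left hyl hβ0.le, e1]
      · intro h; exact absurd h (lt_irrefl _)
      · intro h
        have h5 := mul_lt_mul_of_pos_left h hβ0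
        have h6 : β*(r-1) = β*r - β := by ring
        linarith [e2, hβF1]
      · intro h
        have h6 : r - y < β - (⌊β⌋:ℝ) := by linarith
        have h7 := mul_lt_mul_of_pos_left h6 hβ0
        linarith [hy]
    · push_neg at hy
      have ha1 : ((⌊β*(r-y)⌋:ℤ):ℝ) ≤ β*(r-y) := Int.floor_le _
      have ha2 : β*(r-y) < (⌊β*(r-y)⌋:ℤ) + 1 := Int.lt_floor_add_one _
      have ha0 : 0 ≤ ⌊β*(r-y)⌋ := Int.floor_nonneg.mpr (mul_nonneg hβ0.le (by linarith))
      have haF : ⌊β*(r-y)⌋ < ⌊β⌋ := Int.floor_lt.mpr (by push_cast; linarith)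
      have hdmy : Dm y = ((⌊β*(r-y)⌋:ℤ):ℝ) := by
        apply hDm _ ha0 haF y
        constructor
        · rw [hmem]
          constructor
          · have h5 : β*(y-l) = β*(r-l) - β*(r-y) := by ring
            have h6 : β*(r-l) = β*r - β*l := by ring
            linarith [e1, e2, e3, ha2]
          · exact ha1
        · rw [hmem]
          rintro ⟨-, h2⟩
          push_cast at h2
          linarith
      refine ⟨⌊β*(r-y)⌋, ha0, by omega, hdmy, ?_, ?_, ?_, ?_, ?_⟩
      · linarith [e2, ha1]
      · linarith [e2, ha2, e3]
      · intro _; linarith [e2, ha2]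
      · intro _; linarith [e2, ha2]
      · intro h
        have h7 := mul_lt_mul_of_pos_left (show r - y < β - (⌊β⌋:ℝ) by linarith) hβ0
        linarith [ha1]
  have hl1r : l + 1 < r := by linarith [e3]
  have stepA : ∀ x, l ≤ x → x < l + 1 → (DG x ∈ AG ∧ l ≤ TG x ∧ TG x < l + 1) := by
    intro x hx1 hx2
    obtain ⟨b, hb0, hbF, hdv, hy1, hy2, hyb, hb0'⟩ := lemA x hx1 (by linarith)
    obtain ⟨a, ha0, haF, hdm, hz1, hz2, hC2, hC3, hC4⟩ := lemB (-β*x - b) hy1 hy2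
    have hDGx : DG x = -β*(b:ℝ) + (a:ℝ) := by rw [hDG x, hdv, hdm]
    have hTGx : TG x = -β*(-β*x - b) - a := by rw [hTG x, hDGx]; ring
    have hybig : r - 1 < -β*x - b := by
      rcases eq_or_lt_of_le hb0 with h | h
      · have hge := hb0' h.symm
        have h5 := mul_lt_mul_of_pos_left hx2 hβ0
        have h6 : β*(l+1) = β*l + β := by ring
        have hb00 : ((b:ℤ):ℝ) = 0 := by rw [← h]; norm_num
        linarith [e1, hβF1]
      · exact hyb h
    refine ⟨?_, by rw [hTGx]; exact hz1, by rw [hTGx]; exact hC3 hybig⟩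
    rw [hAG]
    simp only [Set.mem_union, Set.mem_setOf_eq]
    rcases eq_or_lt_of_le hb0 with h | h
    · have hb00 : ((b:ℤ):ℝ) = 0 := by rw [← h]; norm_num
      have hyy : r - (β - (⌊β⌋:ℝ)) < -β*x - b := by
        have h5 := mul_lt_mul_of_pos_left hx2 hβ0
        have h6 : β*(l+1) = β*l + β := by ring
        linarith [e1, hb00]
      exact Or.inr ⟨a, ha0, haF, hC4 hyy, by rw [hDGx, hb00]; ring⟩
    · exact Or.inl ⟨a, b, ha0, haF, h, hbF, by rw [hDGx]; ring⟩
  have stepC : ∀ x, l ≤ x → x ≤ r →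
      (l ≤ TG x ∧ TG x ≤ r) ∧ (l + 1 ≤ TG x → TG x = β^2*x - ⌊β⌋) := by
    intro x hx1 hx2
    obtain ⟨b, hb0, hbF, hdv, hy1, hy2, hyb, hb0'⟩ := lemA x hx1 hx2
    obtain ⟨a, ha0, haF, hdm, hz1, hz2, hC2, hC3, hC4⟩ := lemB (-β*x - b) hy1 hy2
    have hDGx : DG x = -β*(b:ℝ) + (a:ℝ) := by rw [hDG x, hdv, hdm]
    have hTGx : TG x = -β*(-β*x - b) - a := by rw [hTG x, hDGx]; ring
    refine ⟨⟨by rw [hTGx]; exact hz1, by rw [hTGx]; exact hz2⟩, ?_⟩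
    intro hbig
    rw [hTGx] at hbig
    have hyle : ¬ (r - 1 < -β*x - b) := fun hc => absurd (hC3 hc) (by linarith)
    have hbz : b = 0 := by
      rcases eq_or_lt_of_le hb0 with h | h
      · exact h.symm
      · exact absurd (hyb h) hyle
    have haz : a = ⌊β⌋ := by
      by_contra hne2
      exact absurd (hC2 (lt_of_le_of_ne haF hne2)) (by linarith)
    rw [hTG x, hDGx, hbz, haz]
    push_cast
    ring
  have e4 : β^2*r - (⌊β⌋:ℝ) = r := by linear_combination β * e2 - e1
  refine ⟨?_, ?_, ?_⟩
  · -- part (a)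
    rintro x ⟨hx1, hx2⟩ k
    have key : ∀ k : ℕ, l ≤ TG^[k] x ∧ TG^[k] x < l + 1 := by
      intro k
      induction k with
      | zero => exact ⟨hx1, hx2⟩
      | succ n ih =>
        rw [Function.iterate_succ_apply']
        exact (stepA _ ih.1 ih.2).2
    exact (stepA _ (key k).1 (key k).2).1
  · -- part (b)
    intro X hX
    rw [hAG] at hX
    simp only [Set.mem_union, Set.mem_setOf_eq] at hX
    rcases hX with ⟨a, b, ha0, haF, hb1, hbF, hXe⟩ | ⟨a, ha0, haF, haβ, hXe⟩
    · -- X = -bβ + a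
      set y : ℝ := r - (a:ℝ)/β with hy_def
      have haR : (a:ℝ) ≤ (⌊β⌋:ℝ) := by exact_mod_cast haF
      have ha0R : (0:ℝ) ≤ (a:ℝ) := by exact_mod_cast ha0
      have hb1R : (1:ℝ) ≤ (b:ℝ) := by exact_mod_cast hb1
      have hbFR : (b:ℝ) ≤ (⌊β⌋:ℝ) := by exact_mod_cast hbF
      have hq : (a:ℝ)/β < 1 := (div_lt_one hβ0).mpr (lt_of_le_of_lt haR hFβ)
      have hq0 : 0 ≤ (a:ℝ)/β := div_nonneg ha0R hβ0.le
      have hβy : β*(r - y) = (a:ℝ) := by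
        rw [hy_def]
        field_simp
        ring
      have hyr : y ≤ r := by rw [hy_def]; linarith
      have hyl : l < y := by rw [hy_def]; linarith
      have hdmy : Dm y = (a:ℝ) := by
        rcases eq_or_lt_of_le haF with hq2 | hq2
        · rw [hq2]
          apply hDmTop y
          rw [hmem]
          constructor
          · have h5 : (⌊β⌋:ℝ) - (⌊β⌋:ℝ) = 0 := by ring
            rw [h5]
            exact mul_nonneg hβ0.le (by linarith)
          · rw [hβy, ← hq2]
        · apply hDm a ha0 hq2 y
          constructor
          · rw [hmem]
            refine ⟨?_, by rw [hβy]⟩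
            have h5 : β*(y-l) = β*(r-l) - β*(r-y) := by ring
            have h6 : β*(r-l) = β*r - β*l := by ring
            rw [h5, h6, hβy]
            linarith [e1, e2, e3]
          · rw [hmem]
            rintro ⟨-, h2⟩
            rw [hβy] at h2
            push_cast at h2
            linarith
      set x : ℝ := -(y + b)/β with hx_def
      have hβx : β*x = -y - b := by rw [hx_def]; field_simp; ring
      have h7 : β*(x - l) = (⌊β⌋:ℝ) + r - y - b := by
        have : β*(x-l) = β*x - β*l := by ring
        rw [this, hβx, e1]; ring
      have h8 : β*(r - x) = y + (b:ℝ) - l := by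
        have : β*(r-x) = β*r - β*x := by ring
        rw [this, hβx, e2]; ring
      have hdvx : Dv x = (b:ℝ) := by
        apply hDv b hb1 hbF x
        constructor
        · rw [hmem]
          constructor
          · rw [h7]; linarith
          · rw [h8]; linarith
        · rw [hmem]
          rintro ⟨h1, -⟩
          rw [h7] at h1
          push_cast at h1
          have hry : (1:ℝ) ≤ r - y := by linarith
          rw [hy_def] at hry
          have : r - (r - (a:ℝ)/β) = (a:ℝ)/β := by ring
          linarith
      have hxmem : x ∈ Set.Ico l (l+1) := by
        constructor
        · have h10 : β*l ≤ β*x := by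
            have hexp : β*(x-l) = β*x - β*l := by ring
            have h11 : 0 ≤ β*(x-l) := by rw [h7]; linarith
            linarith
          exact (mul_le_mul_iff_right₀ hβ0).mp h10
        · have h10 : β*x < β*(l+1) := by
            have hexp1 : β*(x-l) = β*x - β*l := by ring
            have hexp2 : β*(l+1) = β*l + β := by ring
            have h11 : β*(x-l) < β := by
              rw [h7, hy_def]
              linarith
            linarith
          exact (mul_lt_mul_iff_right₀ hβ0).mp h10
      refine ⟨x, hxmem, 0, ?_⟩
      rw [Function.iterate_zero_apply, hDG x, hdvx]
      have h9 : -β*x - (b:ℝ) = y := by linarith [hβx]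
      rw [h9, hdmy, hXe]
      ring
    · -- X = a with a < β(β - ⌊β⌋)
      set y : ℝ := r - (a:ℝ)/β with hy_def
      have haR : (a:ℝ) ≤ (⌊β⌋:ℝ) := by exact_mod_cast haF
      have ha0R : (0:ℝ) ≤ (a:ℝ) := by exact_mod_cast ha0
      have hq : (a:ℝ)/β < 1 := (div_lt_one hβ0).mpr (lt_of_le_of_lt haR hFβ)
      have hq0 : 0 ≤ (a:ℝ)/β := div_nonneg ha0R hβ0.le
      have hβy : β*(r - y) = (a:ℝ) := by
        rw [hy_def]
        field_simp
        ring
      have hyr : y ≤ r := by rw [hy_def]; linarith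
      have hyl : l < y := by rw [hy_def]; linarith
      have hdmy : Dm y = (a:ℝ) := by
        rcases eq_or_lt_of_le haF with hq2 | hq2
        · rw [hq2]
          apply hDmTop y
          rw [hmem]
          constructor
          · have h5 : (⌊β⌋:ℝ) - (⌊β⌋:ℝ) = 0 := by ring
            rw [h5]
            exact mul_nonneg hβ0.le (by linarith)
          · rw [hβy, ← hq2]
        · apply hDm a ha0 hq2 y
          constructor
          · rw [hmem]
            refine ⟨?_, by rw [hβy]⟩
            have h5 : β*(y-l) = β*(r-l) - β*(r-y) := by ring
            have h6 : β*(r-l) = β*r - β*l := by ring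
            rw [h5, h6, hβy]
            linarith [e1, e2, e3]
          · rw [hmem]
            rintro ⟨-, h2⟩
            rw [hβy] at h2
            push_cast at h2
            linarith
      set x : ℝ := -y/β with hx_def
      have hβx : β*x = -y := by
        rw [hx_def]
        field_simp
      have h7 : β*(x - l) = (⌊β⌋:ℝ) + r - y := by
        have : β*(x-l) = β*x - β*l := by ring
        rw [this, hβx, e1]; ring
      have h8 : β*(r - x) = y - l := by
        have : β*(r-x) = β*r - β*x := by ring
        rw [this, hβx, e2]; ring
      have hdvx : Dv x = 0 := by
        apply hDv0 x
        rw [hmem]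
        constructor
        · push_cast
          rw [h7, hy_def]
          linarith
        · push_cast
          rw [h8]
          linarith
      have haq : (a:ℝ)/β < β - (⌊β⌋:ℝ) := by
        rw [div_lt_iff₀ hβ0]
        nlinarith [haβ]
      have hxmem : x ∈ Set.Ico l (l+1) := by
        constructor
        · have h10 : β*l ≤ β*x := by
            have hexp : β*(x-l) = β*x - β*l := by ring
            have h11 : 0 ≤ β*(x-l) := by rw [h7]; linarith
            linarith
          exact (mul_le_mul_iff_right₀ hβ0).mp h10
        · have h10 : β*x < β*(l+1) := by
            have hexp1 : β*(x-l) = β*x - β*l := by ring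
            have hexp2 : β*(l+1) = β*l + β := by ring
            have h11 : β*(x-l) < β := by
              rw [h7, hy_def]
              linarith
            linarith
          exact (mul_lt_mul_iff_right₀ hβ0).mp h10
      refine ⟨x, hxmem, 0, ?_⟩
      rw [Function.iterate_zero_apply, hDG x, hdvx]
      have h9 : -β*x - (0:ℝ) = y := by linarith [hβx]
      rw [h9, hdmy, hXe]
      ring
  · -- part (c)
    rintro x ⟨hxl, hxr⟩ hne
    have horb : ∀ n : ℕ, l ≤ TG^[n] x ∧ TG^[n] x ≤ r := by
      intro n
      induction n with
      | zero => exact ⟨hxl, hxr⟩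
      | succ n ih =>
        rw [Function.iterate_succ_apply']
        exact (stepC _ ih.1 ih.2).1
    have hev : ∃ N : ℕ, TG^[N] x < l + 1 := by
      by_contra hcon
      push_neg at hcon
      have hstep : ∀ n : ℕ, r - TG^[n] x = (β^2)^n * (r - x) := by
        intro n
        induction n with
        | zero => simp
        | succ n ih =>
          have h2 : TG (TG^[n] x) = β^2 * TG^[n] x - ⌊β⌋ := by
            apply (stepC _ (horb n).1 (horb n).2).2
            have h3 := hcon (n+1)
            rw [Function.iterate_succ_apply'] at h3
            exact h3
          rw [Function.iterate_succ_apply', h2, pow_succ]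
          linear_combination β^2 * ih - e4
      have hrx : 0 < r - x := sub_pos.mpr (lt_of_le_of_ne hxr hne)
      obtain ⟨n, hn⟩ := pow_unbounded_of_one_lt ((r - l)/(r - x)) (show (1:ℝ) < β^2 by nlinarith)
      rw [div_lt_iff₀ hrx] at hn
      have h1 := hstep n
      have h2 : r - TG^[n] x ≤ r - l := by linarith [(horb n).1]
      linarith
    obtain ⟨N, hN⟩ := hev
    have hinv : ∀ m : ℕ, l ≤ TG^[N + m] x ∧ TG^[N + m] x < l + 1 := by
      intro m
      induction m with
      | zero => exact ⟨(horb N).1, hN⟩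
      | succ m ih =>
        rw [show N + (m+1) = (N + m) + 1 from rfl, Function.iterate_succ_apply']
        exact (stepA _ ih.1 ih.2).2
    refine ⟨N, fun k hk => ?_⟩
    have h := hinv (k - N)
    rw [show N + (k - N) = k from by omega] at h
    exact (stepA _ h.1 h.2).1
end

section
/- Let β > 1 with β ∉ ℕ and write m = ⌊β⌋. Then 𝒜_G = ℬ if and only if β² − mβ − m > 0, i.e., if and only if β > (m + √(m² + 4m))/2; equivalently, 𝒜_G = ℬ holds precisely for β ∈ ⋃_{m∈ℕ, m≥1} ((m + √(m² + 4m))/2, m + 1). -/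
theorem stmt11 (β : ℝ) (hβ : 1 < β) (hni : ∀ n : ℕ, β ≠ n)
    (B AG : Set ℝ)
    (hB : B = {X : ℝ | ∃ a b : ℤ, 0 ≤ a ∧ a ≤ ⌊β⌋ ∧ 0 ≤ b ∧ b ≤ ⌊β⌋ ∧ X = -(b : ℝ) * β + a})
    (hAG : AG =
      {X : ℝ | ∃ a b : ℤ, 0 ≤ a ∧ a ≤ ⌊β⌋ ∧ 1 ≤ b ∧ b ≤ ⌊β⌋ ∧ X = -(b : ℝ) * β + a} ∪
      {X : ℝ | ∃ a : ℤ, 0 ≤ a ∧ a ≤ ⌊β⌋ ∧ (a : ℝ) < β * (β - ⌊β⌋) ∧ X = (a : ℝ)}) :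
    (AG = B ↔ 0 < β ^ 2 - (⌊β⌋ : ℝ) * β - (⌊β⌋ : ℝ)) ∧
    (AG = B ↔ ((⌊β⌋ : ℝ) + Real.sqrt ((⌊β⌋ : ℝ) ^ 2 + 4 * (⌊β⌋ : ℝ))) / 2 < β) ∧
    (AG = B ↔ ∃ m : ℕ, 1 ≤ m ∧
      ((m : ℝ) + Real.sqrt ((m : ℝ) ^ 2 + 4 * (m : ℝ))) / 2 < β ∧ β < (m : ℝ) + 1) := by
  set m : ℤ := ⌊β⌋ with hm
  have hm1 : 1 ≤ m := by
    have : ((1:ℤ):ℝ) ≤ β := by exact_mod_cast hβ.le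
    exact Int.le_floor.mpr this
  have hm1R : (1:ℝ) ≤ (m:ℝ) := by exact_mod_cast hm1
  have hmβ : (m : ℝ) ≤ β := Int.floor_le β
  have hmβ' : (m : ℝ) < β := by
    rcases lt_or_eq_of_le hmβ with h | h
    · exact h
    · exfalso
      apply hni m.toNat
      rw [← h]
      norm_cast
      exact (Int.toNat_of_nonneg (by linarith)).symm
  have hβm1 : β < (m : ℝ) + 1 := by exact_mod_cast Int.lt_floor_add_one β
  have key : AG = B ↔ 0 < β ^ 2 - (m : ℝ) * β - (m : ℝ) := by
    constructor
    · intro h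
      by_contra hle
      push_neg at hle
      have hmem : ((m:ℝ)) ∈ B := by
        rw [hB]
        exact ⟨m, 0, by linarith, le_refl m, le_refl 0, by linarith, by push_cast; ring⟩
      rw [← h, hAG] at hmem
      rcases hmem with ⟨a, b, ha0, ham, hb1, hbm, hx⟩ | ⟨a, ha0, ham, halt, hx⟩
      · have haR : (a:ℝ) ≤ m := by exact_mod_cast ham
        have hbR : (1:ℝ) ≤ (b:ℝ) := by exact_mod_cast hb1
        nlinarith
      · have haR : (a:ℝ) = m := hx.symm
        rw [haR] at halt
        nlinarith
    · intro hpos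
      rw [hB, hAG]
      ext X
      simp only [Set.mem_union, Set.mem_setOf_eq]
      constructor
      · rintro (⟨a, b, h1, h2, h3, h4, h5⟩ | ⟨a, h1, h2, h3, h4⟩)
        · exact ⟨a, b, h1, h2, by linarith, h4, h5⟩
        · exact ⟨a, 0, h1, h2, le_refl 0, by linarith, by rw [h4]; push_cast; ring⟩
      · rintro ⟨a, b, h1, h2, h3, h4, h5⟩
        rcases lt_or_ge b 1 with hb | hb
        · have hb0 : b = 0 := le_antisymm (by linarith) h3
          right
          refine ⟨a, h1, h2, ?_, by rw [h5, hb0]; push_cast; ring⟩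
          have haR : (a:ℝ) ≤ m := by exact_mod_cast h2
          nlinarith
        · exact Or.inl ⟨a, b, h1, h2, hb, h4, h5⟩
  have hs0 : 0 ≤ Real.sqrt ((m:ℝ)^2 + 4*(m:ℝ)) := Real.sqrt_nonneg _
  have hs2 : (Real.sqrt ((m:ℝ)^2 + 4*(m:ℝ)))^2 = (m:ℝ)^2 + 4*(m:ℝ) :=
    Real.sq_sqrt (by nlinarith)
  set s : ℝ := Real.sqrt ((m:ℝ)^2 + 4*(m:ℝ)) with hsdef
  have key2 : 0 < β ^ 2 - (m : ℝ) * β - (m : ℝ) ↔ ((m:ℝ) + s) / 2 < β := by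
    constructor
    · intro hpos
      by_contra h
      push_neg at h
      have h' : 2 * β - (m:ℝ) ≤ s := by linarith
      have h'' : 0 < 2 * β - (m:ℝ) := by linarith
      nlinarith [mul_le_mul h' h' h''.le hs0]
    · intro h
      have h' : s < 2 * β - (m:ℝ) := by linarith
      nlinarith [mul_le_mul h'.le h'.le hs0 (by linarith : (0:ℝ) ≤ 2 * β - (m:ℝ))]
  refine ⟨key, key.trans key2, (key.trans key2).trans ?_⟩
  constructor
  · intro h
    refine ⟨m.toNat, ?_, ?_, ?_⟩
    · exact_mod_cast Int.toNat_le_toNat hm1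
    · have : ((m.toNat : ℕ) : ℝ) = (m : ℝ) := by
        norm_cast
        exact Int.toNat_of_nonneg (by linarith)
      rw [this]
      exact h
    · have : ((m.toNat : ℕ) : ℝ) = (m : ℝ) := by
        norm_cast
        exact Int.toNat_of_nonneg (by linarith)
      rw [this]
      exact hβm1
  · rintro ⟨n, hn1, hn2, hn3⟩
    have hn0 : (0:ℝ) ≤ (n:ℝ) := by positivity
    have hroot : (n:ℝ) ≤ ((n : ℝ) + Real.sqrt ((n : ℝ) ^ 2 + 4 * (n : ℝ))) / 2 := by
      have h1 : (n:ℝ) = Real.sqrt ((n:ℝ)^2) := (Real.sqrt_sq hn0).symm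
      have h2 : Real.sqrt ((n:ℝ)^2) ≤ Real.sqrt ((n:ℝ)^2 + 4*(n:ℝ)) :=
        Real.sqrt_le_sqrt (by linarith)
      nlinarith [h1 ▸ h2]
    have hnβ : (n:ℝ) < β := lt_of_le_of_lt hroot hn2
    have hfloor : m = (n : ℤ) := by
      rw [hm]
      apply Int.floor_eq_iff.mpr
      constructor
      · exact_mod_cast hnβ.le
      · exact_mod_cast hn3
    have hmn : (m:ℝ) = (n:ℝ) := by exact_mod_cast hfloor
    have hss : s = Real.sqrt ((n : ℝ) ^ 2 + 4 * (n : ℝ)) := by rw [hsdef, hmn]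
    rw [hmn, hss]
    exact hn2
end
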